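/- arXiv:1501.06836 — 8 statements merged into one kernel-verified Lean document; each statement's English description precedes it below -/
import Mathlib

section
/- Let c ≥ 1, q > 0, f, g : ℝ → ℝ continuous with f positive, and let φ ∈ C²([0,R)) solve φ'' + ((c-1)/r)φ' = f(φ) + g(φ)|φ'|^q on (0,R) with φ(0) = a, φ'(0) = 0 and cφ''(0) = f(a). Then φ'(r) > 0 for all r ∈ (0,R), i.e. φ is strictly increasing on [0,R). -/
open Real MeasureTheory Set Filter

theorem stmt0 (c q R a : ℝ) (hc : 1 ≤ c) (hq : 0 < q) (hR : 0 < R)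
    (f g φ : ℝ → ℝ)
    (hf : Continuous f) (hfpos : ∀ t, 0 < f t) (hg : Continuous g)
    (hφc : ContinuousOn φ (Set.Ico 0 R))
    (hφ2 : ContDiffOn ℝ 2 φ (Set.Ioo 0 R))
    (hφa : φ 0 = a)
    (hd0 : Filter.Tendsto (deriv φ) (nhdsWithin 0 (Set.Ioi 0)) (nhds 0))
    (hd2 : Filter.Tendsto (deriv (deriv φ)) (nhdsWithin 0 (Set.Ioi 0)) (nhds (f a / c)))
    (hode : ∀ r ∈ Set.Ioo 0 R,
      deriv (deriv φ) r + (c - 1) / r * deriv φ r = f (φ r) + g (φ r) * |deriv φ r| ^ q) :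
    (∀ r ∈ Set.Ioo 0 R, 0 < deriv φ r) ∧ StrictMonoOn φ (Set.Ico 0 R) := by
  have hIoo : IsOpen (Set.Ioo (0:ℝ) R) := isOpen_Ioo
  have hc0 : (0:ℝ) < c := lt_of_lt_of_le one_pos hc
  have hd1cont : ContinuousOn (deriv φ) (Set.Ioo 0 R) :=
    hφ2.continuousOn_deriv_of_isOpen hIoo (by norm_num)
  have hd1diff : DifferentiableOn ℝ (deriv φ) (Set.Ioo 0 R) :=
    (hφ2.deriv_of_isOpen hIoo (by norm_num) : ContDiffOn ℝ 1 (deriv φ) _).differentiableOn one_ne_zero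
  have hfa : 0 < f a / c := div_pos (hfpos a) hc0
  have h2pos : ∀ᶠ r in nhdsWithin 0 (Set.Ioi 0), 0 < deriv (deriv φ) r :=
    hd2.eventually (eventually_gt_nhds hfa)
  obtain ⟨ε, hε0, hεsub⟩ := mem_nhdsGT_iff_exists_Ioo_subset.1 h2pos
  set ε₁ := min ε R with hε₁def
  have hε₁0 : 0 < ε₁ := lt_min hε0 hR
  have hε₁R : ε₁ ≤ R := min_le_right _ _
  have hsub : Set.Ioo 0 ε₁ ⊆ Set.Ioo 0 R := Set.Ioo_subset_Ioo le_rfl hε₁R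
  have hmono : StrictMonoOn (deriv φ) (Set.Ioo 0 ε₁) := by
    apply strictMonoOn_of_deriv_pos (convex_Ioo _ _)
      (hd1cont.mono hsub)
    intro x hx
    rw [interior_Ioo] at hx
    exact hεsub ⟨hx.1, lt_of_lt_of_le hx.2 (min_le_left _ _)⟩
  have hpos_small : ∀ r ∈ Set.Ioo 0 ε₁, 0 < deriv φ r := by
    intro r hr
    have hr2 : r / 2 ∈ Set.Ioo 0 ε₁ := ⟨by linarith [hr.1], by linarith [hr.1, hr.2]⟩
    have h1 : deriv φ (r / 2) < deriv φ r := hmono hr2 hr (by linarith [hr.1])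
    have h0 : 0 ≤ deriv φ (r / 2) := by
      refine le_of_tendsto hd0 ?_
      filter_upwards [Ioo_mem_nhdsGT_of_mem (⟨le_rfl, hr2.1⟩ : (0:ℝ) ∈ Set.Ico 0 (r/2))]
        with t ht
      exact le_of_lt (hmono ⟨ht.1, ht.2.trans hr2.2⟩ hr2 ht.2)
    linarith
  have hmain : ∀ r ∈ Set.Ioo 0 R, 0 < deriv φ r := by
    by_contra h
    push_neg at h
    obtain ⟨s₀, hs₀mem, hs₀le⟩ := h
    set S := {r : ℝ | r ∈ Set.Ioo 0 R ∧ deriv φ r ≤ 0} with hSdef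
    have hne : S.Nonempty := ⟨s₀, hs₀mem, hs₀le⟩
    have hbdd : BddBelow S := ⟨0, fun x hx => le_of_lt hx.1.1⟩
    set r₀ := sInf S with hr₀def
    have hεr₀ : ε₁ ≤ r₀ := by
      apply le_csInf hne
      intro s hs
      by_contra hlt
      push_neg at hlt
      exact absurd hs.2 (not_le.2 (hpos_small s ⟨hs.1.1, hlt⟩))
    have hr₀pos : 0 < r₀ := lt_of_lt_of_le hε₁0 hεr₀
    have hr₀R : r₀ < R := lt_of_le_of_lt (csInf_le hbdd ⟨hs₀mem, hs₀le⟩) hs₀mem.2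
    have hr₀mem : r₀ ∈ Set.Ioo 0 R := ⟨hr₀pos, hr₀R⟩
    have hcontat : ContinuousAt (deriv φ) r₀ :=
      hd1cont.continuousAt (hIoo.mem_nhds hr₀mem)
    -- deriv φ r₀ ≤ 0
    have hcl : r₀ ∈ closure S := csInf_mem_closure hne hbdd
    have hle0 : deriv φ r₀ ≤ 0 := by
      haveI : (nhdsWithin r₀ S).NeBot := mem_closure_iff_nhdsWithin_neBot.1 hcl
      refine le_of_tendsto (hcontat.tendsto.mono_left
        (nhdsWithin_le_nhds : nhdsWithin r₀ S ≤ _)) ?_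
      filter_upwards [self_mem_nhdsWithin] with x hx
      exact hx.2
    -- deriv φ positive strictly below r₀
    have hposlt : ∀ x ∈ Set.Ioo 0 r₀, 0 < deriv φ x := by
      intro x hx
      by_contra hxle
      push_neg at hxle
      have : x ∈ S := ⟨⟨hx.1, hx.2.trans hr₀R⟩, hxle⟩
      exact absurd (csInf_le hbdd this) (not_le.2 hx.2)
    -- deriv φ r₀ ≥ 0
    have hge0 : 0 ≤ deriv φ r₀ := by
      have hclI : r₀ ∈ closure (Set.Ioo 0 r₀) := by
        rw [closure_Ioo (ne_of_lt hr₀pos)]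
        exact ⟨le_of_lt hr₀pos, le_rfl⟩
      haveI : (nhdsWithin r₀ (Set.Ioo 0 r₀)).NeBot :=
        mem_closure_iff_nhdsWithin_neBot.1 hclI
      refine ge_of_tendsto (hcontat.tendsto.mono_left
        (nhdsWithin_le_nhds : nhdsWithin r₀ (Set.Ioo 0 r₀) ≤ _)) ?_
      filter_upwards [self_mem_nhdsWithin] with x hx
      exact le_of_lt (hposlt x hx)
    have heq0 : deriv φ r₀ = 0 := le_antisymm hle0 hge0
    -- second derivative at r₀ is positive
    have hodeat := hode r₀ hr₀mem
    rw [heq0] at hodeat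
    have habs : |(0:ℝ)| ^ q = 0 := by
      rw [abs_zero]
      exact Real.zero_rpow (ne_of_gt hq)
    rw [habs] at hodeat
    have h2at : deriv (deriv φ) r₀ = f (φ r₀) := by linarith [hodeat]
    have h2posat : 0 < deriv (deriv φ) r₀ := h2at ▸ hfpos (φ r₀)
    -- derive contradiction via slope
    have hder : HasDerivAt (deriv φ) (deriv (deriv φ) r₀) r₀ :=
      (hd1diff.differentiableAt (hIoo.mem_nhds hr₀mem)).hasDerivAt
    rw [hasDerivAt_iff_tendsto_slope] at hder
    have hslope : ∀ᶠ x in nhdsWithin r₀ {r₀}ᶜ, 0 < slope (deriv φ) r₀ x :=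
      hder.eventually (eventually_gt_nhds h2posat)
    have hleft : ∀ᶠ x in nhdsWithin r₀ (Set.Iio r₀), 0 < slope (deriv φ) r₀ x :=
      hslope.filter_mono (nhdsWithin_mono r₀ (fun x hx => ne_of_lt hx))
    have hmemIoo : ∀ᶠ x in nhdsWithin r₀ (Set.Iio r₀), x ∈ Set.Ioo 0 r₀ := by
      filter_upwards [Ioo_mem_nhdsLT_of_mem
        (⟨hr₀pos, le_rfl⟩ : r₀ ∈ Set.Ioc 0 r₀)] with x hx
      exact hx
    obtain ⟨x, hxs, hxm⟩ := (hleft.and hmemIoo).exists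
    have hxlt : x - r₀ < 0 := by linarith [hxm.2]
    have hneg : slope (deriv φ) r₀ x < 0 := by
      rw [slope_def_field, heq0, sub_zero]
      exact div_neg_of_pos_of_neg (hposlt x hxm) hxlt
    linarith [hxs]
  exact ⟨hmain, strictMonoOn_of_deriv_pos (convex_Ico _ _) hφc
    (fun x hx => hmain x (by rwa [interior_Ico] at hx))⟩
end

section
/- Let c ≥ 1, q > 0, f, g : ℝ → ℝ continuous and nondecreasing with f positive, and let φ ∈ C²([0,R)) solve φ'' + ((c-1)/r)φ' = f(φ) + g(φ)|φ'|^q on (0,R) with φ(0) = a, φ'(0) = 0. Then φ is convex on [0,R), i.e. φ'' ≥ 0 on (0,R). -/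
open Real MeasureTheory Set Filter

private lemma pow_gap_le {q m v : ℝ} (hq : 0 < q) (hm : 0 < m) (hv0 : 0 ≤ v) (hvm : v ≤ m) :
    m ^ q - v ^ q ≤ max 1 q * (m ^ (q - 1) * (m - v)) := by
  have ht0 : 0 ≤ v / m := div_nonneg hv0 hm.le
  have ht1 : v / m ≤ 1 := (div_le_one hm).2 hvm
  have hvq : v ^ q = (v / m) ^ q * m ^ q := by
    rw [← Real.mul_rpow ht0 hm.le, div_mul_cancel₀ _ hm.ne']
  have hmq : m ^ (q - 1) * m = m ^ q := by
    rw [← Real.rpow_add_one hm.ne' (q - 1)]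
    congr 1; ring
  have key : 1 - (v / m) ^ q ≤ max 1 q * (1 - v / m) := by
    rcases le_total q 1 with h | h
    · have htq : v / m ≤ (v / m) ^ q := by
        rcases eq_or_lt_of_le ht0 with h0 | h0
        · rw [← h0, Real.zero_rpow hq.ne']
        · calc v / m = (v / m) ^ (1 : ℝ) := (Real.rpow_one _).symm
            _ ≤ (v / m) ^ q := Real.rpow_le_rpow_of_exponent_ge h0 ht1 h
      calc 1 - (v / m) ^ q ≤ 1 - v / m := by linarith
        _ = 1 * (1 - v / m) := (one_mul _).symm
        _ ≤ max 1 q * (1 - v / m) := mul_le_mul_of_nonneg_right (le_max_left _ _) (by linarith)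
    · have hb := one_add_mul_self_le_rpow_one_add (s := v / m - 1) (by linarith) h
      rw [show 1 + (v / m - 1) = v / m by ring] at hb
      calc 1 - (v / m) ^ q ≤ q * (1 - v / m) := by linarith
        _ ≤ max 1 q * (1 - v / m) := mul_le_mul_of_nonneg_right (le_max_right _ _) (by linarith)
  have hmqpos : 0 < m ^ q := Real.rpow_pos_of_pos hm q
  have h2 : m ^ q * (1 - (v / m) ^ q) ≤ m ^ q * (max 1 q * (1 - v / m)) :=
    mul_le_mul_of_nonneg_left key hmqpos.le
  have e1 : m ^ q * (1 - (v / m) ^ q) = m ^ q - v ^ q := by rw [hvq]; ring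
  have e2 : m ^ q * (max 1 q * (1 - v / m)) = max 1 q * (m ^ (q - 1) * (m - v)) := by
    rw [← hmq]; field_simp
  rw [e1, e2] at h2; exact h2

theorem stmt1 (c q R a : ℝ) (hc : 1 ≤ c) (hq : 0 < q) (hR : 0 < R)
    (f g φ : ℝ → ℝ)
    (hf : Continuous f) (hfpos : ∀ t, 0 < f t) (hfmono : Monotone f)
    (hg : Continuous g) (hgmono : Monotone g)
    (hφc : ContinuousOn φ (Set.Ico 0 R))
    (hφ2 : ContDiffOn ℝ 2 φ (Set.Ioo 0 R))
    (hφa : φ 0 = a)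
    (hd0 : Filter.Tendsto (deriv φ) (nhdsWithin 0 (Set.Ioi 0)) (nhds 0))
    (hd2 : Filter.Tendsto (deriv (deriv φ)) (nhdsWithin 0 (Set.Ioi 0)) (nhds (f a / c)))
    (hode : ∀ r ∈ Set.Ioo 0 R,
      deriv (deriv φ) r + (c - 1) / r * deriv φ r = f (φ r) + g (φ r) * |deriv φ r| ^ q) :
    (∀ r ∈ Set.Ioo 0 R, 0 ≤ deriv (deriv φ) r) ∧ ConvexOn ℝ (Set.Ico 0 R) φ := by
  have hU : IsOpen (Set.Ioo (0:ℝ) R) := isOpen_Ioo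
  have hv1 : ContDiffOn ℝ 1 (deriv φ) (Set.Ioo 0 R) :=
    hφ2.deriv_of_isOpen hU (by norm_num)
  have hvdiff : DifferentiableOn ℝ (deriv φ) (Set.Ioo 0 R) := hv1.differentiableOn (by norm_num)
  have hvcont : ContinuousOn (deriv φ) (Set.Ioo 0 R) := hvdiff.continuousOn
  have hφdiff : DifferentiableOn ℝ φ (Set.Ioo 0 R) := hφ2.differentiableOn (by norm_num)
  have hccont : ContinuousOn (deriv (deriv φ)) (Set.Ioo 0 R) :=
    hv1.continuousOn_deriv_of_isOpen hU le_rfl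
  have key : ∀ r ∈ Set.Ioo 0 R, 0 ≤ deriv (deriv φ) r := by
    by_contra hcon
    push_neg at hcon
    obtain ⟨r₂, hr₂, hr₂neg⟩ := hcon
    set S := {r | r ∈ Set.Ioo 0 R ∧ deriv (deriv φ) r ≤ 0} with hSdef
    have hSne : S.Nonempty := ⟨r₂, hr₂, hr₂neg.le⟩
    have hbdd : BddBelow S := ⟨0, fun s hs => hs.1.1.le⟩
    -- positivity near 0
    have hfa : 0 < f a / c := div_pos (hfpos a) (lt_of_lt_of_le one_pos hc)
    have hev : ∀ᶠ r in nhdsWithin 0 (Set.Ioi 0), 0 < deriv (deriv φ) r :=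
      hd2.eventually (eventually_gt_nhds hfa)
    rw [eventually_nhdsWithin_iff, Metric.eventually_nhds_iff] at hev
    obtain ⟨ε, hε, hball⟩ := hev
    set r₀ := sInf S with hr₀def
    have hεle : ∀ s ∈ S, ε ≤ s := by
      intro s hs
      by_contra hlt
      push_neg at hlt
      have : 0 < deriv (deriv φ) s := by
        apply hball (by simp [Real.dist_eq, abs_of_pos hs.1.1]; linarith) hs.1.1
      linarith [hs.2]
    have hr₀pos : 0 < r₀ := lt_of_lt_of_le hε (le_csInf hSne hεle)
    have hr₀le : r₀ ≤ r₂ := csInf_le hbdd ⟨hr₂, hr₂neg.le⟩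
    have hr₀R : r₀ < R := lt_of_le_of_lt hr₀le hr₂.2
    have hr₀mem : r₀ ∈ Set.Ioo 0 R := ⟨hr₀pos, hr₀R⟩
    have hr₀le0 : deriv (deriv φ) r₀ ≤ 0 := by
      by_contra hpos
      push_neg at hpos
      have hca : ContinuousAt (deriv (deriv φ)) r₀ :=
        hccont.continuousAt (hU.mem_nhds hr₀mem)
      have hev2 : ∀ᶠ x in nhds r₀, 0 < deriv (deriv φ) x :=
        hca.eventually (eventually_gt_nhds hpos)
      rw [Metric.eventually_nhds_iff] at hev2
      obtain ⟨η, hη, hb⟩ := hev2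
      have hlb : ∀ s ∈ S, r₀ + η ≤ s := by
        intro s hs
        have h1 : r₀ ≤ s := csInf_le hbdd hs
        by_contra h2
        push_neg at h2
        have : 0 < deriv (deriv φ) s := by
          apply hb; rw [Real.dist_eq, abs_of_nonneg (by linarith)]; linarith
        linarith [hs.2]
      have : r₀ + η ≤ r₀ := le_csInf hSne hlb
      linarith
    have hpos' : ∀ r ∈ Set.Ioo 0 r₀, 0 < deriv (deriv φ) r := by
      intro r hr
      by_contra h
      push_neg at h
      have : r ∈ S := ⟨⟨hr.1, lt_trans hr.2 hr₀R⟩, h⟩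
      have := csInf_le hbdd this
      linarith [hr.2]
    have hIocsub : Set.Ioc 0 r₀ ⊆ Set.Ioo 0 R :=
      fun x hx => ⟨hx.1, lt_of_le_of_lt hx.2 hr₀R⟩
    have hvmono : StrictMonoOn (deriv φ) (Set.Ioc 0 r₀) := by
      apply strictMonoOn_of_deriv_pos (convex_Ioc 0 r₀) (hvcont.mono hIocsub)
      rw [interior_Ioc]
      exact hpos'
    have hvnn : ∀ r ∈ Set.Ioc 0 r₀, 0 ≤ deriv φ r := by
      intro r hr
      refine le_of_tendsto hd0 ?_
      filter_upwards [Ioo_mem_nhdsGT_of_mem (show (0:ℝ) ∈ Set.Ico 0 r from ⟨le_rfl, hr.1⟩)]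
        with s hs
      exact (hvmono ⟨hs.1, le_trans hs.2.le hr.2⟩ hr hs.2).le
    have hvpos : ∀ r ∈ Set.Ioc 0 r₀, 0 < deriv φ r := by
      intro r hr
      have h1 : deriv φ (r/2) < deriv φ r :=
        hvmono ⟨half_pos hr.1, le_trans (half_le_self hr.1.le) hr.2⟩ hr (half_lt_self hr.1)
      have h2 : 0 ≤ deriv φ (r/2) :=
        hvnn _ ⟨half_pos hr.1, le_trans (half_le_self hr.1.le) hr.2⟩
      linarith
    set m := deriv φ r₀ with hmdef
    have hm : 0 < m := hvpos r₀ ⟨hr₀pos, le_rfl⟩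
    have hφmono : MonotoneOn φ (Set.Icc 0 r₀) := by
      apply monotoneOn_of_deriv_nonneg (convex_Icc 0 r₀)
        (hφc.mono (fun x hx => ⟨hx.1, lt_of_le_of_lt hx.2 hr₀R⟩))
      · rw [interior_Icc]
        exact hφdiff.mono (fun x hx => hIocsub ⟨hx.1, hx.2.le⟩)
      · rw [interior_Icc]
        exact fun x hx => hvnn x ⟨hx.1, hx.2.le⟩
    set F := f (φ r₀) with hFdef
    set G := g (φ r₀) with hGdef
    have hFG : F + G * m ^ q ≤ (c - 1) / r₀ * m := by
      have h := hode r₀ hr₀mem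
      rw [abs_of_pos hm] at h
      linarith
    set K := max (-G) 0 * (max 1 q * m ^ (q - 1)) with hKdef
    have hK : 0 ≤ K := by
      apply mul_nonneg (le_max_right _ _)
      exact mul_nonneg (le_trans zero_le_one (le_max_left _ _)) (Real.rpow_nonneg hm.le _)
    set L := K + (c - 1) / r₀ with hLdef
    have hL : 0 ≤ L := add_nonneg hK (div_nonneg (by linarith) hr₀pos.le)
    have hbound : ∀ r ∈ Set.Ioo 0 r₀, deriv (deriv φ) r ≤ L * (m - deriv φ r) := by
      intro r hr
      have hrR : r ∈ Set.Ioo 0 R := ⟨hr.1, lt_trans hr.2 hr₀R⟩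
      have hode_r := hode r hrR
      have hrIoc : r ∈ Set.Ioc 0 r₀ := ⟨hr.1, hr.2.le⟩
      have hvr : 0 < deriv φ r := hvpos r hrIoc
      have hvrm : deriv φ r ≤ m := (hvmono hrIoc ⟨hr₀pos, le_rfl⟩ hr.2).le
      rw [abs_of_pos hvr] at hode_r
      have hφle : φ r ≤ φ r₀ :=
        hφmono ⟨hr.1.le, hr.2.le⟩ ⟨hr₀pos.le, le_rfl⟩ hr.2.le
      have h1 : f (φ r) ≤ F := hfmono hφle
      have h2 : g (φ r) * deriv φ r ^ q ≤ G * deriv φ r ^ q :=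
        mul_le_mul_of_nonneg_right (hgmono hφle) (Real.rpow_nonneg hvr.le q)
      have hvq : deriv φ r ^ q ≤ m ^ q := Real.rpow_le_rpow hvr.le hvrm hq.le
      have h4 : m ^ q - deriv φ r ^ q ≤ max 1 q * (m ^ (q - 1) * (m - deriv φ r)) :=
        pow_gap_le hq hm hvr.le hvrm
      have h3 : G * deriv φ r ^ q ≤ G * m ^ q + K * (m - deriv φ r) := by
        have ha : G * deriv φ r ^ q - G * m ^ q = (-G) * (m ^ q - deriv φ r ^ q) := by ring
        have hb' : (-G) * (m ^ q - deriv φ r ^ q) ≤ max (-G) 0 * (m ^ q - deriv φ r ^ q) :=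
          mul_le_mul_of_nonneg_right (le_max_left _ _) (by linarith)
        have hc' : max (-G) 0 * (m ^ q - deriv φ r ^ q) ≤
            max (-G) 0 * (max 1 q * (m ^ (q - 1) * (m - deriv φ r))) :=
          mul_le_mul_of_nonneg_left h4 (le_max_right _ _)
        have hd' : max (-G) 0 * (max 1 q * (m ^ (q - 1) * (m - deriv φ r))) =
            K * (m - deriv φ r) := by rw [hKdef]; ring
        linarith
      have h5 : (c - 1) / r₀ * deriv φ r ≤ (c - 1) / r * deriv φ r := by
        apply mul_le_mul_of_nonneg_right _ hvr.le
        exact div_le_div_of_nonneg_left (by linarith) hr.1 hr.2.le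
      have hexp : L * (m - deriv φ r) =
          K * (m - deriv φ r) + (c - 1) / r₀ * m - (c - 1) / r₀ * deriv φ r := by
        rw [hLdef]; ring
      rw [hexp]
      linarith
    -- Gronwall: W = exp(L r) * (m - deriv φ r) is monotone on [r₀/2, r₀]
    set W := fun r => Real.exp (L * r) * (m - deriv φ r) with hWdef
    have hIccsub : Set.Icc (r₀/2) r₀ ⊆ Set.Ioo 0 R :=
      fun x hx => ⟨lt_of_lt_of_le (half_pos hr₀pos) hx.1, lt_of_le_of_lt hx.2 hr₀R⟩
    have hWd : ∀ x ∈ Set.Ioo 0 R, HasDerivAt W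
        (L * Real.exp (L * x) * (m - deriv φ x) + Real.exp (L * x) * (0 - deriv (deriv φ) x)) x := by
      intro x hx
      have hv : HasDerivAt (deriv φ) (deriv (deriv φ) x) x :=
        (hvdiff.differentiableAt (hU.mem_nhds hx)).hasDerivAt
      have he : HasDerivAt (fun r => Real.exp (L * r)) (Real.exp (L * x) * L) x := by
        have : HasDerivAt (fun r => L * r) L x := by
          simpa using (hasDerivAt_id x).const_mul L
        exact this.exp
      have : HasDerivAt (fun r => Real.exp (L * r) * (m - deriv φ r))
          (Real.exp (L * x) * L * (m - deriv φ x) + Real.exp (L * x) * (0 - deriv (deriv φ) x)) x :=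
        he.mul ((hasDerivAt_const x m).sub hv)
      convert this using 1
      ring
    have hWmono : MonotoneOn W (Set.Icc (r₀/2) r₀) := by
      apply monotoneOn_of_deriv_nonneg (convex_Icc _ _)
      · apply ContinuousOn.mul
        · exact (Real.continuous_exp.comp (continuous_const.mul continuous_id)).continuousOn
        · exact continuousOn_const.sub (hvcont.mono hIccsub)
      · rw [interior_Icc]
        intro x hx
        exact ((hWd x (hIccsub ⟨hx.1.le, hx.2.le⟩)).differentiableAt).differentiableWithinAt
      · rw [interior_Icc]
        intro x hx
        have hxIoo : x ∈ Set.Ioo 0 r₀ := ⟨lt_of_lt_of_le (half_pos hr₀pos) hx.1.le, hx.2⟩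
        rw [(hWd x (hIccsub ⟨hx.1.le, hx.2.le⟩)).deriv]
        have hb := hbound x hxIoo
        have hep := Real.exp_pos (L * x)
        nlinarith
    have hhalf : r₀/2 ∈ Set.Icc (r₀/2) r₀ := ⟨le_rfl, half_le_self hr₀pos.le⟩
    have hend : r₀ ∈ Set.Icc (r₀/2) r₀ := ⟨half_le_self hr₀pos.le, le_rfl⟩
    have hle := hWmono hhalf hend (half_le_self hr₀pos.le)
    have hW0 : W r₀ = 0 := by simp [hWdef, hmdef]
    have hWpos : 0 < W (r₀/2) := by
      apply mul_pos (Real.exp_pos _)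
      have : deriv φ (r₀/2) < m :=
        hvmono ⟨half_pos hr₀pos, half_le_self hr₀pos.le⟩ ⟨hr₀pos, le_rfl⟩ (half_lt_self hr₀pos)
      linarith
    rw [hW0] at hle
    linarith
  refine ⟨key, ?_⟩
  apply convexOn_of_deriv2_nonneg (convex_Ico 0 R) hφc
  · rw [interior_Ico]; exact hφdiff
  · rw [interior_Ico]; exact hvdiff
  · rw [interior_Ico]
    intro x hx
    have : deriv^[2] φ x = deriv (deriv φ) x := by
      simp [Function.iterate_succ, Function.iterate_zero]
    rw [this]
    exact key x hx
end

section
/- Let c ≥ 1, q > 0, f, g continuous nondecreasing with f positive and g nonnegative. If φ is a C² solution of φ'' + ((c-1)/r)φ' = f(φ) + g(φ)|φ'|^q on [0,R) with φ(0)=a, φ'(0)=0, then φ''(r) ≥ φ'(r)/r for all r ∈ (0,R). -/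
open Real MeasureTheory Set Filter

lemma aux_nonneg (ψ : ℝ → ℝ) (b : ℝ) (hb : 0 < b)
    (hcont : ContinuousOn ψ (Set.Ioc 0 b))
    (hder : ∀ s ∈ Set.Ioo 0 b, ∃ d, 0 ≤ d ∧ HasDerivAt ψ d s)
    (h0 : Filter.Tendsto ψ (nhdsWithin 0 (Set.Ioi 0)) (nhds 0)) :
    0 ≤ ψ b := by
  have hint : interior (Set.Ioc (0:ℝ) b) = Set.Ioo 0 b := interior_Ioc
  have hmono : MonotoneOn ψ (Set.Ioc 0 b) := by
    apply monotoneOn_of_deriv_nonneg (convex_Ioc 0 b) hcont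
    · rw [hint]
      intro x hx
      obtain ⟨d, _, hd⟩ := hder x hx
      exact hd.differentiableAt.differentiableWithinAt
    · rw [hint]
      intro x hx
      obtain ⟨d, hd0, hd⟩ := hder x hx
      rw [hd.deriv]; exact hd0
  have hev : ∀ᶠ t in nhdsWithin 0 (Set.Ioi 0), ψ t ≤ ψ b := by
    filter_upwards [Ioo_mem_nhdsGT_of_mem (by constructor <;> simp [hb] : (0:ℝ) ∈ Set.Ico 0 b)]
      with t ht
    exact hmono ⟨ht.1, ht.2.le⟩ (by constructor <;> simp [hb, le_refl]) ht.2.le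
  exact le_of_tendsto h0 hev

theorem stmt3 (c q R a : ℝ) (hc : 1 ≤ c) (hq : 0 < q) (hR : 0 < R)
    (f g φ : ℝ → ℝ)
    (hf : Continuous f) (hfpos : ∀ t, 0 < f t) (hfmono : Monotone f)
    (hg : Continuous g) (hgmono : Monotone g) (hgnonneg : ∀ t, 0 ≤ g t)
    (hφc : ContinuousOn φ (Set.Ico 0 R))
    (hφ2 : ContDiffOn ℝ 2 φ (Set.Ioo 0 R))
    (hφa : φ 0 = a)
    (hd0 : Filter.Tendsto (deriv φ) (nhdsWithin 0 (Set.Ioi 0)) (nhds 0))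
    (hd2 : ∃ L, Filter.Tendsto (deriv (deriv φ)) (nhdsWithin 0 (Set.Ioi 0)) (nhds L))
    (hode : ∀ r ∈ Set.Ioo 0 R,
      deriv (deriv φ) r + (c - 1) / r * deriv φ r = f (φ r) + g (φ r) * |deriv φ r| ^ q) :
    ∀ r ∈ Set.Ioo 0 R, deriv φ r / r ≤ deriv (deriv φ) r := by
  have hc0 : (0:ℝ) < c := lt_of_lt_of_le one_pos hc
  set F : ℝ → ℝ := fun r => f (φ r) + g (φ r) * |deriv φ r| ^ q with hF
  have hFpos : ∀ r, 0 < F r := fun r =>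
    add_pos_of_pos_of_nonneg (hfpos _) (mul_nonneg (hgnonneg _) (Real.rpow_nonneg (abs_nonneg _) _))
  -- regularity
  have hφ2' : ContDiffOn ℝ 1 (deriv φ) (Set.Ioo 0 R) := by
    apply hφ2.deriv_of_isOpen isOpen_Ioo
    norm_num
  have hφ'cont : ContinuousOn (deriv φ) (Set.Ioo 0 R) := hφ2'.continuousOn
  have hφ''cont : ContinuousOn (deriv (deriv φ)) (Set.Ioo 0 R) :=
    hφ2'.continuousOn_deriv_of_isOpen isOpen_Ioo le_rfl
  have hφ'deriv : ∀ s ∈ Set.Ioo 0 R, HasDerivAt (deriv φ) (deriv (deriv φ) s) s := by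
    intro s hs
    have : DifferentiableAt ℝ (deriv φ) s := by
      have := (hφ2'.differentiableOn (by norm_num)).differentiableAt (isOpen_Ioo.mem_nhds hs)
      exact this
    exact this.hasDerivAt
  have hφderiv : ∀ s ∈ Set.Ioo 0 R, HasDerivAt φ (deriv φ s) s := by
    intro s hs
    exact ((hφ2.differentiableOn (by norm_num)).differentiableAt
      (isOpen_Ioo.mem_nhds hs)).hasDerivAt
  -- w = r^(c-1) * φ'
  set w : ℝ → ℝ := fun r => r ^ (c - 1) * deriv φ r with hwdef
  have hwderiv : ∀ s ∈ Set.Ioo 0 R, HasDerivAt w (s ^ (c - 1) * F s) s := by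
    intro s hs
    have h1 : HasDerivAt (fun r : ℝ => r ^ (c - 1)) ((c - 1) * s ^ (c - 1 - 1)) s :=
      Real.hasDerivAt_rpow_const (Or.inl hs.1.ne')
    have h2 : HasDerivAt w _ s := (h1.mul (hφ'deriv s hs))
    convert h2 using 1
    have hs0 : s ≠ 0 := hs.1.ne'
    have hode' := hode s hs
    have hpow : s ^ (c - 1 - 1) = s ^ (c - 1) / s := Real.rpow_sub_one hs0 _
    have : F s = deriv (deriv φ) s + (c - 1) / s * deriv φ s := by
      simp only [hF]; linarith
    rw [this, hpow]
    field_simp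
    ring
  have hw0 : Filter.Tendsto w (nhdsWithin 0 (Set.Ioi 0)) (nhds 0) := by
    apply squeeze_zero_norm' _ (by simpa using hd0.norm)
    filter_upwards [Ioo_mem_nhdsGT_of_mem (by norm_num : (0:ℝ) ∈ Set.Ico 0 1)] with t ht
    have h1 : t ^ (c - 1) ≤ 1 := Real.rpow_le_one ht.1.le ht.2.le (by linarith)
    have h2 : (0:ℝ) ≤ t ^ (c - 1) := Real.rpow_nonneg ht.1.le _
    simp only [hwdef, Real.norm_eq_abs, abs_mul, abs_of_nonneg h2]
    calc t ^ (c - 1) * |deriv φ t| ≤ 1 * |deriv φ t| :=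
          mul_le_mul_of_nonneg_right h1 (abs_nonneg _)
      _ = |deriv φ t| := one_mul _
  have hwcont : ∀ b ∈ Set.Ioo 0 R, ContinuousOn w (Set.Ioc 0 b) := by
    intro b hb
    intro x hx
    have hxm : x ∈ Set.Ioo 0 R := ⟨hx.1, lt_of_le_of_lt hx.2 hb.2⟩
    exact ((hwderiv x hxm).continuousAt).continuousWithinAt
  have hφ'nonneg : ∀ r ∈ Set.Ioo 0 R, 0 ≤ deriv φ r := by
    intro r hr
    have h0w : 0 ≤ w r := by
      apply aux_nonneg w r hr.1 (hwcont r hr) _ hw0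
      intro s hs
      have hsm : s ∈ Set.Ioo 0 R := ⟨hs.1, hs.2.trans hr.2⟩
      exact ⟨_, mul_nonneg (Real.rpow_nonneg hs.1.le _) (hFpos s).le, hwderiv s hsm⟩
    have hp : (0:ℝ) < r ^ (c - 1) := Real.rpow_pos_of_pos hr.1 _
    exact nonneg_of_mul_nonneg_right (by simpa [hwdef, mul_comm] using h0w) hp
  have hφmono : MonotoneOn φ (Set.Ioo 0 R) := by
    apply monotoneOn_of_deriv_nonneg (convex_Ioo 0 R) hφ2.continuousOn
    · rw [interior_Ioo]
      exact hφ2.differentiableOn (by norm_num)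
    · rw [interior_Ioo]
      exact hφ'nonneg
  -- key comparison step
  have hkey : ∀ r0 ∈ Set.Ioo 0 R, (∀ s ∈ Set.Ioo 0 r0, 0 ≤ deriv (deriv φ) s) →
      c * deriv φ r0 ≤ r0 * F r0 := by
    intro r0 hr0 hnn
    have hsub : Set.Ioc 0 r0 ⊆ Set.Ioo 0 R := fun x hx => ⟨hx.1, lt_of_le_of_lt hx.2 hr0.2⟩
    have hφ'mono : MonotoneOn (deriv φ) (Set.Ioc 0 r0) := by
      apply monotoneOn_of_deriv_nonneg (convex_Ioc 0 r0) (hφ'cont.mono hsub)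
      · rw [interior_Ioc]
        intro x hx
        exact (hφ'deriv x (hsub (Set.Ioo_subset_Ioc_self hx))).differentiableAt.differentiableWithinAt
      · rw [interior_Ioc]
        exact hnn
    have hFle : ∀ s ∈ Set.Ioo 0 r0, F s ≤ F r0 := by
      intro s hs
      have hsm : s ∈ Set.Ioo 0 R := hsub (Set.Ioo_subset_Ioc_self hs)
      have hφle : φ s ≤ φ r0 := hφmono hsm hr0 hs.2.le
      have hds : 0 ≤ deriv φ s := hφ'nonneg s hsm
      have hdr : 0 ≤ deriv φ r0 := hφ'nonneg r0 hr0
      have h3 : deriv φ s ≤ deriv φ r0 := hφ'mono ⟨hs.1, hs.2.le⟩ ⟨hr0.1, le_rfl⟩ hs.2.le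
      have h4 : |deriv φ s| ^ q ≤ |deriv φ r0| ^ q := by
        rw [abs_of_nonneg hds, abs_of_nonneg hdr]
        exact Real.rpow_le_rpow hds h3 hq.le
      have h2 : g (φ s) * |deriv φ s| ^ q ≤ g (φ r0) * |deriv φ r0| ^ q :=
        mul_le_mul (hgmono hφle) h4 (Real.rpow_nonneg (abs_nonneg _) _) (hgnonneg _)
      simp only [hF]
      exact add_le_add (hfmono hφle) h2
    set V : ℝ → ℝ := fun s => s ^ c * (F r0 / c) - w s with hV
    have h0V : 0 ≤ V r0 := by
      apply aux_nonneg V r0 hr0.1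
      · intro x hx
        exact (((Real.continuousAt_rpow_const x c (Or.inl hx.1.ne')).continuousWithinAt.mul
          continuousWithinAt_const).sub ((hwcont r0 hr0) x hx))
      · intro s hs
        have hsm : s ∈ Set.Ioo 0 R := hsub (Set.Ioo_subset_Ioc_self hs)
        refine ⟨c * s ^ (c - 1) * (F r0 / c) - s ^ (c - 1) * F s, ?_, ?_⟩
        · have e : c * s ^ (c - 1) * (F r0 / c) = s ^ (c - 1) * F r0 := by
            field_simp
          rw [e]
          exact sub_nonneg.2 (mul_le_mul_of_nonneg_left (hFle s hs) (Real.rpow_nonneg hs.1.le _))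
        · exact ((Real.hasDerivAt_rpow_const (Or.inl hs.1.ne')).mul_const (F r0 / c)).sub
            (hwderiv s hsm)
      · have hlim1 : Filter.Tendsto (fun s : ℝ => s ^ c * (F r0 / c))
            (nhdsWithin 0 (Set.Ioi 0)) (nhds 0) := by
          apply squeeze_zero_norm' _ (show Filter.Tendsto (fun s : ℝ => s * |F r0 / c|)
            (nhdsWithin 0 (Set.Ioi 0)) (nhds 0) by
              have : Filter.Tendsto (fun s : ℝ => s * |F r0 / c|) (nhds 0) (nhds (0 * |F r0 / c|)) :=
                (continuous_id.mul continuous_const).tendsto 0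
              simpa using this.mono_left nhdsWithin_le_nhds)
          filter_upwards [Ioo_mem_nhdsGT_of_mem (by norm_num : (0:ℝ) ∈ Set.Ico 0 1)] with t ht
          have h1 : t ^ c ≤ t := by
            have := Real.rpow_le_rpow_of_exponent_ge ht.1 ht.2.le hc
            simpa [Real.rpow_one] using this
          have h2 : (0:ℝ) ≤ t ^ c := Real.rpow_nonneg ht.1.le _
          simp only [Real.norm_eq_abs, abs_mul, abs_of_nonneg h2]
          exact mul_le_mul_of_nonneg_right h1 (abs_nonneg _)
        simpa using hlim1.sub hw0
    have hP : (0:ℝ) < r0 ^ (c - 1) := Real.rpow_pos_of_pos hr0.1 _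
    have hpow : r0 ^ c = r0 ^ (c - 1) * r0 := by
      have h := Real.rpow_add_one hr0.1.ne' (c - 1)
      rw [show c - 1 + 1 = c by ring] at h
      exact h
    have h1 : deriv φ r0 ≤ r0 * F r0 / c := by
      have h2 : r0 ^ (c - 1) * deriv φ r0 ≤ r0 ^ (c - 1) * (r0 * F r0 / c) := by
        have := h0V
        simp only [hV, hwdef, hpow] at this
        have e2 : r0 ^ (c - 1) * r0 * (F r0 / c) = r0 ^ (c - 1) * (r0 * F r0 / c) := by ring
        linarith [this, e2]
      exact le_of_mul_le_mul_left h2 hP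
    have := (le_div_iff₀ hc0).1 h1
    linarith
  obtain ⟨L, hL⟩ := hd2
  -- L'Hopital: deriv φ r / r → L
  have hdiffev : ∀ᶠ x in nhdsWithin 0 (Set.Ioi 0), DifferentiableAt ℝ (deriv φ) x := by
    filter_upwards [Ioo_mem_nhdsGT_of_mem (⟨le_rfl, hR⟩ : (0:ℝ) ∈ Set.Ico 0 R)] with t ht
    exact (hφ'deriv t ht).differentiableAt
  have hquot : Filter.Tendsto (fun r => deriv φ r / r) (nhdsWithin 0 (Set.Ioi 0)) (nhds L) := by
    have h1 : Filter.Tendsto (fun x => deriv (deriv φ) x / deriv (fun y : ℝ => y) x)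
        (nhdsWithin 0 (Set.Ioi 0)) (nhds L) := by simpa using hL
    exact deriv.lhopital_zero_nhdsGT hdiffev
      (Filter.Eventually.of_forall (fun x => by simp)) hd0
      (tendsto_id.mono_left nhdsWithin_le_nhds) h1
  -- φ → a at 0+
  have hφ0 : Filter.Tendsto φ (nhdsWithin 0 (Set.Ioi 0)) (nhds a) := by
    have h1 : ContinuousWithinAt φ (Set.Ico 0 R) 0 := hφc 0 ⟨le_rfl, hR⟩
    have h2 : Filter.Tendsto φ (nhdsWithin 0 (Set.Ioo 0 R)) (nhds a) := by
      have := h1.tendsto.mono_left (nhdsWithin_mono 0 Set.Ioo_subset_Ico_self)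
      rwa [hφa] at this
    rwa [nhdsWithin_Ioo_eq_nhdsGT hR] at h2
  have habs : Filter.Tendsto (fun r => |deriv φ r| ^ q) (nhdsWithin 0 (Set.Ioi 0)) (nhds 0) := by
    have h1 : Filter.Tendsto (fun r => |deriv φ r|) (nhdsWithin 0 (Set.Ioi 0)) (nhds 0) := by
      simpa using hd0.abs
    have h2 : ContinuousAt (fun x : ℝ => x ^ q) 0 :=
      Real.continuousAt_rpow_const 0 q (Or.inr hq.le)
    have h3 := h2.tendsto.comp h1
    simpa [Real.zero_rpow hq.ne', Function.comp_def] using h3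
  have hFlim : Filter.Tendsto F (nhdsWithin 0 (Set.Ioi 0)) (nhds (f a)) := by
    have h3 := ((hf.tendsto a).comp hφ0).add (((hg.tendsto a).comp hφ0).mul habs)
    simpa [hF, Function.comp] using h3
  have hLval : c * L = f a := by
    have h2 : Filter.Tendsto (fun r => (c - 1) * (deriv φ r / r)) (nhdsWithin 0 (Set.Ioi 0))
        (nhds ((c - 1) * L)) := hquot.const_mul _
    have hlhs : Filter.Tendsto (fun r => deriv (deriv φ) r + (c - 1) / r * deriv φ r)
        (nhdsWithin 0 (Set.Ioi 0)) (nhds (L + (c - 1) * L)) := by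
      refine hL.add (h2.congr' ?_)
      filter_upwards [self_mem_nhdsWithin] with t ht
      ring
    have hev : (fun r => deriv (deriv φ) r + (c - 1) / r * deriv φ r)
        =ᶠ[nhdsWithin 0 (Set.Ioi 0)] F := by
      filter_upwards [Ioo_mem_nhdsGT_of_mem (⟨le_rfl, hR⟩ : (0:ℝ) ∈ Set.Ico 0 R)] with t ht
      simpa [hF] using hode t ht
    have := tendsto_nhds_unique (hlhs.congr' hev) hFlim
    linarith
  have hLpos : 0 < L := by nlinarith [hfpos a]
  -- second derivative is nonnegative on (0,R)
  have h2nonneg : ∀ r ∈ Set.Ioo 0 R, 0 ≤ deriv (deriv φ) r := by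
    by_contra hcon
    push_neg at hcon
    obtain ⟨x, hx, hxneg⟩ := hcon
    set S : Set ℝ := Set.Ioo 0 R ∩ (deriv (deriv φ)) ⁻¹' (Set.Iio 0) with hSdef
    have hxS : x ∈ S := ⟨hx, hxneg⟩
    have hSopen : IsOpen S := hφ''cont.isOpen_inter_preimage isOpen_Ioo isOpen_Iio
    have hev2 : ∀ᶠ r in nhdsWithin 0 (Set.Ioi 0), 0 < deriv (deriv φ) r :=
      hL.eventually (eventually_gt_nhds hLpos)
    obtain ⟨u, hu, huss⟩ := (mem_nhdsGT_iff_exists_Ioo_subset).1 hev2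
    have hlb : ∀ s ∈ S, u ≤ s := by
      intro s hs
      by_contra hlt
      push_neg at hlt
      have h5 : 0 < deriv (deriv φ) s := huss ⟨hs.1.1, hlt⟩
      have h6 : deriv (deriv φ) s < 0 := hs.2
      linarith
    have hSne : S.Nonempty := ⟨x, hxS⟩
    have hbdd : BddBelow S := ⟨u, hlb⟩
    set r0 := sInf S with hr0def
    have hur0 : u ≤ r0 := le_csInf hSne hlb
    have hr0x : r0 ≤ x := csInf_le hbdd hxS
    have hr0mem : r0 ∈ Set.Ioo 0 R := ⟨lt_of_lt_of_le hu hur0, lt_of_le_of_lt hr0x hx.2⟩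
    have hr0le : deriv (deriv φ) r0 ≤ 0 := by
      by_contra hpos
      push_neg at hpos
      have hca : ContinuousAt (deriv (deriv φ)) r0 :=
        hφ''cont.continuousAt (isOpen_Ioo.mem_nhds hr0mem)
      have hnb : (deriv (deriv φ)) ⁻¹' (Set.Ioi 0) ∈ nhds r0 :=
        hca.preimage_mem_nhds (Ioi_mem_nhds hpos)
      obtain ⟨s, hs1, hs2⟩ := mem_closure_iff_nhds.1 (csInf_mem_closure hSne hbdd) _ hnb
      have h5 : 0 < deriv (deriv φ) s := hs1
      have h6 : deriv (deriv φ) s < 0 := hs2.2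
      linarith
    have hbelow : ∀ s ∈ Set.Ioo 0 r0, 0 ≤ deriv (deriv φ) s := by
      intro s hs
      have hns : s ∉ S := notMem_of_lt_csInf hs.2 hbdd
      have hsm : s ∈ Set.Ioo 0 R := ⟨hs.1, hs.2.trans hr0mem.2⟩
      by_contra hneg
      push_neg at hneg
      exact hns ⟨hsm, hneg⟩
    have hkey0 := hkey r0 hr0mem hbelow
    have hFr : deriv (deriv φ) r0 + (c - 1) / r0 * deriv φ r0 = F r0 := by
      simpa [hF] using hode r0 hr0mem
    have hdivr : r0 * ((c - 1) / r0 * deriv φ r0) = (c - 1) * deriv φ r0 := by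
      field_simp
      rw [mul_assoc]; exact mul_div_cancel_left₀ _ hr0mem.1.ne'
    have hm : r0 * deriv (deriv φ) r0 + (c - 1) * deriv φ r0 = r0 * F r0 := by
      have h' : r0 * (deriv (deriv φ) r0 + (c - 1) / r0 * deriv φ r0) = r0 * F r0 := by
        rw [hFr]
      rw [mul_add, hdivr] at h'
      exact h'
    have hdp : 0 ≤ deriv φ r0 := hφ'nonneg r0 hr0mem
    have hrB : r0 * deriv (deriv φ) r0 ≤ 0 :=
      mul_nonpos_iff.2 (Or.inl ⟨hr0mem.1.le, hr0le⟩)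
    have hA' : deriv φ r0 ≤ 0 := by linarith
    have hA : deriv φ r0 = 0 := le_antisymm hA' hdp
    rw [hA] at hm
    have hpos2 : 0 < r0 * F r0 := mul_pos hr0mem.1 (hFpos r0)
    linarith
  -- conclusion
  intro r hr
  have hkeyr := hkey r hr (fun s hs => h2nonneg s ⟨hs.1, hs.2.trans hr.2⟩)
  have hFr : deriv (deriv φ) r + (c - 1) / r * deriv φ r = F r := by
    simpa [hF] using hode r hr
  have hdivr : r * ((c - 1) / r * deriv φ r) = (c - 1) * deriv φ r := by
    field_simp
    rw [mul_assoc]; exact mul_div_cancel_left₀ _ hr.1.ne'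
  have hm : r * deriv (deriv φ) r + (c - 1) * deriv φ r = r * F r := by
    have h' : r * (deriv (deriv φ) r + (c - 1) / r * deriv φ r) = r * F r := by rw [hFr]
    rw [mul_add, hdivr] at h'
    exact h'
  rw [div_le_iff₀ hr.1]
  linarith
end

section
/- Let 0 < q < 2, c ≥ 1, f, g continuous nondecreasing with f positive. If φ is a C² solution of φ'' + ((c-1)/r)φ' = f(φ) + g(φ)|φ'|^q on [0,R) with φ(0)=a, φ'(0)=0 (hence φ convex increasing), then for all r ∈ [0,R): φ'(r) ≤ 2^{2/(2-q)} [ (∫_a^{φ(r)} f(t) dt)^{1/2} + (∫_a^{φ(r)} g⁺(t) dt)^{1/(2-q)} ], where g⁺(t) = max(g(t), 0). -/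
open Real MeasureTheory Set Filter

theorem stmt4 (c q R a : ℝ) (hc : 1 ≤ c) (hq0 : 0 < q) (hq2 : q < 2) (hR : 0 < R)
    (f g φ : ℝ → ℝ)
    (hf : Continuous f) (hfpos : ∀ t, 0 < f t) (hfmono : Monotone f)
    (hg : Continuous g) (hgmono : Monotone g)
    (hφc : ContinuousOn φ (Set.Ico 0 R))
    (hφ2 : ContDiffOn ℝ 2 φ (Set.Ioo 0 R))
    (hφa : φ 0 = a)
    (hd0 : Filter.Tendsto (deriv φ) (nhdsWithin 0 (Set.Ioi 0)) (nhds 0))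
    (hd2 : ∃ L, Filter.Tendsto (deriv (deriv φ)) (nhdsWithin 0 (Set.Ioi 0)) (nhds L))
    (hode : ∀ r ∈ Set.Ioo 0 R,
      deriv (deriv φ) r + (c - 1) / r * deriv φ r = f (φ r) + g (φ r) * |deriv φ r| ^ q) :
    ∀ r ∈ Set.Ico 0 R,
      deriv φ r ≤ (2 : ℝ) ^ (2 / (2 - q)) *
        ((∫ t in a..φ r, f t) ^ ((1 : ℝ) / 2) +
          (∫ t in a..φ r, max (g t) 0) ^ (1 / (2 - q))) := by
  have h2q' : (0:ℝ) < 2 - q := by linarith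
  have hopen : IsOpen (Set.Ioo (0:ℝ) R) := isOpen_Ioo
  have hφd : ∀ s ∈ Set.Ioo (0:ℝ) R, HasDerivAt φ (deriv φ s) s := by
    intro s hs
    exact ((hφ2.differentiableOn (by norm_num)).differentiableAt (hopen.mem_nhds hs)).hasDerivAt
  have hφ'cd : ContDiffOn ℝ 1 (deriv φ) (Set.Ioo 0 R) :=
    hφ2.deriv_of_isOpen hopen (by norm_num)
  have hφ'd : ∀ s ∈ Set.Ioo (0:ℝ) R, HasDerivAt (deriv φ) (deriv (deriv φ) s) s := by
    intro s hs
    exact ((hφ'cd.differentiableOn (by norm_num)).differentiableAt (hopen.mem_nhds hs)).hasDerivAt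
  have hφ'cont : ContinuousOn (deriv φ) (Set.Ioo 0 R) := hφ'cd.continuousOn
  have hφ0a : Tendsto φ (nhdsWithin 0 (Set.Ioi 0)) (nhds a) := by
    have h1 : Tendsto φ (nhdsWithin 0 (Set.Ico 0 R)) (nhds a) := by
      have := (hφc 0 ⟨le_refl 0, hR⟩).tendsto
      rwa [hφa] at this
    exact h1.mono_left (nhdsWithin_le_of_mem
      (mem_of_superset (Ioo_mem_nhdsGT_of_mem ⟨le_refl 0, hR⟩) Ioo_subset_Ico_self))
  have hδex : ∃ δ, 0 < δ ∧ δ ≤ R ∧ ∀ s ∈ Set.Ioo (0:ℝ) δ, 0 < deriv φ s := by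
    -- the RHS of the ODE tends to f a > 0
    have hRHS : Tendsto (fun s => f (φ s) + g (φ s) * |deriv φ s| ^ q)
        (nhdsWithin 0 (Set.Ioi 0)) (nhds (f a)) := by
      have h1 : Tendsto (fun s => f (φ s)) (nhdsWithin 0 (Set.Ioi 0)) (nhds (f a)) :=
        (hf.continuousAt.tendsto).comp hφ0a
      have h2 : Tendsto (fun s => g (φ s)) (nhdsWithin 0 (Set.Ioi 0)) (nhds (g a)) :=
        (hg.continuousAt.tendsto).comp hφ0a
      have h3 : Tendsto (fun s => |deriv φ s| ^ q) (nhdsWithin 0 (Set.Ioi 0)) (nhds 0) := by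
        have habs : Tendsto (fun s => |deriv φ s|) (nhdsWithin 0 (Set.Ioi 0)) (nhds 0) := by
          simpa using hd0.abs
        have hc : ContinuousAt (fun x : ℝ => x ^ q) 0 :=
          Real.continuousAt_rpow_const 0 q (Or.inr hq0.le)
        have := hc.tendsto.comp habs
        simpa [Function.comp_def, Real.zero_rpow hq0.ne'] using this
      have := h1.add (h2.mul h3)
      simpa using this
    have hev : ∀ᶠ s in nhdsWithin 0 (Set.Ioi 0),
        0 < f (φ s) + g (φ s) * |deriv φ s| ^ q :=
      hRHS.eventually (eventually_gt_nhds (hfpos a))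
    obtain ⟨u, hu, husub⟩ := mem_nhdsGT_iff_exists_Ioo_subset.1 hev
    set δ : ℝ := min u R with hδdef
    have hδ0 : 0 < δ := lt_min hu hR
    have hδR : δ ≤ R := min_le_right _ _
    refine ⟨δ, hδ0, hδR, ?_⟩
    -- h s = s^(c-1) * deriv φ s
    set h : ℝ → ℝ := fun s => s ^ (c - 1) * deriv φ s with hhdef
    have hmemR : ∀ s ∈ Set.Ioo (0:ℝ) δ, s ∈ Set.Ioo (0:ℝ) R := fun s hs =>
      ⟨hs.1, lt_of_lt_of_le hs.2 hδR⟩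
    have hhd : ∀ s ∈ Set.Ioo (0:ℝ) δ, HasDerivAt h
        (s ^ (c - 1) * (f (φ s) + g (φ s) * |deriv φ s| ^ q)) s := by
      intro s hs
      have hs0 : (0:ℝ) < s := hs.1
      have h1 : HasDerivAt (fun x : ℝ => x ^ (c - 1)) ((c - 1) * s ^ (c - 1 - 1)) s :=
        Real.hasDerivAt_rpow_const (Or.inl hs0.ne')
      have h2 := h1.mul (hφ'd s (hmemR s hs))
      have key : (c - 1) * s ^ (c - 1 - 1) * deriv φ s + s ^ (c - 1) * deriv (deriv φ) s
          = s ^ (c - 1) * (f (φ s) + g (φ s) * |deriv φ s| ^ q) := by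
        rw [← hode s (hmemR s hs)]
        have hpow : s ^ (c - 1 - 1) = s ^ (c - 1) / s := by
          rw [Real.rpow_sub hs0, Real.rpow_one]
        rw [hpow]
        field_simp
        ring
      rw [← key]
      exact h2
    have hmono : StrictMonoOn h (Set.Ioo 0 δ) := by
      apply strictMonoOn_of_hasDerivWithinAt_pos (convex_Ioo 0 δ)
      · intro s hs
        exact (hhd s hs).continuousAt.continuousWithinAt
      · intro s hs
        rw [interior_Ioo] at hs
        exact (hhd s hs).hasDerivWithinAt
      · intro s hs
        rw [interior_Ioo] at hs
        have : s ∈ Set.Ioo 0 u := ⟨hs.1, lt_of_lt_of_le hs.2 (min_le_left _ _)⟩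
        exact mul_pos (Real.rpow_pos_of_pos hs.1 _) (husub this)
    have hh0 : Tendsto h (nhdsWithin 0 (Set.Ioi 0)) (nhds 0) := by
      refine squeeze_zero_norm' ?_ (by simpa using hd0.abs)
      filter_upwards [Ioo_mem_nhdsGT_of_mem (Set.left_mem_Ico.2 one_pos)] with s hs
      have hs0 : (0:ℝ) < s := hs.1
      have hle1 : s ^ (c - 1) ≤ 1 := Real.rpow_le_one hs0.le hs.2.le (by linarith)
      have hnn : 0 ≤ s ^ (c - 1) := (Real.rpow_pos_of_pos hs0 _).le
      calc ‖h s‖ = s ^ (c - 1) * |deriv φ s| := by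
            rw [hhdef]; simp [abs_mul, abs_of_nonneg hnn]
        _ ≤ 1 * |deriv φ s| := mul_le_mul_of_nonneg_right hle1 (abs_nonneg _)
        _ = |deriv φ s| := one_mul _
    have hh_nonneg : ∀ s ∈ Set.Ioo (0:ℝ) δ, 0 ≤ h s := by
      intro s hs
      refine le_of_tendsto hh0 ?_
      filter_upwards [Ioo_mem_nhdsGT_of_mem (Set.left_mem_Ico.2 hs.1)] with t ht
      exact (hmono ⟨ht.1, ht.2.trans hs.2⟩ hs ht.2).le
    intro s hs
    have h2 : h (s / 2) < h s := hmono ⟨by linarith [hs.1], by linarith [hs.1, hs.2]⟩ hs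
      (by linarith [hs.1])
    have h3 : 0 ≤ h (s / 2) := hh_nonneg _ ⟨by linarith [hs.1], by linarith [hs.1, hs.2]⟩
    have h4 : 0 < h s := lt_of_le_of_lt h3 h2
    have h5 : 0 < s ^ (c - 1) := Real.rpow_pos_of_pos hs.1 _
    rw [hhdef] at h4
    simp only at h4
    nlinarith [h4, h5]
  obtain ⟨δ, hδ0, hδR, hδ⟩ := hδex
  have hpos : ∀ s ∈ Set.Ioo (0:ℝ) R, 0 < deriv φ s := by
    by_contra hcon
    push_neg at hcon
    obtain ⟨s₀, hs₀, hs₀le⟩ := hcon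
    set S : Set ℝ := {s | s ∈ Set.Ioo (0:ℝ) R ∧ deriv φ s ≤ 0} with hSdef
    have hSne : S.Nonempty := ⟨s₀, hs₀, hs₀le⟩
    have hSbd : BddBelow S := ⟨0, fun t ht => (ht.1.1).le⟩
    set r₁ : ℝ := sInf S with hr₁def
    have hSlb : ∀ t ∈ S, δ ≤ t := by
      intro t ht
      by_contra hlt
      push_neg at hlt
      exact absurd (hδ t ⟨ht.1.1, hlt⟩) (not_lt.2 ht.2)
    have hr₁δ : δ ≤ r₁ := le_csInf hSne hSlb
    have hr₁le : r₁ ≤ s₀ := csInf_le hSbd ⟨hs₀, hs₀le⟩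
    have hr₁mem : r₁ ∈ Set.Ioo (0:ℝ) R := ⟨lt_of_lt_of_le hδ0 hr₁δ, lt_of_le_of_lt hr₁le hs₀.2⟩
    have hcont₁ : ContinuousAt (deriv φ) r₁ :=
      hφ'cont.continuousAt (isOpen_Ioo.mem_nhds hr₁mem)
    -- deriv φ r₁ ≤ 0
    have hle0 : deriv φ r₁ ≤ 0 := by
      by_contra hgt
      push_neg at hgt
      have hev : ∀ᶠ t in nhds r₁, 0 < deriv φ t := hcont₁.eventually (eventually_gt_nhds hgt)
      obtain ⟨η, hη0, hη⟩ := Metric.eventually_nhds_iff.1 hev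
      have hlb : ∀ t ∈ S, r₁ + η ≤ t := by
        intro t ht
        by_contra hlt
        push_neg at hlt
        have h1 : r₁ ≤ t := csInf_le hSbd ht
        have : dist t r₁ < η := by
          rw [Real.dist_eq, abs_of_nonneg (by linarith)]
          linarith
        exact absurd (hη this) (not_lt.2 ht.2)
      have := le_csInf hSne hlb
      linarith
    -- deriv φ > 0 on (0, r₁)
    have hposlt : ∀ t ∈ Set.Ioo (0:ℝ) r₁, 0 < deriv φ t := by
      intro t ht
      by_contra hle
      push_neg at hle
      have : t ∈ S := ⟨⟨ht.1, lt_trans ht.2 hr₁mem.2⟩, hle⟩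
      exact absurd (csInf_le hSbd this) (not_le.2 ht.2)
    -- deriv φ r₁ ≥ 0 by left continuity hence = 0
    have hge0 : 0 ≤ deriv φ r₁ := by
      have htt : Tendsto (deriv φ) (nhdsWithin r₁ (Set.Iio r₁)) (nhds (deriv φ r₁)) :=
        hcont₁.tendsto.mono_left nhdsWithin_le_nhds
      refine ge_of_tendsto htt ?_
      filter_upwards [Ioo_mem_nhdsLT_of_mem (Set.right_mem_Ioc.2 hr₁mem.1)] with t ht
      exact (hposlt t ht).le
    have heq0 : deriv φ r₁ = 0 := le_antisymm hle0 hge0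
    -- second derivative at r₁ is f (φ r₁) > 0
    have hd2pos : 0 < deriv (deriv φ) r₁ := by
      have := hode r₁ hr₁mem
      rw [heq0] at this
      simp only [mul_zero, add_zero, abs_zero] at this
      rw [Real.zero_rpow hq0.ne', mul_zero, add_zero] at this
      rw [this]
      exact hfpos _
    -- contradiction via slope from the left
    have hslope : Tendsto (slope (deriv φ) r₁) (nhdsWithin r₁ {r₁}ᶜ)
        (nhds (deriv (deriv φ) r₁)) :=
      (hasDerivAt_iff_tendsto_slope.1 (hφ'd r₁ hr₁mem))
    have hslope' : Tendsto (slope (deriv φ) r₁) (nhdsWithin r₁ (Set.Iio r₁))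
        (nhds (deriv (deriv φ) r₁)) :=
      hslope.mono_left (nhdsWithin_mono _ (fun t ht => ne_of_lt ht))
    have : deriv (deriv φ) r₁ ≤ 0 := by
      refine le_of_tendsto hslope' ?_
      filter_upwards [Ioo_mem_nhdsLT_of_mem (Set.right_mem_Ioc.2 hr₁mem.1)] with t ht
      rw [slope_def_field, heq0]
      apply div_nonpos_of_nonneg_of_nonpos
      · simp [le_of_lt (hposlt t ht)]
      · linarith [ht.2]
    linarith
  have hD0 : deriv φ 0 = 0 := by
    by_cases hdiff : DifferentiableAt ℝ φ 0
    · -- slope tends to deriv φ 0 along 𝓝[>]0, and also to 0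
      have h1 : Tendsto (slope φ 0) (nhdsWithin 0 (Set.Ioi 0)) (nhds (deriv φ 0)) :=
        (hasDerivAt_iff_tendsto_slope.1 hdiff.hasDerivAt).mono_left
          (nhdsWithin_mono _ (fun t ht => ne_of_gt ht))
      have h2 : Tendsto (slope φ 0) (nhdsWithin 0 (Set.Ioi 0)) (nhds 0) := by
        rw [Metric.tendsto_nhdsWithin_nhds]
        intro ε hε
        rw [Metric.tendsto_nhdsWithin_nhds] at hd0
        obtain ⟨δ₁, hδ₁0, hδ₁⟩ := hd0 ε hε
        refine ⟨min δ₁ R, lt_min hδ₁0 hR, ?_⟩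
        intro t ht hdist
        have ht0 : (0:ℝ) < t := ht
        have htR : t < R := lt_of_lt_of_le (lt_of_abs_lt (by
          simpa [Real.dist_eq] using hdist)) (min_le_right _ _)
        have htδ₁ : t < δ₁ := lt_of_lt_of_le (lt_of_abs_lt (by
          simpa [Real.dist_eq] using hdist)) (min_le_left _ _)
        obtain ⟨ξ, hξ, hslope⟩ := exists_hasDerivAt_eq_slope φ (deriv φ) ht0
          (hφc.mono (fun x hx => ⟨hx.1, lt_of_le_of_lt hx.2 htR⟩))
          (fun x hx => hφd x ⟨hx.1, lt_trans hx.2 htR⟩)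
        have : dist (deriv φ ξ) 0 < ε := by
          apply hδ₁ hξ.1
          rw [Real.dist_eq, sub_zero, abs_of_pos hξ.1]
          exact lt_trans hξ.2 htδ₁
        rw [slope_def_field, ← hslope]
        simpa [Real.dist_eq] using this
      exact tendsto_nhds_unique h1 h2
    · exact deriv_zero_of_not_differentiableAt hdiff
  intro r hr
  rcases eq_or_lt_of_le hr.1 with h0 | h0
  · subst h0
    rw [hD0, hφa]
    rw [intervalIntegral.integral_same, intervalIntegral.integral_same,
      Real.zero_rpow (by norm_num : (1:ℝ)/2 ≠ 0), Real.zero_rpow (one_div_ne_zero h2q'.ne')]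
    simp
  · have hrIoo : r ∈ Set.Ioo (0:ℝ) R := ⟨h0, hr.2⟩
    have h2q' : (0:ℝ) < 2 - q := by linarith
    have hφmono : MonotoneOn φ (Set.Ico 0 R) := by
      apply monotoneOn_of_deriv_nonneg (convex_Ico 0 R) hφc
      · intro x hx
        rw [interior_Ico] at hx
        exact (hφd x hx).differentiableAt.differentiableWithinAt
      · intro x hx
        rw [interior_Ico] at hx
        exact (hpos x hx).le
    have hv : 0 < deriv φ r := hpos r hrIoo
    have hev : ∀ᶠ s in nhdsWithin 0 (Set.Ioi 0), deriv φ s < deriv φ r :=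
      hd0.eventually (eventually_lt_nhds hv)
    obtain ⟨u, hu, husub⟩ := mem_nhdsGT_iff_exists_Ioo_subset.1 hev
    set δ₂ : ℝ := min u r with hδ₂def
    have hδ₂0 : 0 < δ₂ := lt_min hu hrIoo.1
    have hδ₂r : δ₂ ≤ r := min_le_right _ _
    have hsub : Set.Icc δ₂ r ⊆ Set.Ioo 0 R := fun s hs =>
      ⟨lt_of_lt_of_le hδ₂0 hs.1, lt_of_le_of_lt hs.2 hrIoo.2⟩
    obtain ⟨rs, hrsK, hrsmax⟩ := isCompact_Icc.exists_isMaxOn (Set.nonempty_Icc.2 hδ₂r)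
      (hφ'cont.mono hsub)
    set M : ℝ := deriv φ rs with hMdef
    have hMr : deriv φ r ≤ M := hrsmax ⟨hδ₂r, le_refl r⟩
    have hM0 : 0 < M := lt_of_lt_of_le hv hMr
    have hrs0 : 0 < rs := lt_of_lt_of_le hδ₂0 hrsK.1
    have hrsmem : rs ∈ Set.Ioo (0:ℝ) R := hsub hrsK
    have hrsr : rs ≤ r := hrsK.2
    have hMall : ∀ s ∈ Set.Ioc (0:ℝ) r, deriv φ s ≤ M := by
      intro s hs
      rcases lt_or_ge s δ₂ with hlt | hge
      · have : s ∈ Set.Ioo (0:ℝ) u := ⟨hs.1, lt_of_lt_of_le hlt (min_le_left _ _)⟩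
        exact le_trans (husub this).le hMr
      · exact hrsmax ⟨hge, hs.2⟩
    -- FTC setup
    set F : ℝ → ℝ := fun x => ∫ t in a..x, f t with hFdef
    set G : ℝ → ℝ := fun x => ∫ t in a..x, max (g t) 0 with hGdef
    have hgc : Continuous (fun t => max (g t) 0) := hg.max continuous_const
    have hFd : ∀ x, HasDerivAt F (f x) x := fun x =>
      (hf.integral_hasStrictDerivAt a x).hasDerivAt
    have hGd : ∀ x, HasDerivAt G (max (g x) 0) x := fun x =>
      (hgc.integral_hasStrictDerivAt a x).hasDerivAt
    set W : ℝ → ℝ := fun s => (1/2) * (deriv φ s)^2 - F (φ s) - M ^ q * G (φ s) with hWdef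
    have hWd : ∀ s ∈ Set.Ioo (0:ℝ) R, HasDerivAt W
        (deriv φ s * deriv (deriv φ) s - f (φ s) * deriv φ s
          - M ^ q * (max (g (φ s)) 0 * deriv φ s)) s := by
      intro s hs
      have h1 : HasDerivAt (fun s => (1/2:ℝ) * (deriv φ s)^2)
          (deriv φ s * deriv (deriv φ) s) s := by
        have h2 : HasDerivAt (fun s => (1/2:ℝ) * (deriv φ s)^2) _ s := ((hφ'd s hs).pow 2).const_mul (1/2 : ℝ)
        convert h2 using 1
        ring
      have h3 : HasDerivAt (fun s => F (φ s)) (f (φ s) * deriv φ s) s :=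
        (hFd (φ s)).comp s (hφd s hs)
      have h4 : HasDerivAt (fun s => (M ^ q) * G (φ s))
          (M ^ q * (max (g (φ s)) 0 * deriv φ s)) s :=
        ((hGd (φ s)).comp s (hφd s hs)).const_mul _
      exact (h1.sub h3).sub h4
    have hW'le : ∀ s ∈ Set.Ioo (0:ℝ) rs, deriv W s ≤ 0 := by
      intro s hs
      have hsR : s ∈ Set.Ioo (0:ℝ) R := ⟨hs.1, lt_trans (lt_of_lt_of_le hs.2 hrsr) hrIoo.2⟩
      rw [(hWd s hsR).deriv]
      have hode' := hode s hsR
      have hps : 0 < deriv φ s := hpos s hsR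
      rw [abs_of_pos hps] at hode'
      have hd2 : deriv (deriv φ) s
          = f (φ s) + g (φ s) * (deriv φ s) ^ q - (c-1)/s * deriv φ s := by linarith
      rw [hd2]
      have hsM : deriv φ s ≤ M := hMall s ⟨hs.1, le_trans hs.2.le hrsr⟩
      have h5 : (deriv φ s) ^ q ≤ M ^ q := Real.rpow_le_rpow hps.le hsM hq0.le
      have h6 : g (φ s) ≤ max (g (φ s)) 0 := le_max_left _ _
      have h7 : (0:ℝ) ≤ max (g (φ s)) 0 := le_max_right _ _
      have h8 : (0:ℝ) ≤ (c-1)/s := div_nonneg (by linarith) hs.1.le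
      have h9 : (0:ℝ) ≤ (deriv φ s) ^ q := Real.rpow_nonneg hps.le q
      nlinarith [mul_nonneg (mul_nonneg (sub_nonneg.2 h5) h7) hps.le,
        mul_nonneg (mul_nonneg (sub_nonneg.2 h6) h9) hps.le,
        mul_nonneg h8 (mul_nonneg hps.le hps.le)]
    have hWanti : ∀ ε ∈ Set.Ioo (0:ℝ) rs, W rs ≤ W ε := by
      intro ε hε
      have hIccsub : Set.Icc ε rs ⊆ Set.Ioo 0 R := fun x hx =>
        ⟨lt_of_lt_of_le hε.1 hx.1, lt_of_le_of_lt hx.2 hrsmem.2⟩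
      have hanti : AntitoneOn W (Set.Icc ε rs) := by
        apply antitoneOn_of_deriv_nonpos (convex_Icc _ _)
        · exact fun x hx => ((hWd x (hIccsub hx)).continuousAt).continuousWithinAt
        · intro x hx
          rw [interior_Icc] at hx
          exact ((hWd x (hIccsub (Set.Ioo_subset_Icc_self hx))).differentiableAt).differentiableWithinAt
        · intro x hx
          rw [interior_Icc] at hx
          exact hW'le x ⟨lt_trans hε.1 hx.1, hx.2⟩
      exact hanti ⟨le_refl ε, hε.2.le⟩ ⟨hε.2.le, le_refl rs⟩ hε.2.le
    have hW0 : Tendsto W (nhdsWithin 0 (Set.Ioi 0)) (nhds 0) := by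
      have t1 : Tendsto (fun s => (1/2:ℝ) * (deriv φ s)^2)
          (nhdsWithin 0 (Set.Ioi 0)) (nhds 0) := by
        have := (hd0.pow 2).const_mul (1/2 : ℝ)
        simpa using this
      have t2 : Tendsto (fun s => F (φ s)) (nhdsWithin 0 (Set.Ioi 0)) (nhds (F a)) :=
        ((hFd a).continuousAt.tendsto).comp hφ0a
      have t3 : Tendsto (fun s => G (φ s)) (nhdsWithin 0 (Set.Ioi 0)) (nhds (G a)) :=
        ((hGd a).continuousAt.tendsto).comp hφ0a
      have hFa : F a = 0 := intervalIntegral.integral_same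
      have hGa : G a = 0 := intervalIntegral.integral_same
      have := (t1.sub t2).sub (t3.const_mul (M ^ q))
      simp only [hFa, hGa, mul_zero, sub_zero] at this
      convert this using 2 <;> ring
    have hWrs : W rs ≤ 0 := by
      refine ge_of_tendsto hW0 ?_
      filter_upwards [Ioo_mem_nhdsGT_of_mem (Set.left_mem_Ico.2 hrs0)] with ε hε
      exact hWanti ε hε
    -- energy inequality
    have henergy : (1/2) * M^2 ≤ F (φ rs) + M ^ q * G (φ rs) := by
      have : (1/2) * (deriv φ rs)^2 - F (φ rs) - M ^ q * G (φ rs) ≤ 0 := hWrs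
      rw [← hMdef] at this
      linarith
    -- monotonicity of F, G along φ
    have hφrs_le : φ rs ≤ φ r :=
      hφmono ⟨hrs0.le, hrsmem.2⟩ ⟨hrIoo.1.le, hrIoo.2⟩ hrsr
    have haφr : a ≤ φ r := by
      rw [← hφa]
      exact hφmono ⟨le_refl 0, hR⟩ ⟨hrIoo.1.le, hrIoo.2⟩ hrIoo.1.le
    have haφrs : a ≤ φ rs := by
      rw [← hφa]
      exact hφmono ⟨le_refl 0, hR⟩ ⟨hrs0.le, hrsmem.2⟩ hrs0.le
    have hFle : F (φ rs) ≤ F (φ r) := by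
      have h1 : F (φ r) - F (φ rs) = ∫ t in (φ rs)..(φ r), f t :=
        intervalIntegral.integral_interval_sub_left (hf.intervalIntegrable _ _)
          (hf.intervalIntegrable _ _)
      have h2 : (0:ℝ) ≤ ∫ t in (φ rs)..(φ r), f t :=
        intervalIntegral.integral_nonneg hφrs_le (fun u _ => (hfpos u).le)
      linarith
    have hGle : G (φ rs) ≤ G (φ r) := by
      have h1 : G (φ r) - G (φ rs) = ∫ t in (φ rs)..(φ r), max (g t) 0 :=
        intervalIntegral.integral_interval_sub_left (hgc.intervalIntegrable _ _)
          (hgc.intervalIntegrable _ _)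
      have h2 : (0:ℝ) ≤ ∫ t in (φ rs)..(φ r), max (g t) 0 :=
        intervalIntegral.integral_nonneg hφrs_le (fun u _ => le_max_right _ _)
      linarith
    have hFnn : 0 ≤ F (φ r) :=
      intervalIntegral.integral_nonneg haφr (fun u _ => (hfpos u).le)
    have hGnn : 0 ≤ G (φ r) :=
      intervalIntegral.integral_nonneg haφr (fun u _ => le_max_right _ _)
    have hMq : (0:ℝ) < M ^ q := Real.rpow_pos_of_pos hM0 q
    set Fv : ℝ := F (φ r)
    set Gv : ℝ := G (φ r)
    have hkey : M^2 ≤ 2*Fv + 2*(M ^ q * Gv) := by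
      have : M ^ q * G (φ rs) ≤ M ^ q * Gv := by
        apply mul_le_mul_of_nonneg_left hGle hMq.le
      linarith [henergy, hFle, this]
    have hexp1 : (1:ℝ) ≤ 2/(2-q) := (one_le_div h2q').2 (by linarith)
    have h2le : (2:ℝ) ≤ (2:ℝ) ^ (2/(2-q)) := by
      calc (2:ℝ) = (2:ℝ) ^ (1:ℝ) := (Real.rpow_one 2).symm
        _ ≤ (2:ℝ) ^ (2/(2-q)) := Real.rpow_le_rpow_of_exponent_le (by norm_num) hexp1
    have hFrpow : (0:ℝ) ≤ Fv ^ ((1:ℝ)/2) := Real.rpow_nonneg hFnn _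
    have hGrpow : (0:ℝ) ≤ Gv ^ (1/(2-q)) := Real.rpow_nonneg hGnn _
    have hgoal : M ≤ (2:ℝ) ^ (2/(2-q)) * (Fv ^ ((1:ℝ)/2) + Gv ^ (1/(2-q))) := by
      rcases le_or_gt (M ^ q * Gv) Fv with hcase | hcase
      · -- M² ≤ 4 Fv
        have h4 : M^2 ≤ 4*Fv := by linarith
        have hMle : M ≤ 2 * Fv ^ ((1:ℝ)/2) := by
          have e1 : M = Real.sqrt (M^2) := (Real.sqrt_sq hM0.le).symm
          have e2 : Real.sqrt (M^2) ≤ Real.sqrt (4*Fv) := Real.sqrt_le_sqrt h4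
          have e3 : Real.sqrt (4*Fv) = 2 * Real.sqrt Fv := by
            rw [show (4:ℝ)*Fv = 2^2*Fv by ring, Real.sqrt_mul (by positivity) Fv,
              Real.sqrt_sq (by norm_num : (0:ℝ) ≤ 2)]
          calc M = Real.sqrt (M^2) := e1
            _ ≤ Real.sqrt (4*Fv) := e2
            _ = 2 * Real.sqrt Fv := e3
            _ = 2 * Fv ^ ((1:ℝ)/2) := by rw [Real.sqrt_eq_rpow]
        calc M ≤ 2 * Fv ^ ((1:ℝ)/2) := hMle
          _ ≤ (2:ℝ) ^ (2/(2-q)) * (Fv ^ ((1:ℝ)/2)) :=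
              mul_le_mul_of_nonneg_right h2le hFrpow
          _ ≤ (2:ℝ) ^ (2/(2-q)) * (Fv ^ ((1:ℝ)/2) + Gv ^ (1/(2-q))) :=
              mul_le_mul_of_nonneg_left (by linarith) (by linarith)
      · -- M² ≤ 4 M^q Gv
        have h4 : M^2 ≤ 4*(M ^ q * Gv) := by linarith
        have h5 : M ^ (2-q) ≤ 4 * Gv := by
          have e1 : M^2 = M ^ q * M ^ (2-q) := by
            rw [← Real.rpow_add hM0]
            norm_num
          rw [e1] at h4
          have := (mul_le_mul_iff_right₀ hMq).1 (by linarith : M ^ q * M ^ (2-q) ≤ M ^ q * (4*Gv))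
          linarith
        have hMle : M ≤ (2:ℝ) ^ (2/(2-q)) * Gv ^ (1/(2-q)) := by
          have e1 : M = (M ^ (2-q)) ^ (1/(2-q)) := by
            rw [← Real.rpow_mul hM0.le, mul_one_div_cancel h2q'.ne']
            exact (Real.rpow_one M).symm
          have e2 : (M ^ (2-q)) ^ (1/(2-q)) ≤ (4*Gv) ^ (1/(2-q)) :=
            Real.rpow_le_rpow (Real.rpow_nonneg hM0.le _) h5 (by positivity)
          have e3 : ((4:ℝ)*Gv) ^ (1/(2-q)) = (4:ℝ) ^ (1/(2-q)) * Gv ^ (1/(2-q)) :=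
            Real.mul_rpow (by norm_num) hGnn
          have e4 : (4:ℝ) ^ (1/(2-q)) = (2:ℝ) ^ (2/(2-q)) := by
            rw [show (4:ℝ) = (2:ℝ) ^ ((2:ℕ):ℝ) by rw [Real.rpow_natCast]; norm_num]
            rw [← Real.rpow_mul (by norm_num : (0:ℝ) ≤ 2)]
            norm_num [div_eq_mul_inv]
          rw [e1]
          rw [e3, e4] at e2
          exact e2
        calc M ≤ (2:ℝ) ^ (2/(2-q)) * Gv ^ (1/(2-q)) := hMle
          _ ≤ (2:ℝ) ^ (2/(2-q)) * (Fv ^ ((1:ℝ)/2) + Gv ^ (1/(2-q))) :=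
              mul_le_mul_of_nonneg_left (by linarith) (by linarith)
    exact le_trans hMr hgoal
end

section
/- Let q = 2, c ≥ 1, f, g continuous nondecreasing with f positive. If φ is a C² solution of φ'' + ((c-1)/r)φ' = f(φ) + g(φ)(φ')² on [0,R) with φ(0)=a, φ'(0)=0, then for all r ∈ [0,R): φ'(r) ≤ ( 2 ∫_a^{φ(r)} exp(2∫_t^{φ(r)} g⁺(s) ds) f(t) dt )^{1/2}. -/
open Real MeasureTheory Set Filter Topology

theorem stmt5 (c R a : ℝ) (hc : 1 ≤ c) (hR : 0 < R)
    (f g φ : ℝ → ℝ)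
    (hf : Continuous f) (hfpos : ∀ t, 0 < f t) (hfmono : Monotone f)
    (hg : Continuous g) (hgmono : Monotone g)
    (hφc : ContinuousOn φ (Set.Ico 0 R))
    (hφ2 : ContDiffOn ℝ 2 φ (Set.Ioo 0 R))
    (hφa : φ 0 = a)
    (hd0 : Filter.Tendsto (deriv φ) (nhdsWithin 0 (Set.Ioi 0)) (nhds 0))
    (hd2 : ∃ L, Filter.Tendsto (deriv (deriv φ)) (nhdsWithin 0 (Set.Ioi 0)) (nhds L))
    (hode : ∀ r ∈ Set.Ioo 0 R,
      deriv (deriv φ) r + (c - 1) / r * deriv φ r = f (φ r) + g (φ r) * (deriv φ r) ^ 2) :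
    ∀ r ∈ Set.Ico 0 R,
      deriv φ r ≤
        (2 * ∫ t in a..φ r, Real.exp (2 * ∫ s in t..φ r, max (g s) 0) * f t) ^ ((1 : ℝ) / 2) := by
  have hIoo : IsOpen (Set.Ioo (0:ℝ) R) := isOpen_Ioo
  set ψ := deriv φ with hψdef
  have hψc1 : ContDiffOn ℝ 1 ψ (Set.Ioo 0 R) := hφ2.deriv_of_isOpen hIoo (by norm_num)
  have hψcont : ContinuousOn ψ (Set.Ioo 0 R) := hψc1.continuousOn
  have hφd : ∀ r ∈ Set.Ioo (0:ℝ) R, HasDerivAt φ (ψ r) r := fun r hr =>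
    ((hφ2.differentiableOn (by norm_num)).differentiableAt (hIoo.mem_nhds hr)).hasDerivAt
  have hψd : ∀ r ∈ Set.Ioo (0:ℝ) R, HasDerivAt ψ (deriv ψ r) r := fun r hr =>
    ((hψc1.differentiableOn (by norm_num)).differentiableAt (hIoo.mem_nhds hr)).hasDerivAt
  -- nonnegativity of ψ on (0, R)
  have hψnn : ∀ r₀ ∈ Set.Ioo (0:ℝ) R, 0 ≤ ψ r₀ := by
    intro r₀ hr₀
    by_contra hneg
    push_neg at hneg
    have hKsub : Set.Icc (0:ℝ) r₀ ⊆ Set.Ico 0 R := fun x hx => ⟨hx.1, lt_of_le_of_lt hx.2 hr₀.2⟩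
    have hcf : ContinuousOn (fun r => f (φ r)) (Set.Icc 0 r₀) :=
      hf.comp_continuousOn (hφc.mono hKsub)
    obtain ⟨x₀, -, hx₀'⟩ := isCompact_Icc.exists_isMinOn
      ⟨0, Set.left_mem_Icc.mpr hr₀.1.le⟩ hcf
    have hx₀ : ∀ y ∈ Set.Icc (0:ℝ) r₀, f (φ x₀) ≤ f (φ y) := fun y hy => isMinOn_iff.mp hx₀' y hy
    set ε := f (φ x₀) with hεdef
    have hεpos : 0 < ε := hfpos _
    obtain ⟨M0, hM0⟩ := isCompact_Icc.exists_bound_of_continuousOn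
      (hg.comp_continuousOn (hφc.mono hKsub))
    set M := max M0 1 with hMdef
    have hMpos : 0 < M := lt_of_lt_of_le one_pos (le_max_right _ _)
    have hMb : ∀ x ∈ Set.Icc (0:ℝ) r₀, |g (φ x)| ≤ M := fun x hx => by
      have := (hM0 x hx).trans (le_max_left M0 1)
      rwa [Function.comp_apply, Real.norm_eq_abs] at this
    set d := Real.sqrt (ε / M) with hddef
    have hdpos : 0 < d := Real.sqrt_pos.mpr (div_pos hεpos hMpos)
    set m := min (d/2) (-ψ r₀) with hmdef
    have hmpos : 0 < m := lt_min (by linarith) (by linarith)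
    have hm1 : m ≤ d/2 := min_le_left _ _
    have hm2 : ψ r₀ ≤ -m := by
      have := min_le_right (d/2) (-ψ r₀); linarith
    have hev : ∀ᶠ u in 𝓝[>] (0:ℝ), -m < ψ u := hd0.eventually (eventually_gt_nhds (by linarith))
    rw [eventually_nhdsWithin_iff] at hev
    rcases Metric.eventually_nhds_iff.mp hev with ⟨s₀, hs₀pos, hs₀⟩
    set s₁ := min (s₀/2) r₀ with hs₁def
    have hs₁pos : 0 < s₁ := lt_min (by linarith) hr₀.1
    have hs₁r₀ : s₁ ≤ r₀ := min_le_right _ _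
    have hsmall : ∀ u : ℝ, 0 < u → u < s₁ → -m < ψ u := by
      intro u hu hus
      have hd' : dist u 0 < s₀ := by
        rw [Real.dist_eq, sub_zero, abs_of_pos hu]
        calc u < s₁ := hus
          _ ≤ s₀/2 := min_le_left _ _
          _ < s₀ := by linarith
      exact hs₀ hd' hu
    set S := Set.Icc s₁ r₀ ∩ ψ ⁻¹' Set.Iic (-m) with hSdef
    have hIccsub : Set.Icc s₁ r₀ ⊆ Set.Ioo 0 R := fun x hx =>
      ⟨lt_of_lt_of_le hs₁pos hx.1, lt_of_le_of_lt hx.2 hr₀.2⟩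
    have hψIcc : ContinuousOn ψ (Set.Icc s₁ r₀) := hψcont.mono hIccsub
    have hSclosed : IsClosed S := hψIcc.preimage_isClosed_of_isClosed isClosed_Icc isClosed_Iic
    have hSne : S.Nonempty := ⟨r₀, ⟨hs₁r₀, le_rfl⟩, hm2⟩
    have hSbdd : BddBelow S := ⟨s₁, fun u hu => hu.1.1⟩
    set t := sInf S with htdef
    have htS : t ∈ S := hSclosed.csInf_mem hSne hSbdd
    have htmem : t ∈ Set.Ioo 0 R := hIccsub htS.1
    have htlb : ∀ u : ℝ, 0 < u → u < t → -m < ψ u := by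
      intro u hu hut
      by_cases hcase : u < s₁
      · exact hsmall u hu hcase
      · push_neg at hcase
        by_contra hle
        push_neg at hle
        have huS : u ∈ S := ⟨⟨hcase, hut.le.trans htS.1.2⟩, hle⟩
        have := csInf_le hSbdd huS
        linarith
    have hψt_le : ψ t ≤ -m := htS.2
    have hψt : ψ t = -m := by
      refine le_antisymm hψt_le ?_
      have hcont : ContinuousAt ψ t := hψcont.continuousAt (hIoo.mem_nhds htmem)
      have htt : Tendsto ψ (𝓝[<] t) (𝓝 (ψ t)) := hcont.tendsto.mono_left nhdsWithin_le_nhds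
      refine ge_of_tendsto htt ?_
      filter_upwards [Ioo_mem_nhdsLT_of_mem ⟨htmem.1, le_rfl⟩] with u hu
      exact (htlb u hu.1 hu.2).le
    have ht0 : t ∈ Set.Icc (0:ℝ) r₀ := ⟨le_trans hs₁pos.le htS.1.1, htS.1.2⟩
    have hode_t := hode t htmem
    have hgψ : -M * ψ t ^ 2 ≤ g (φ t) * ψ t ^ 2 := by
      have hb := abs_le.mp (hMb t ht0)
      nlinarith [sq_nonneg (ψ t)]
    have hMm : M * m ^ 2 ≤ ε / 4 := by
      have hd2 : d ^ 2 = ε / M := Real.sq_sqrt (div_pos hεpos hMpos).le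
      have hm2' : m ^ 2 ≤ d ^ 2 / 4 := by nlinarith
      calc M * m ^ 2 ≤ M * (d ^ 2 / 4) := by nlinarith
        _ = ε / 4 := by rw [hd2]; field_simp
    have hεt : ε ≤ f (φ t) := hx₀ t ht0
    have hderiv_pos : 0 < deriv ψ t := by
      have h2 : 0 ≤ (c - 1) / t := div_nonneg (by linarith) htmem.1.le
      have h3 : (c - 1) / t * ψ t ≤ 0 := by
        rw [hψt, mul_neg]
        exact neg_nonpos.mpr (mul_nonneg h2 hmpos.le)
      have h4 : ψ t ^ 2 = m ^ 2 := by rw [hψt]; ring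
      have key : -M * ψ t ^ 2 = -(M * m ^ 2) := by rw [h4]; ring
      rw [key] at hgψ
      linarith
    have hslope := hasDerivAt_iff_tendsto_slope.mp (hψd t htmem)
    have hslope' : Tendsto (slope ψ t) (𝓝[<] t) (𝓝 (deriv ψ t)) :=
      hslope.mono_left (nhdsWithin_mono _ fun x hx => ne_of_lt hx)
    have hnonpos : deriv ψ t ≤ 0 := by
      refine le_of_tendsto hslope' ?_
      filter_upwards [Ioo_mem_nhdsLT_of_mem ⟨htmem.1, le_rfl⟩] with u hu
      have h1 : -m < ψ u := htlb u hu.1 hu.2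
      rw [slope_def_field]
      apply div_nonpos_of_nonneg_of_nonpos
      · rw [hψt]; linarith
      · linarith [hu.2]
    linarith
  -- the auxiliary functions
  set gp : ℝ → ℝ := fun s => max (g s) 0 with hgpdef
  have hgpc : Continuous gp := hg.max continuous_const
  set G : ℝ → ℝ := fun u => ∫ s in a..u, gp s with hGdef
  have hG : ∀ u, HasDerivAt G (gp u) u := fun u => (hgpc.integral_hasStrictDerivAt a u).hasDerivAt
  have hGc : Continuous G := continuous_iff_continuousAt.mpr fun u => (hG u).continuousAt
  set F : ℝ → ℝ := fun u => ∫ s in a..u, Real.exp (-2 * G s) * f s with hFdef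
  have hFic : Continuous fun s => Real.exp (-2 * G s) * f s :=
    (Real.continuous_exp.comp (continuous_const.mul hGc)).mul hf
  have hF : ∀ u, HasDerivAt F (Real.exp (-2 * G u) * f u) u := fun u =>
    (hFic.integral_hasStrictDerivAt a u).hasDerivAt
  have hFc : Continuous F := continuous_iff_continuousAt.mpr fun u => (hF u).continuousAt
  set H : ℝ → ℝ := fun r => Real.exp (-2 * G (φ r)) * ψ r ^ 2 - 2 * F (φ r) with hHdef
  have hHkey : ∀ r ∈ Set.Ioo (0:ℝ) R, HasDerivAt H
      (2 * ψ r * Real.exp (-2 * G (φ r)) *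
        (deriv ψ r - gp (φ r) * ψ r ^ 2 - f (φ r))) r := by
    intro r hr
    have hA : HasDerivAt (fun x => G (φ x)) (gp (φ r) * ψ r) r :=
      HasDerivAt.comp r (hG (φ r)) (hφd r hr)
    have hB : HasDerivAt (fun x => -2 * G (φ x)) (-2 * (gp (φ r) * ψ r)) r := hA.const_mul (-2)
    have hC : HasDerivAt (fun x => Real.exp (-2 * G (φ x)))
        (Real.exp (-2 * G (φ r)) * (-2 * (gp (φ r) * ψ r))) r := hB.exp
    have hD : HasDerivAt (fun x => ψ x ^ 2) ((2:ℕ) * ψ r ^ 1 * deriv ψ r) r := (hψd r hr).pow 2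
    have hE : HasDerivAt (fun x => Real.exp (-2 * G (φ x)) * ψ x ^ 2) _ r := hC.mul hD
    have hF' : HasDerivAt (fun x => F (φ x)) (Real.exp (-2 * G (φ r)) * f (φ r) * ψ r) r :=
      HasDerivAt.comp r (hF (φ r)) (hφd r hr)
    have hH' : HasDerivAt (fun x => Real.exp (-2 * G (φ x)) * ψ x ^ 2 - 2 * F (φ x)) _ r :=
      hE.sub (hF'.const_mul 2)
    convert hH' using 1
    push_cast
    ring
  have hHanti : AntitoneOn H (Set.Ioo 0 R) := by
    refine antitoneOn_of_deriv_nonpos (convex_Ioo 0 R)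
      (fun r hr => (hHkey r hr).continuousAt.continuousWithinAt) ?_ ?_
    · rw [interior_Ioo]
      exact fun r hr => (hHkey r hr).differentiableAt.differentiableWithinAt
    · rw [interior_Ioo]
      intro r hr
      rw [(hHkey r hr).deriv]
      have h1 := hψnn r hr
      have hode_r := hode r hr
      have hterm : 0 ≤ (c - 1) / r * ψ r :=
        mul_nonneg (div_nonneg (by linarith) hr.1.le) h1
      have hgg : g (φ r) * ψ r ^ 2 ≤ gp (φ r) * ψ r ^ 2 :=
        mul_le_mul_of_nonneg_right (le_max_left _ _) (sq_nonneg _)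
      have h4 : deriv ψ r - gp (φ r) * ψ r ^ 2 - f (φ r) ≤ 0 := by linarith
      have h5 : 0 ≤ 2 * ψ r * Real.exp (-2 * G (φ r)) :=
        mul_nonneg (by linarith) (Real.exp_pos _).le
      exact mul_nonpos_of_nonneg_of_nonpos h5 h4
  have hφ0 : Tendsto φ (𝓝[>] (0:ℝ)) (𝓝 a) := by
    have h : Tendsto φ (𝓝[Set.Ico 0 R] (0:ℝ)) (𝓝 (φ 0)) := hφc 0 ⟨le_rfl, hR⟩
    rw [hφa] at h
    have h2 : Tendsto φ (𝓝[Set.Ioo 0 R] (0:ℝ)) (𝓝 a) :=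
      h.mono_left (nhdsWithin_mono _ Set.Ioo_subset_Ico_self)
    rwa [nhdsWithin_Ioo_eq_nhdsGT hR] at h2
  have hH0 : Tendsto H (𝓝[>] (0:ℝ)) (𝓝 0) := by
    have t1 : Tendsto (fun r => Real.exp (-2 * G (φ r))) (𝓝[>] (0:ℝ))
        (𝓝 (Real.exp (-2 * G a))) :=
      (Real.continuous_exp.tendsto _).comp (((hGc.tendsto a).comp hφ0).const_mul (-2))
    have t2 : Tendsto (fun r => ψ r ^ 2) (𝓝[>] (0:ℝ)) (𝓝 (0 ^ 2)) := hd0.pow 2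
    have t3 : Tendsto (fun r => F (φ r)) (𝓝[>] (0:ℝ)) (𝓝 (F a)) := (hFc.tendsto a).comp hφ0
    have hFa : F a = 0 := intervalIntegral.integral_same
    have hcomb := (t1.mul t2).sub (t3.const_mul 2)
    convert hcomb using 2
    rw [hFa]
    norm_num
  have hHle : ∀ r ∈ Set.Ioo (0:ℝ) R, H r ≤ 0 := by
    intro r hr
    refine ge_of_tendsto hH0 ?_
    filter_upwards [Ioo_mem_nhdsGT_of_mem (Set.left_mem_Ico.mpr hr.1)] with u hu
    exact hHanti ⟨hu.1, hu.2.trans hr.2⟩ hr hu.2.le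
  -- conclusion
  intro r hr
  rcases eq_or_lt_of_le hr.1 with hr0 | hrpos
  · -- r = 0
    subst hr0
    rw [hφa, intervalIntegral.integral_same, mul_zero,
      Real.zero_rpow (by norm_num : (1:ℝ)/2 ≠ 0)]
    by_cases hdf : DifferentiableAt ℝ φ 0
    · have hslope := hasDerivAt_iff_tendsto_slope.mp hdf.hasDerivAt
      have hslope' : Tendsto (slope φ 0) (𝓝[>] (0:ℝ)) (𝓝 (ψ 0)) :=
        hslope.mono_left (nhdsWithin_mono _ fun x hx => ne_of_gt hx)
      have key : ∀ ε : ℝ, 0 < ε → ψ 0 ≤ ε := by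
        intro ε hε
        have hev2 : ∀ᶠ u in 𝓝[>] (0:ℝ), ψ u < ε := hd0.eventually (eventually_lt_nhds hε)
        rw [eventually_nhdsWithin_iff] at hev2
        rcases Metric.eventually_nhds_iff.mp hev2 with ⟨δ, hδpos, hδ⟩
        refine le_of_tendsto hslope' ?_
        filter_upwards [Ioo_mem_nhdsGT_of_mem
          (Set.left_mem_Ico.mpr (lt_min hδpos hR))] with h hh
        have hh0 : 0 < h := hh.1
        have hhδ : h < δ := lt_of_lt_of_le hh.2 (min_le_left _ _)
        have hhR : h < R := lt_of_lt_of_le hh.2 (min_le_right _ _)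
        have hcont2 : ContinuousOn φ (Set.Icc 0 h) :=
          hφc.mono fun x hx => ⟨hx.1, lt_of_le_of_lt hx.2 hhR⟩
        have hdiff2 : DifferentiableOn ℝ φ (Set.Ioo 0 h) :=
          (hφ2.differentiableOn (by norm_num)).mono (Set.Ioo_subset_Ioo le_rfl hhR.le)
        obtain ⟨ξ, hξ, hξeq⟩ := exists_deriv_eq_slope φ hh0 hcont2 hdiff2
        have hξδ : dist ξ 0 < δ := by
          rw [Real.dist_eq, sub_zero, abs_of_pos hξ.1]
          linarith [hξ.2]
        have hψξ : ψ ξ < ε := hδ hξδ hξ.1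
        rw [slope_def_field]
        calc (φ h - φ 0) / (h - 0) = deriv φ ξ := hξeq.symm
          _ ≤ ε := hψξ.le
      by_contra hlt
      push_neg at hlt
      linarith [key (ψ 0 / 2) (by linarith)]
    · exact le_of_eq (deriv_zero_of_not_differentiableAt hdf)
  · have hr' : r ∈ Set.Ioo 0 R := ⟨hrpos, hr.2⟩
    have hHr := hHle r hr'
    have hψr := hψnn r hr'
    have hGsub : ∀ u : ℝ, (∫ s in u..φ r, gp s) = G (φ r) - G u := fun u =>
      (intervalIntegral.integral_interval_sub_left (hgpc.intervalIntegrable a (φ r))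
        (hgpc.intervalIntegrable a u)).symm
    have hIeq : (∫ t in a..φ r, Real.exp (2 * ∫ s in t..φ r, gp s) * f t) =
        Real.exp (2 * G (φ r)) * F (φ r) := by
      rw [show F (φ r) = ∫ s in a..φ r, Real.exp (-2 * G s) * f s from rfl,
        ← intervalIntegral.integral_const_mul]
      apply intervalIntegral.integral_congr
      intro u hu
      show Real.exp (2 * ∫ s in u..φ r, gp s) * f u =
        Real.exp (2 * G (φ r)) * (Real.exp (-2 * G u) * f u)
      rw [hGsub u, show (2:ℝ) * (G (φ r) - G u) = 2 * G (φ r) + -2 * G u by ring,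
        Real.exp_add, mul_assoc]
    have hHr' : Real.exp (-2 * G (φ r)) * ψ r ^ 2 - 2 * F (φ r) ≤ 0 := hHr
    have hexp1 : Real.exp (2 * G (φ r)) * Real.exp (-2 * G (φ r)) = 1 := by
      rw [← Real.exp_add]
      norm_num
    have hFle : ψ r ^ 2 ≤ 2 * (Real.exp (2 * G (φ r)) * F (φ r)) := by
      have h1 := mul_le_mul_of_nonneg_left (by linarith :
        Real.exp (-2 * G (φ r)) * ψ r ^ 2 ≤ 2 * F (φ r)) (Real.exp_pos (2 * G (φ r))).le
      calc ψ r ^ 2 = Real.exp (2 * G (φ r)) * Real.exp (-2 * G (φ r)) * ψ r ^ 2 := by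
            rw [hexp1]; ring
        _ = Real.exp (2 * G (φ r)) * (Real.exp (-2 * G (φ r)) * ψ r ^ 2) := by ring
        _ ≤ Real.exp (2 * G (φ r)) * (2 * F (φ r)) := h1
        _ = 2 * (Real.exp (2 * G (φ r)) * F (φ r)) := by ring
    rw [hIeq]
    calc ψ r = Real.sqrt (ψ r ^ 2) := (Real.sqrt_sq hψr).symm
      _ ≤ Real.sqrt (2 * (Real.exp (2 * G (φ r)) * F (φ r))) := Real.sqrt_le_sqrt hFle
      _ = _ := Real.sqrt_eq_rpow _
end

section
/- Let 0 < q < 2, c ≥ 1, f, g continuous nondecreasing with f positive, and suppose g(a) ≥ 0. If φ is a C² solution of φ'' + ((c-1)/r)φ' = f(φ) + g(φ)|φ'|^q on [0,R) with φ(0)=a, φ'(0)=0, then for all r ∈ [0,R): φ'(r) ≥ (1/2) ((2-q)/c)^{1/(2-q)} [ (∫_a^{φ(r)} f(t) dt)^{1/2} + (∫_a^{φ(r)} g⁺(t) dt)^{1/(2-q)} ]. -/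
open Real MeasureTheory Set Filter

private lemma aux_mono {u u' : ℝ → ℝ} {b ℓ : ℝ} (hb : 0 < b)
    (hderiv : ∀ x ∈ Set.Ioc 0 b, HasDerivAt u (u' x) x)
    (hpos : ∀ x ∈ Set.Ioc 0 b, 0 ≤ u' x)
    (hlim : Filter.Tendsto u (nhdsWithin 0 (Set.Ioi 0)) (nhds ℓ)) : ℓ ≤ u b := by
  have hmono : ∀ ε ∈ Set.Ioc 0 b, u ε ≤ u b := by
    intro ε hε
    have hsub : Set.Icc ε b ⊆ Set.Ioc 0 b := fun z hz => ⟨lt_of_lt_of_le hε.1 hz.1, hz.2⟩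
    have hm : MonotoneOn u (Set.Icc ε b) := by
      apply monotoneOn_of_deriv_nonneg (convex_Icc ε b)
      · intro x hx; exact (hderiv x (hsub hx)).continuousAt.continuousWithinAt
      · intro x hx
        rw [interior_Icc] at hx
        exact (hderiv x (hsub (Set.Ioo_subset_Icc_self hx))).differentiableAt.differentiableWithinAt
      · intro x hx
        rw [interior_Icc] at hx
        rw [(hderiv x (hsub (Set.Ioo_subset_Icc_self hx))).deriv]
        exact hpos x (hsub (Set.Ioo_subset_Icc_self hx))
    exact hm ⟨le_refl ε, hε.2⟩ ⟨hε.2, le_refl b⟩ hε.2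
  apply le_of_tendsto hlim
  filter_upwards [Ioc_mem_nhdsGT_of_mem (Set.mem_Ico.mpr ⟨le_refl (0:ℝ), hb⟩)] with ε hε
  exact hmono ε hε

private lemma aux_exp {c x : ℝ} (hc : 1 ≤ c) (hx0 : 0 < x) (hx2 : x < 2) :
    (x / c) ^ (1 / x) ≤ (2 / c) ^ ((1 : ℝ) / 2) := by
  have hc0 : (0:ℝ) < c := lt_of_lt_of_le one_pos hc
  have hxc : 0 < x / c := div_pos hx0 hc0
  have h2c : 0 < 2 / c := div_pos two_pos hc0
  rw [Real.rpow_def_of_pos hxc, Real.rpow_def_of_pos h2c, Real.exp_le_exp]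
  have hlogx : Real.log x ≤ x / 2 - 1 + Real.log 2 := by
    have h1 : Real.log (x / 2) ≤ x / 2 - 1 := Real.log_le_sub_one_of_pos (by linarith)
    have h2 : Real.log (x / 2) = Real.log x - Real.log 2 := Real.log_div hx0.ne' two_ne_zero
    linarith
  have hlogc : 0 ≤ Real.log c := Real.log_nonneg hc
  have hlog2 : Real.log 2 ≤ 1 := by
    have := Real.log_le_sub_one_of_pos (by norm_num : (0:ℝ) < 2); linarith
  have e1 : Real.log (x / c) = Real.log x - Real.log c := Real.log_div hx0.ne' hc0.ne'
  have e2 : Real.log (2 / c) = Real.log 2 - Real.log c := Real.log_div two_ne_zero hc0.ne'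
  rw [e1, e2, mul_one_div, mul_one_div, div_le_div_iff₀ hx0 two_pos]
  have t1 : 0 ≤ (2 - x) * (1 - Real.log 2) := mul_nonneg (by linarith) (by linarith)
  have t2 : 0 ≤ (2 - x) * Real.log c := mul_nonneg (by linarith) hlogc
  nlinarith [t1, t2, hlogx]

set_option maxHeartbeats 1000000 in
theorem stmt6 (c q R a : ℝ) (hc : 1 ≤ c) (hq0 : 0 < q) (hq2 : q < 2) (hR : 0 < R)
    (f g φ : ℝ → ℝ)
    (hf : Continuous f) (hfpos : ∀ t, 0 < f t) (hfmono : Monotone f)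
    (hg : Continuous g) (hgmono : Monotone g) (hga : 0 ≤ g a)
    (hφc : ContinuousOn φ (Set.Ico 0 R))
    (hφ2 : ContDiffOn ℝ 2 φ (Set.Ioo 0 R))
    (hφa : φ 0 = a)
    (hd0 : Filter.Tendsto (deriv φ) (nhdsWithin 0 (Set.Ioi 0)) (nhds 0))
    (hd2 : ∃ L, Filter.Tendsto (deriv (deriv φ)) (nhdsWithin 0 (Set.Ioi 0)) (nhds L))
    (hode : ∀ r ∈ Set.Ioo 0 R,
      deriv (deriv φ) r + (c - 1) / r * deriv φ r = f (φ r) + g (φ r) * |deriv φ r| ^ q) :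
    ∀ r ∈ Set.Ico 0 R,
      (1 / 2) * ((2 - q) / c) ^ (1 / (2 - q)) *
          ((∫ t in a..φ r, f t) ^ ((1 : ℝ) / 2) +
            (∫ t in a..φ r, max (g t) 0) ^ (1 / (2 - q)))
        ≤ deriv φ r := by
  have hc0 : (0:ℝ) < c := lt_of_lt_of_le one_pos hc
  -- basic differentiability facts
  have hder1 : ∀ x ∈ Set.Ioo 0 R, HasDerivAt φ (deriv φ x) x := by
    intro x hx
    exact ((hφ2.differentiableOn (by norm_num)).differentiableAt
      (isOpen_Ioo.mem_nhds hx)).hasDerivAt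
  have hcd1 : ContDiffOn ℝ 1 (deriv φ) (Set.Ioo 0 R) :=
    hφ2.deriv_of_isOpen (m := 1) isOpen_Ioo (by norm_num)
  have hder2 : ∀ x ∈ Set.Ioo 0 R, HasDerivAt (deriv φ) (deriv (deriv φ) x) x := by
    intro x hx
    exact ((hcd1.differentiableOn (by norm_num)).differentiableAt
      (isOpen_Ioo.mem_nhds hx)).hasDerivAt
  have hcontw : ContinuousOn (deriv (deriv φ)) (Set.Ioo 0 R) :=
    (hcd1.deriv_of_isOpen (m := 0) isOpen_Ioo (by norm_num)).continuousOn
  -- φ tends to a from the right at 0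
  have hφ0 : Filter.Tendsto φ (nhdsWithin 0 (Set.Ioi 0)) (nhds a) := by
    have h1 : Filter.Tendsto φ (nhdsWithin 0 (Set.Ico 0 R)) (nhds a) := by
      have h2 := hφc 0 ⟨le_refl 0, hR⟩
      rw [ContinuousWithinAt, hφa] at h2; exact h2
    rw [← nhdsWithin_Ioo_eq_nhdsGT hR]
    exact h1.mono_left (nhdsWithin_mono 0 Set.Ioo_subset_Ico_self)
  have hIoo : Set.Ioo (0:ℝ) R ∈ nhdsWithin 0 (Set.Ioi 0) :=
    Ioo_mem_nhdsGT_of_mem ⟨le_refl 0, hR⟩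
  -- limit of second derivative
  obtain ⟨L, hL⟩ := hd2
  have hslope : Filter.Tendsto (fun x => deriv φ x / x) (nhdsWithin 0 (Set.Ioi 0)) (nhds L) := by
    apply HasDerivAt.lhopital_zero_nhdsGT (f' := deriv (deriv φ)) (g' := fun _ => (1:ℝ))
    · filter_upwards [hIoo] with x hx using hder2 x hx
    · filter_upwards [hIoo] with x hx using hasDerivAt_id x
    · filter_upwards [hIoo] with x hx using one_ne_zero
    · exact hd0
    · exact tendsto_id.mono_left nhdsWithin_le_nhds
    · simpa using hL
  have habsq : Filter.Tendsto (fun x => |deriv φ x| ^ q) (nhdsWithin 0 (Set.Ioi 0)) (nhds 0) := by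
    have h1 : Filter.Tendsto (fun x => |deriv φ x|) (nhdsWithin 0 (Set.Ioi 0)) (nhds 0) := by
      simpa using hd0.abs
    have h2 := (Real.continuousAt_rpow_const 0 q (Or.inr hq0.le)).tendsto
    have h3 := h2.comp h1
    simpa [Function.comp_def, Real.zero_rpow hq0.ne'] using h3
  have hW2 : Filter.Tendsto (deriv (deriv φ)) (nhdsWithin 0 (Set.Ioi 0))
      (nhds (f a + g a * 0 - (c - 1) * L)) := by
    have hfa : Filter.Tendsto (fun x => f (φ x)) (nhdsWithin 0 (Set.Ioi 0)) (nhds (f a)) :=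
      (hf.tendsto a).comp hφ0
    have hga' : Filter.Tendsto (fun x => g (φ x)) (nhdsWithin 0 (Set.Ioi 0)) (nhds (g a)) :=
      (hg.tendsto a).comp hφ0
    have hall := (hfa.add (hga'.mul habsq)).sub (hslope.const_mul (c - 1))
    apply hall.congr'
    filter_upwards [hIoo] with x hx
    have h := hode x hx
    have h2 : (c - 1) / x * deriv φ x = (c - 1) * (deriv φ x / x) := by ring
    linarith [h, h2]
  have hLeq := tendsto_nhds_unique hL hW2
  have hLval : L = f a / c := by
    field_simp
    linarith [hLeq]
  have hLpos : 0 < L := by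
    rw [hLval]; exact div_pos (hfpos a) hc0
  -- eventual positivity of second derivative near 0
  obtain ⟨δ, hδpos, hδsub⟩ :
      ∃ δ, 0 < δ ∧ ∀ x, 0 < x → x < δ → x < R ∧ 0 < deriv (deriv φ) x := by
    have hev : ∀ᶠ x in nhdsWithin 0 (Set.Ioi 0),
        0 < deriv (deriv φ) x ∧ x ∈ Set.Ioo 0 R :=
      (hL.eventually (eventually_gt_nhds hLpos)).and hIoo
    obtain ⟨δ, hδmem, hsub⟩ := mem_nhdsGT_iff_exists_Ioo_subset.mp hev
    exact ⟨δ, hδmem, fun x h1 h2 => ⟨(hsub ⟨h1, h2⟩).2.2, (hsub ⟨h1, h2⟩).1⟩⟩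
  -- main step
  have main_step : ∀ b ∈ Set.Ioo 0 R, (∀ s ∈ Set.Ioo 0 b, 0 < deriv (deriv φ) s) →
      0 < deriv φ b ∧ a ≤ φ b ∧ 0 ≤ g (φ b) ∧
        (f (φ b) + g (φ b) * (deriv φ b) ^ q) / c ≤ deriv (deriv φ) b := by
    intro b hb hwpos
    obtain ⟨hb0, hbR⟩ := hb
    have hsubR : Set.Ioc 0 b ⊆ Set.Ioo 0 R := fun z hz => ⟨hz.1, lt_of_le_of_lt hz.2 hbR⟩
    have hu_mono : ∀ x ∈ Set.Ioc 0 b, ∀ y ∈ Set.Ioc 0 b, x ≤ y → deriv φ x ≤ deriv φ y := by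
      intro x hx y hy hxy
      have hIccsub : Set.Icc x y ⊆ Set.Ioo 0 R := fun z hz =>
        ⟨lt_of_lt_of_le hx.1 hz.1, lt_of_le_of_lt (hz.2.trans hy.2) hbR⟩
      have hm : MonotoneOn (deriv φ) (Set.Icc x y) := by
        apply monotoneOn_of_deriv_nonneg (convex_Icc x y)
        · intro z hz; exact (hder2 z (hIccsub hz)).continuousAt.continuousWithinAt
        · intro z hz; rw [interior_Icc] at hz
          exact (hder2 z (hIccsub (Set.Ioo_subset_Icc_self hz))).differentiableAt.differentiableWithinAt
        · intro z hz; rw [interior_Icc] at hz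
          exact (hwpos z ⟨hx.1.trans hz.1, lt_of_lt_of_le hz.2 hy.2⟩).le
      exact hm (Set.left_mem_Icc.mpr hxy) (Set.right_mem_Icc.mpr hxy) hxy
    have hu_nonneg' : ∀ x ∈ Set.Ioo 0 b, 0 ≤ deriv φ x := by
      intro x hx
      exact aux_mono hx.1
        (fun z hz => hder2 z (hsubR ⟨hz.1, hz.2.trans hx.2.le⟩))
        (fun z hz => (hwpos z ⟨hz.1, lt_of_le_of_lt hz.2 hx.2⟩).le) hd0
    have hu_nonneg : ∀ x ∈ Set.Ioc 0 b, 0 ≤ deriv φ x := by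
      intro x hx
      rcases lt_or_eq_of_le hx.2 with h | h
      · exact hu_nonneg' x ⟨hx.1, h⟩
      · have hx0 := hx.1
        calc (0:ℝ) ≤ deriv φ (x/2) := hu_nonneg' _ ⟨by linarith, by linarith [h ▸ hx.2, hx0]⟩
          _ ≤ deriv φ x := hu_mono _ ⟨by linarith, by linarith⟩ _ ⟨hx0, hx.2⟩ (by linarith)
    have hu_posb : 0 < deriv φ b := by
      have hsm : StrictMonoOn (deriv φ) (Set.Icc (b/2) b) := by
        apply strictMonoOn_of_deriv_pos (convex_Icc _ _)
        · intro z hz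
          exact (hder2 z (hsubR ⟨by linarith [hz.1], hz.2⟩)).continuousAt.continuousWithinAt
        · intro z hz; rw [interior_Icc] at hz
          exact hwpos z ⟨by linarith [hz.1], hz.2⟩
      have h1 := hsm (Set.left_mem_Icc.mpr (by linarith)) (Set.right_mem_Icc.mpr (by linarith))
        (by linarith)
      have h2 := hu_nonneg' (b/2) ⟨by linarith, by linarith⟩
      linarith
    have hφmono : MonotoneOn φ (Set.Icc 0 b) := by
      apply monotoneOn_of_deriv_nonneg (convex_Icc 0 b)
      · exact hφc.mono (fun z hz => ⟨hz.1, lt_of_le_of_lt hz.2 hbR⟩)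
      · intro z hz; rw [interior_Icc] at hz
        exact (hder1 z ⟨hz.1, hz.2.trans hbR⟩).differentiableAt.differentiableWithinAt
      · intro z hz; rw [interior_Icc] at hz
        exact hu_nonneg' z hz
    have hφge : ∀ s ∈ Set.Icc 0 b, a ≤ φ s := by
      intro s hs
      have := hφmono ⟨le_refl 0, hb0.le⟩ hs hs.1
      rwa [hφa] at this
    have hgge : ∀ s ∈ Set.Icc 0 b, 0 ≤ g (φ s) := fun s hs => le_trans hga (hgmono (hφge s hs))
    have hode' : ∀ s ∈ Set.Ioc 0 b,
        deriv (deriv φ) s + (c - 1) / s * deriv φ s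
          = f (φ s) + g (φ s) * (deriv φ s) ^ q := by
      intro s hs
      have h := hode s (hsubR hs)
      rwa [abs_of_nonneg (hu_nonneg s hs)] at h
    have hmono_h : ∀ x ∈ Set.Ioc 0 b, ∀ y ∈ Set.Ioc 0 b, x ≤ y →
        f (φ x) + g (φ x) * (deriv φ x) ^ q ≤ f (φ y) + g (φ y) * (deriv φ y) ^ q := by
      intro x hx y hy hxy
      have hφxy : φ x ≤ φ y := hφmono ⟨hx.1.le, hx.2⟩ ⟨hy.1.le, hy.2⟩ hxy
      have h1 : f (φ x) ≤ f (φ y) := hfmono hφxy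
      have h2 : (deriv φ x) ^ q ≤ (deriv φ y) ^ q :=
        Real.rpow_le_rpow (hu_nonneg x hx) (hu_mono x hx y hy hxy) hq0.le
      have h3 : g (φ x) ≤ g (φ y) := hgmono hφxy
      have h4 : 0 ≤ g (φ x) := hgge x ⟨hx.1.le, hx.2⟩
      have h5 : 0 ≤ (deriv φ x) ^ q := Real.rpow_nonneg (hu_nonneg x hx) q
      nlinarith
    set hbv := f (φ b) + g (φ b) * (deriv φ b) ^ q with hbv_def
    have hψ : (0:ℝ) ≤ b ^ c * hbv / c - b ^ (c - 1) * deriv φ b := by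
      refine aux_mono (u := fun s => s ^ c * hbv / c - s ^ (c - 1) * deriv φ s)
        (u' := fun s => s ^ (c - 1) * (hbv - (f (φ s) + g (φ s) * (deriv φ s) ^ q)))
        hb0 ?_ ?_ ?_
      · intro s hs
        have hs0 : (0:ℝ) < s := hs.1
        have h1 : HasDerivAt (fun t : ℝ => t ^ c) (c * s ^ (c - 1)) s :=
          Real.hasDerivAt_rpow_const (Or.inl hs0.ne')
        have h2 : HasDerivAt (fun t : ℝ => t ^ (c - 1)) ((c - 1) * s ^ (c - 1 - 1)) s :=
          Real.hasDerivAt_rpow_const (Or.inl hs0.ne')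
        have h3 := hder2 s (hsubR hs)
        have H := ((h1.mul_const hbv).div_const c).sub (h2.mul h3)
        refine H.congr_deriv (Eq.symm ?_)
        have e1 : s ^ (c - 1 - 1) = s ^ (c - 1) / s := Real.rpow_sub_one hs0.ne' (c - 1)
        have e2 := hode' s hs
        show s ^ (c - 1) * (hbv - (f (φ s) + g (φ s) * deriv φ s ^ q))
          = c * s ^ (c - 1) * hbv / c -
            ((c - 1) * s ^ (c - 1 - 1) * deriv φ s + s ^ (c - 1) * deriv (deriv φ) s)
        rw [← e2, e1]
        field_simp
        ring
      · intro s hs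
        have hp : (0:ℝ) ≤ s ^ (c - 1) := Real.rpow_nonneg hs.1.le _
        exact mul_nonneg hp (sub_nonneg.mpr (hmono_h s hs b ⟨hb0, le_refl b⟩ hs.2))
      · have hA : Filter.Tendsto (fun s : ℝ => s ^ c * hbv / c)
            (nhdsWithin 0 (Set.Ioi 0)) (nhds 0) := by
          have h1 := (Real.continuousAt_rpow_const 0 c (Or.inr hc0.le)).tendsto
          have h2 : Filter.Tendsto (fun s : ℝ => s ^ c) (nhdsWithin 0 (Set.Ioi 0)) (nhds 0) := by
            have := h1.mono_left (nhdsWithin_le_nhds (s := Set.Ioi (0:ℝ)))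
            simpa [Real.zero_rpow hc0.ne'] using this
          simpa using (h2.mul_const hbv).div_const c
        have hB : Filter.Tendsto (fun s : ℝ => s ^ (c - 1) * deriv φ s)
            (nhdsWithin 0 (Set.Ioi 0)) (nhds 0) := by
          apply squeeze_zero_norm' (a := fun s => b ^ (c - 1) * |deriv φ s|)
          · filter_upwards [Ioc_mem_nhdsGT_of_mem (Set.mem_Ico.mpr ⟨le_refl (0:ℝ), hb0⟩)] with s hs
            have h1 : s ^ (c - 1) ≤ b ^ (c - 1) := Real.rpow_le_rpow hs.1.le hs.2 (by linarith)
            have h2 : (0:ℝ) ≤ s ^ (c - 1) := Real.rpow_nonneg hs.1.le _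
            rw [Real.norm_eq_abs, abs_mul, abs_of_nonneg h2]
            exact mul_le_mul_of_nonneg_right h1 (abs_nonneg _)
          · have h3 := (hd0.abs).const_mul (b ^ (c - 1))
            simpa using h3
        have := hA.sub hB
        simpa using this
    have hub_le : deriv φ b ≤ b * hbv / c := by
      have hP : (0:ℝ) < b ^ (c - 1) := Real.rpow_pos_of_pos hb0 _
      have hbc : b ^ c = b ^ (c - 1) * b := by
        rw [← Real.rpow_add_one hb0.ne' (c - 1)]; norm_num
      rw [hbc] at hψ
      have h2 : b ^ (c - 1) * deriv φ b ≤ b ^ (c - 1) * (b * hbv / c) := by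
        have h2' : b ^ (c - 1) * b * hbv / c = b ^ (c - 1) * (b * hbv / c) := by ring
        linarith [hψ, h2']
      exact le_of_mul_le_mul_left h2 hP
    refine ⟨hu_posb, hφge b (Set.right_mem_Icc.mpr hb0.le),
      hgge b (Set.right_mem_Icc.mpr hb0.le), ?_⟩
    have he := hode' b ⟨hb0, le_refl b⟩
    have h1 : (c - 1) / b * deriv φ b ≤ (c - 1) * hbv / c := by
      have h2 : (c - 1) / b * deriv φ b ≤ (c - 1) / b * (b * hbv / c) :=
        mul_le_mul_of_nonneg_left hub_le (div_nonneg (by linarith) hb0.le)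
      have h3 : (c - 1) / b * (b * hbv / c) = (c - 1) * hbv / c := by
        field_simp
      linarith
    have h4 : hbv - (c - 1) * hbv / c = hbv / c := by field_simp; ring
    linarith [he, h1, h4]
  -- positivity of the second derivative everywhere
  have hwpos_all : ∀ r ∈ Set.Ioo 0 R, 0 < deriv (deriv φ) r := by
    intro r hr
    by_contra hwr
    push_neg at hwr
    have hδr : δ ≤ r := by
      by_contra hlt
      push_neg at hlt
      exact absurd (hδsub r hr.1 hlt).2 (not_lt.mpr hwr)
    have hIccsub : Set.Icc δ r ⊆ Set.Ioo 0 R := fun z hz =>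
      ⟨lt_of_lt_of_le hδpos hz.1, lt_of_le_of_lt hz.2 hr.2⟩
    have hKc : IsClosed {s ∈ Set.Icc δ r | deriv (deriv φ) s ≤ 0} := by
      have h1 := (hcontw.mono hIccsub).preimage_isClosed_of_isClosed isClosed_Icc
        (isClosed_Iic (a := (0:ℝ)))
      convert h1 using 1
      rfl
    have hKne : Set.Nonempty {s ∈ Set.Icc δ r | deriv (deriv φ) s ≤ 0} :=
      ⟨r, Set.right_mem_Icc.mpr hδr, hwr⟩
    have hKbdd : BddBelow {s ∈ Set.Icc δ r | deriv (deriv φ) s ≤ 0} :=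
      ⟨δ, fun s hs => hs.1.1⟩
    set r₀ := sInf {s ∈ Set.Icc δ r | deriv (deriv φ) s ≤ 0} with hr₀def
    have hr₀K : r₀ ∈ {s ∈ Set.Icc δ r | deriv (deriv φ) s ≤ 0} := hKc.csInf_mem hKne hKbdd
    have hr₀Ioo : r₀ ∈ Set.Ioo 0 R := hIccsub hr₀K.1
    have hwbelow : ∀ s ∈ Set.Ioo 0 r₀, 0 < deriv (deriv φ) s := by
      intro s hs
      rcases lt_or_ge s δ with h | h
      · exact (hδsub s hs.1 h).2
      · by_contra hns
        push_neg at hns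
        have hsK : s ∈ {s ∈ Set.Icc δ r | deriv (deriv φ) s ≤ 0} :=
          ⟨⟨h, hs.2.le.trans hr₀K.1.2⟩, hns⟩
        exact absurd (csInf_le hKbdd hsK) (not_le.mpr hs.2)
    obtain ⟨hu0, _hφb, hg0, hwge⟩ := main_step r₀ hr₀Ioo hwbelow
    have hposnum : 0 < (f (φ r₀) + g (φ r₀) * (deriv φ r₀) ^ q) / c :=
      div_pos (by nlinarith [hfpos (φ r₀), mul_nonneg hg0 (Real.rpow_nonneg hu0.le q)]) hc0
    linarith [hr₀K.2, hwge]
  have hmain : ∀ r ∈ Set.Ioo 0 R, 0 < deriv φ r ∧ a ≤ φ r ∧ 0 ≤ g (φ r) ∧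
      (f (φ r) + g (φ r) * (deriv φ r) ^ q) / c ≤ deriv (deriv φ) r := by
    intro r hr
    exact main_step r hr (fun s hs => hwpos_all s ⟨hs.1, hs.2.trans hr.2⟩)
  -- energy estimates
  have hE1 : ∀ r ∈ Set.Ioo 0 R,
      2 / c * (∫ t in a..φ r, f t) ≤ deriv φ r * deriv φ r := by
    intro r hr
    have key : (0:ℝ) ≤ deriv φ r * deriv φ r / 2 - 1 / c * ∫ t in a..φ r, f t := by
      refine aux_mono (u := fun s => deriv φ s * deriv φ s / 2 - 1 / c * ∫ t in a..φ s, f t)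
        (u' := fun s => (deriv (deriv φ) s * deriv φ s + deriv φ s * deriv (deriv φ) s) / 2
          - 1 / c * (f (φ s) * deriv φ s)) hr.1 ?_ ?_ ?_
      · intro s hs
        have hsIoo : s ∈ Set.Ioo 0 R := ⟨hs.1, lt_of_le_of_lt hs.2 hr.2⟩
        have hF : HasDerivAt (fun x => ∫ t in a..x, f t) (f (φ s)) (φ s) :=
          intervalIntegral.integral_hasDerivAt_right (hf.intervalIntegrable a (φ s))
            (hf.stronglyMeasurable.stronglyMeasurableAtFilter) hf.continuousAt
        have hFφ := hF.comp s (hder1 s hsIoo)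
        have h1 := (hder2 s hsIoo).mul (hder2 s hsIoo)
        exact (h1.div_const 2).sub (hFφ.const_mul (1 / c))
      · intro s hs
        have hsIoo : s ∈ Set.Ioo 0 R := ⟨hs.1, lt_of_le_of_lt hs.2 hr.2⟩
        obtain ⟨hu0, hφb, hg0, hwge⟩ := hmain s hsIoo
        show (0:ℝ) ≤ (deriv (deriv φ) s * deriv φ s + deriv φ s * deriv (deriv φ) s) / 2
          - 1 / c * (f (φ s) * deriv φ s)
        have h5 : 0 ≤ g (φ s) * (deriv φ s) ^ q :=
          mul_nonneg hg0 (Real.rpow_nonneg hu0.le q)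
        have h6 : f (φ s) / c ≤ deriv (deriv φ) s :=
          le_trans ((div_le_div_iff_of_pos_right hc0).mpr (by linarith)) hwge
        have h7 := mul_le_mul_of_nonneg_left h6 hu0.le
        have h8 : deriv φ s * (f (φ s) / c) = 1 / c * (f (φ s) * deriv φ s) := by ring
        nlinarith [h7, h8]
      · have h1 : Filter.Tendsto (fun s => deriv φ s * deriv φ s / 2)
            (nhdsWithin 0 (Set.Ioi 0)) (nhds 0) := by
          have := (hd0.mul hd0).div_const 2; simpa using this
        have hFc : Filter.Tendsto (fun s => ∫ t in a..φ s, f t)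
            (nhdsWithin 0 (Set.Ioi 0)) (nhds 0) := by
          have hF : HasDerivAt (fun x => ∫ t in a..x, f t) (f a) a :=
            intervalIntegral.integral_hasDerivAt_right (hf.intervalIntegrable a a)
              (hf.stronglyMeasurable.stronglyMeasurableAtFilter) hf.continuousAt
          have h2 := hF.continuousAt.tendsto.comp hφ0
          simpa [Function.comp_def, intervalIntegral.integral_same] using h2
        have h3 := h1.sub (hFc.const_mul (1 / c))
        simpa using h3
    have h9 : 2 / c * (∫ t in a..φ r, f t) = 2 * (1 / c * ∫ t in a..φ r, f t) := by ring
    linarith [key, h9]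
  have hE2 : ∀ r ∈ Set.Ioo 0 R,
      (2 - q) / c * (∫ t in a..φ r, max (g t) 0) ≤ (deriv φ r) ^ (2 - q) := by
    intro r hr
    have hq2' : (0:ℝ) < 2 - q := by linarith
    have hgc : Continuous (fun t => max (g t) 0) := hg.max continuous_const
    have key : (0:ℝ) ≤ (deriv φ r) ^ (2 - q) / (2 - q)
        - 1 / c * ∫ t in a..φ r, max (g t) 0 := by
      refine aux_mono
        (u := fun s => (deriv φ s) ^ (2 - q) / (2 - q) - 1 / c * ∫ t in a..φ s, max (g t) 0)
        (u' := fun s => deriv (deriv φ) s * (2 - q) * (deriv φ s) ^ (2 - q - 1) / (2 - q)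
          - 1 / c * (max (g (φ s)) 0 * deriv φ s)) hr.1 ?_ ?_ ?_
      · intro s hs
        have hsIoo : s ∈ Set.Ioo 0 R := ⟨hs.1, lt_of_le_of_lt hs.2 hr.2⟩
        obtain ⟨hu0, -, -, -⟩ := hmain s hsIoo
        have hrp : HasDerivAt (fun x => (deriv φ x) ^ (2 - q))
            (deriv (deriv φ) s * (2 - q) * (deriv φ s) ^ (2 - q - 1)) s :=
          (hder2 s hsIoo).rpow_const (Or.inl hu0.ne')
        have hG : HasDerivAt (fun x => ∫ t in a..x, max (g t) 0) (max (g (φ s)) 0) (φ s) :=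
          intervalIntegral.integral_hasDerivAt_right (hgc.intervalIntegrable a (φ s))
            (hgc.stronglyMeasurable.stronglyMeasurableAtFilter) hgc.continuousAt
        exact (hrp.div_const (2 - q)).sub ((hG.comp s (hder1 s hsIoo)).const_mul (1 / c))
      · intro s hs
        have hsIoo : s ∈ Set.Ioo 0 R := ⟨hs.1, lt_of_le_of_lt hs.2 hr.2⟩
        obtain ⟨hu0, hφb, hg0, hwge⟩ := hmain s hsIoo
        show (0:ℝ) ≤ deriv (deriv φ) s * (2 - q) * (deriv φ s) ^ (2 - q - 1) / (2 - q)
          - 1 / c * (max (g (φ s)) 0 * deriv φ s)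
        have hgeq : max (g (φ s)) 0 = g (φ s) := max_eq_left hg0
        have hP : (0:ℝ) < (deriv φ s) ^ (2 - q - 1) := Real.rpow_pos_of_pos hu0 _
        have hexp : q + (2 - q - 1) = 1 := by ring
        have he : (deriv φ s) ^ q * (deriv φ s) ^ (2 - q - 1) = deriv φ s := by
          rw [← Real.rpow_add hu0, hexp, Real.rpow_one]
        have hwge2 : g (φ s) * (deriv φ s) ^ q / c ≤ deriv (deriv φ) s := by
          have h9 : g (φ s) * (deriv φ s) ^ q / c
              ≤ (f (φ s) + g (φ s) * (deriv φ s) ^ q) / c :=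
            (div_le_div_iff_of_pos_right hc0).mpr (by linarith [hfpos (φ s)])
          linarith [hwge]
        have h11 := mul_le_mul_of_nonneg_right hwge2 hP.le
        have h12 : g (φ s) * (deriv φ s) ^ q / c * (deriv φ s) ^ (2 - q - 1)
            = 1 / c * (g (φ s) * deriv φ s) := by
          calc g (φ s) * (deriv φ s) ^ q / c * (deriv φ s) ^ (2 - q - 1)
              = g (φ s) * ((deriv φ s) ^ q * (deriv φ s) ^ (2 - q - 1)) / c := by ring
            _ = g (φ s) * deriv φ s / c := by rw [he]
            _ = 1 / c * (g (φ s) * deriv φ s) := by ring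
        have h13 : deriv (deriv φ) s * (2 - q) * (deriv φ s) ^ (2 - q - 1) / (2 - q)
            = deriv (deriv φ) s * (deriv φ s) ^ (2 - q - 1) := by
          field_simp
        rw [hgeq]
        linarith [h11, h12, h13]
      · have h1 : Filter.Tendsto (fun s => (deriv φ s) ^ (2 - q) / (2 - q))
            (nhdsWithin 0 (Set.Ioi 0)) (nhds 0) := by
          have h2 := (Real.continuousAt_rpow_const 0 (2 - q) (Or.inr hq2'.le)).tendsto
          have h3 := h2.comp hd0
          have h4 : Filter.Tendsto (fun s => (deriv φ s) ^ (2 - q))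
              (nhdsWithin 0 (Set.Ioi 0)) (nhds 0) := by
            simpa [Function.comp_def, Real.zero_rpow hq2'.ne'] using h3
          simpa using h4.div_const (2 - q)
        have hGc : Filter.Tendsto (fun s => ∫ t in a..φ s, max (g t) 0)
            (nhdsWithin 0 (Set.Ioi 0)) (nhds 0) := by
          have hG : HasDerivAt (fun x => ∫ t in a..x, max (g t) 0) (max (g a) 0) a :=
            intervalIntegral.integral_hasDerivAt_right (hgc.intervalIntegrable a a)
              (hgc.stronglyMeasurable.stronglyMeasurableAtFilter) hgc.continuousAt
          have h2 := hG.continuousAt.tendsto.comp hφ0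
          simpa [Function.comp_def, intervalIntegral.integral_same] using h2
        have h3 := h1.sub (hGc.const_mul (1 / c))
        simpa using h3
    have h9 : (2 - q) / c * (∫ t in a..φ r, max (g t) 0)
        = (2 - q) * (1 / c * ∫ t in a..φ r, max (g t) 0) := by ring
    have h11 : (0:ℝ) ≤ (2 - q) * ((deriv φ r) ^ (2 - q) / (2 - q)
        - 1 / c * ∫ t in a..φ r, max (g t) 0) := mul_nonneg hq2'.le key
    have h12 : (2 - q) * ((deriv φ r) ^ (2 - q) / (2 - q)
        - 1 / c * ∫ t in a..φ r, max (g t) 0)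
        = (deriv φ r) ^ (2 - q) - (2 - q) * (1 / c * ∫ t in a..φ r, max (g t) 0) := by
      field_simp
    linarith [h9, h11, h12]
  -- conclusion
  intro r hr
  rcases eq_or_lt_of_le hr.1 with h0 | h0
  · -- r = 0
    subst h0
    rw [hφa, intervalIntegral.integral_same, intervalIntegral.integral_same,
      Real.zero_rpow (by norm_num : (1:ℝ)/2 ≠ 0),
      Real.zero_rpow (one_div_ne_zero (by linarith : (2:ℝ) - q ≠ 0))]
    rw [show (1:ℝ)/2 * ((2 - q)/c) ^ (1/(2 - q)) * (0 + 0) = 0 by ring]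
    have hφmonoR : StrictMonoOn φ (Set.Ico 0 R) := by
      apply strictMonoOn_of_deriv_pos (convex_Ico 0 R) hφc
      intro z hz
      rw [interior_Ico] at hz
      exact (hmain z hz).1
    by_cases hdiff : DifferentiableAt ℝ φ 0
    · have hsl := hdiff.hasDerivAt
      rw [hasDerivAt_iff_tendsto_slope] at hsl
      have hs' : Filter.Tendsto (slope φ 0) (nhdsWithin 0 (Set.Ioi 0)) (nhds (deriv φ 0)) :=
        hsl.mono_left (nhdsWithin_mono 0
          (fun x hx => Set.mem_compl_singleton_iff.mpr (ne_of_gt hx)))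
      apply ge_of_tendsto hs'
      filter_upwards [hIoo] with x hx
      have h1 : φ 0 ≤ φ x := (hφmonoR ⟨le_refl 0, hR⟩ ⟨hx.1.le, hx.2⟩ hx.1).le
      rw [slope_def_field]
      apply div_nonneg (by linarith) (by linarith [hx.1])
    · rw [deriv_zero_of_not_differentiableAt hdiff]
  · -- r > 0
    have hrIoo : r ∈ Set.Ioo 0 R := ⟨h0, hr.2⟩
    obtain ⟨hu0, hφb, hg0, -⟩ := hmain r hrIoo
    have hA0 : 0 ≤ ∫ t in a..φ r, f t :=
      intervalIntegral.integral_nonneg hφb (fun t _ => (hfpos t).le)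
    have hB0 : 0 ≤ ∫ t in a..φ r, max (g t) 0 :=
      intervalIntegral.integral_nonneg hφb (fun t _ => le_max_right _ _)
    have hA := hE1 r hrIoo
    have hB := hE2 r hrIoo
    set A := ∫ t in a..φ r, f t with hAdef
    set B := ∫ t in a..φ r, max (g t) 0 with hBdef
    have e2c : (0:ℝ) ≤ 2 / c := by positivity
    have h1 : (2 / c * A) ^ ((1:ℝ)/2) ≤ deriv φ r := by
      have h2 := Real.rpow_le_rpow (by positivity) hA (by norm_num : (0:ℝ) ≤ 1/2)
      have h3 : (deriv φ r * deriv φ r) ^ ((1:ℝ)/2) = deriv φ r := by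
        rw [show deriv φ r * deriv φ r = (deriv φ r) ^ (2:ℝ) by
              rw [show (2:ℝ) = ((2:ℕ):ℝ) by norm_num, Real.rpow_natCast]; ring]
        rw [← Real.rpow_mul hu0.le]
        norm_num
      rw [h3] at h2; exact h2
    have h1' : ((2:ℝ) / c) ^ ((1:ℝ)/2) * A ^ ((1:ℝ)/2) ≤ deriv φ r := by
      rw [← Real.mul_rpow e2c hA0]; exact h1
    have hKle : ((2 - q) / c) ^ (1 / (2 - q)) ≤ ((2:ℝ) / c) ^ ((1:ℝ)/2) :=
      aux_exp hc (by linarith) (by linarith)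
    have bound1 : ((2 - q) / c) ^ (1 / (2 - q)) * A ^ ((1:ℝ)/2) ≤ deriv φ r :=
      le_trans (mul_le_mul_of_nonneg_right hKle (Real.rpow_nonneg hA0 _)) h1'
    have bound2 : ((2 - q) / c) ^ (1 / (2 - q)) * B ^ (1 / (2 - q)) ≤ deriv φ r := by
      have hcq : (0:ℝ) ≤ (2 - q)/c := div_nonneg (by linarith) hc0.le
      rw [← Real.mul_rpow hcq hB0]
      have hexp0 : (0:ℝ) ≤ 1/(2 - q) := le_of_lt (div_pos one_pos (by linarith))
      have h2 := Real.rpow_le_rpow (mul_nonneg hcq hB0) hB hexp0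
      have h3 : ((deriv φ r) ^ (2 - q)) ^ (1/(2 - q)) = deriv φ r := by
        rw [← Real.rpow_mul hu0.le]
        rw [mul_one_div, div_self (by linarith : (2:ℝ) - q ≠ 0), Real.rpow_one]
      rw [h3] at h2; exact h2
    have hfinal : 1/2 * (((2 - q)/c) ^ (1/(2 - q))) * (A ^ ((1:ℝ)/2) + B ^ (1/(2 - q)))
        = (((2 - q)/c) ^ (1/(2 - q)) * A ^ ((1:ℝ)/2)
          + ((2 - q)/c) ^ (1/(2 - q)) * B ^ (1/(2 - q))) / 2 := by ring
    linarith [bound1, bound2, hfinal]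
end

section
/- Let 0 < q ≤ 2, c ≥ 1, f, g continuous nondecreasing with f positive and g(t) ≤ 0 for all t. If φ is a C² solution of φ'' + ((c-1)/r)φ' = f(φ) + g(φ)|φ'|^q on [0,R) with φ(0)=a, φ'(0)=0, then for all r ∈ [0,R): φ'(r) ≤ ( 2 ∫_a^{φ(r)} exp( -2 ∫_t^{φ(r)} (g⁻(s)/f(s))^{2/q} f(s) ds ) f(t) dt )^{1/2}. -/
open Real MeasureTheory Set Filter
open scoped Topology

private lemma stmt8_key (A F wv q : ℝ) (hq0 : 0 < q) (hq2 : q ≤ 2) (hA : 0 ≤ A) (hF : 0 < F)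
    (hw : 0 < wv) (hD : A * wv ^ q ≤ F) :
    (A / F) ^ (2/q) * F * wv ^ 2 ≤ A * wv ^ q := by
  have h2 : (wv:ℝ) ^ (2:ℕ) = wv ^ ((2:ℕ):ℝ) := (Real.rpow_natCast wv 2).symm
  rw [h2]
  push_cast
  rcases eq_or_lt_of_le hA with h0 | hA
  · rw [← h0, zero_div, Real.zero_rpow (by positivity), zero_mul, zero_mul, zero_mul]
  · have hB : (0:ℝ) < wv ^ q := Real.rpow_pos_of_pos hw q
    have h2' : wv ^ (2:ℝ) = (wv ^ q) ^ (2/q) := by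
      rw [← Real.rpow_mul hw.le]
      congr 1
      field_simp
    rw [h2']
    have hmul : (A / F) ^ (2/q) * (wv ^ q) ^ (2/q) = (A * wv ^ q / F) ^ (2/q) := by
      rw [← Real.mul_rpow (by positivity) hB.le]
      ring_nf
    calc (A / F) ^ (2/q) * F * (wv ^ q) ^ (2/q)
        = (A * wv ^ q / F) ^ (2/q) * F := by rw [mul_right_comm, hmul]
      _ ≤ (A * wv ^ q / F) * F := by
          have ht0 : 0 < A * wv ^ q / F := by positivity
          have ht1 : A * wv ^ q / F ≤ 1 := (div_le_one hF).mpr hD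
          have := Real.rpow_le_rpow_of_exponent_ge ht0 ht1
            (by rw [le_div_iff₀ hq0]; linarith : (1:ℝ) ≤ 2/q)
          rw [Real.rpow_one] at this
          exact mul_le_mul_of_nonneg_right this hF.le
      _ = A * wv ^ q := by field_simp

theorem stmt8 (c q R a : ℝ) (hc : 1 ≤ c) (hq0 : 0 < q) (hq2 : q ≤ 2) (hR : 0 < R)
    (f g φ : ℝ → ℝ)
    (hf : Continuous f) (hfpos : ∀ t, 0 < f t) (hfmono : Monotone f)
    (hg : Continuous g) (hgmono : Monotone g) (hgnonpos : ∀ t, g t ≤ 0)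
    (hφc : ContinuousOn φ (Set.Ico 0 R))
    (hφ2 : ContDiffOn ℝ 2 φ (Set.Ioo 0 R))
    (hφa : φ 0 = a)
    (hd0 : Filter.Tendsto (deriv φ) (nhdsWithin 0 (Set.Ioi 0)) (nhds 0))
    (hd2 : ∃ L, Filter.Tendsto (deriv (deriv φ)) (nhdsWithin 0 (Set.Ioi 0)) (nhds L))
    (hode : ∀ r ∈ Set.Ioo 0 R,
      deriv (deriv φ) r + (c - 1) / r * deriv φ r = f (φ r) + g (φ r) * |deriv φ r| ^ q) :
    ∀ r ∈ Set.Ico 0 R,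
      deriv φ r ≤
        (2 * ∫ t in a..φ r,
            Real.exp (-2 * ∫ s in t..φ r, (max (-g s) 0 / f s) ^ (2 / q) * f s) * f t)
          ^ ((1 : ℝ) / 2) := by
  set w := deriv φ with hwdef
  have ho : IsOpen (Ioo (0:ℝ) R) := isOpen_Ioo
  have h1reg : ContDiffOn ℝ 1 w (Ioo 0 R) := hφ2.deriv_of_isOpen ho (by norm_num)
  have hφd : ∀ r ∈ Ioo (0:ℝ) R, HasDerivAt φ (w r) r := fun r hr =>
    ((hφ2.differentiableOn (by norm_num)).differentiableAt (ho.mem_nhds hr)).hasDerivAt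
  have hwd : ∀ r ∈ Ioo (0:ℝ) R, HasDerivAt w (deriv w r) r := fun r hr =>
    ((h1reg.differentiableOn (by norm_num)).differentiableAt (ho.mem_nhds hr)).hasDerivAt
  have hwc : ContinuousOn w (Ioo 0 R) := h1reg.continuousOn
  -- limit of φ at 0+
  have hφ0 : Tendsto φ (𝓝[>] 0) (𝓝 a) := by
    have h := (hφc 0 ⟨le_refl 0, hR⟩).tendsto
    rw [hφa] at h
    refine h.mono_left (nhdsWithin_le_of_mem ?_)
    refine Filter.mem_of_superset (inter_mem_nhdsWithin (Ioi 0) (Iio_mem_nhds hR)) ?_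
    exact fun x hx => ⟨hx.1.le, hx.2⟩
  -- limit of |w|^q at 0+
  have hw0' : Tendsto (fun s => |w s|) (𝓝[>] 0) (𝓝 0) := by simpa using hd0.abs
  have habsq : Tendsto (fun s => |w s| ^ q) (𝓝[>] 0) (𝓝 0) := by
    have hca : ContinuousAt (fun x : ℝ => x ^ q) 0 :=
      Real.continuousAt_rpow_const 0 q (Or.inr hq0.le)
    have := hca.tendsto.comp hw0'
    simpa [Function.comp_def, Real.zero_rpow hq0.ne'] using this
  -- Step 1a : RHS of ODE is eventually bounded below near 0
  have hfφ : Tendsto (fun s => f (φ s)) (𝓝[>] 0) (𝓝 (f a)) := hf.continuousAt.tendsto.comp hφ0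
  have hgφ : Tendsto (fun s => g (φ s)) (𝓝[>] 0) (𝓝 (g a)) := hg.continuousAt.tendsto.comp hφ0
  have hRHS : Tendsto (fun s => f (φ s) + g (φ s) * |w s| ^ q) (𝓝[>] 0) (𝓝 (f a)) := by
    have := hfφ.add (hgφ.mul habsq)
    simpa using this
  have hev : ∀ᶠ s in 𝓝[>] (0:ℝ), f a / 2 < f (φ s) + g (φ s) * |w s| ^ q :=
    hRHS.eventually (eventually_gt_nhds (by linarith [hfpos a]))
  obtain ⟨ε₁, hε₁pos, hε₁⟩ := mem_nhdsGT_iff_exists_Ioo_subset.1 hev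
  set ε : ℝ := min ε₁ R with hεdef
  have hεpos : 0 < ε := lt_min hε₁pos hR
  have hεR : ε ≤ R := min_le_right _ _
  have hεsub : Ioo (0:ℝ) ε ⊆ Ioo 0 R := fun x hx => ⟨hx.1, lt_of_lt_of_le hx.2 hεR⟩
  have hεbound : ∀ s ∈ Ioo (0:ℝ) ε, f a / 2 < f (φ s) + g (φ s) * |w s| ^ q := fun s hs =>
    hε₁ ⟨hs.1, lt_of_lt_of_le hs.2 (min_le_left _ _)⟩
  -- Step 1b : w > 0 on (0, ε) via u r = r^(c-1) * w r
  set u : ℝ → ℝ := fun s => s ^ (c-1) * w s with hudef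
  have hud : ∀ s ∈ Ioo (0:ℝ) ε, HasDerivAt u (s ^ (c-1) * (deriv w s + (c-1)/s * w s)) s := by
    intro s hs
    have h1 : HasDerivAt (fun x : ℝ => x ^ (c-1)) ((c-1) * s ^ (c-1-1)) s :=
      Real.hasDerivAt_rpow_const (Or.inl hs.1.ne')
    have h2 := h1.mul (hwd s (hεsub hs))
    refine h2.congr_deriv ?_
    have hss : s ^ (c - 1 - 1) = s ^ (c-1) / s := Real.rpow_sub_one hs.1.ne' (c-1)
    rw [hss]
    have hsne : s ≠ 0 := hs.1.ne'
    field_simp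
    ring
  have hudpos : ∀ s ∈ Ioo (0:ℝ) ε, 0 < s ^ (c-1) * (deriv w s + (c-1)/s * w s) := by
    intro s hs
    have hODE := hode s (hεsub hs)
    have : deriv w s + (c-1)/s * w s = f (φ s) + g (φ s) * |w s| ^ q := hODE
    rw [this]
    have := hεbound s hs
    have hfa := hfpos a
    have := Real.rpow_pos_of_pos hs.1 (c-1)
    nlinarith
  have humono : StrictMonoOn u (Ioo 0 ε) := by
    apply strictMonoOn_of_deriv_pos (convex_Ioo 0 ε)
    · exact fun s hs => ((hud s hs).continuousAt).continuousWithinAt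
    · intro s hs
      rw [interior_Ioo] at hs
      rw [(hud s hs).deriv]
      exact hudpos s hs
  have hu0 : Tendsto u (𝓝[>] 0) (𝓝 0) := by
    apply squeeze_zero_norm' ?_ hw0'
    have h1 : Ioo (0:ℝ) 1 ∈ 𝓝[>] (0:ℝ) := mem_nhdsGT_iff_exists_Ioo_subset.2
      ⟨1, by norm_num, fun x hx => hx⟩
    filter_upwards [h1] with s hs
    have hsle : s ^ (c-1) ≤ 1 := Real.rpow_le_one hs.1.le hs.2.le (by linarith)
    have hsnn : 0 ≤ s ^ (c-1) := Real.rpow_nonneg hs.1.le _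
    have : ‖u s‖ = s ^ (c-1) * |w s| := by
      rw [hudef]; simp [abs_mul, abs_of_nonneg hsnn]
    rw [this]
    nlinarith [abs_nonneg (w s)]
  have hwpos_small : ∀ s ∈ Ioo (0:ℝ) ε, 0 < w s := by
    intro s hs
    have hhalf : s/2 ∈ Ioo (0:ℝ) ε := ⟨by linarith [hs.1], by linarith [hs.2]⟩
    have h1 : 0 ≤ u (s/2) := by
      apply le_of_tendsto hu0
      have h2 : Ioo (0:ℝ) (s/2) ∈ 𝓝[>] (0:ℝ) := mem_nhdsGT_iff_exists_Ioo_subset.2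
        ⟨s/2, by simpa using hhalf.1, fun x hx => hx⟩
      filter_upwards [h2] with x hx
      exact (humono ⟨hx.1, lt_trans hx.2 hhalf.2⟩ hhalf hx.2).le
    have h2 : u (s/2) < u s := humono hhalf hs (by linarith [hs.1])
    have h3 : 0 < u s := lt_of_le_of_lt h1 h2
    have h4 : 0 < s ^ (c-1) := Real.rpow_pos_of_pos hs.1 _
    have h5 : 0 < s ^ (c-1) * w s := h3
    by_contra hns
    push_neg at hns
    nlinarith [mul_nonpos_of_nonneg_of_nonpos h4.le hns]
  -- Step 1c : w > 0 on all of (0, R)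
  have step1 : ∀ r ∈ Ioo (0:ℝ) R, 0 < w r := by
    by_contra hcon
    push_neg at hcon
    obtain ⟨r₀, hr₀, hr₀w⟩ := hcon
    set S : Set ℝ := {s | s ∈ Ioo (0:ℝ) R ∧ w s ≤ 0} with hSdef
    have hSne : S.Nonempty := ⟨r₀, hr₀, hr₀w⟩
    have hSbdd : BddBelow S := ⟨0, fun s hs => hs.1.1.le⟩
    set r₂ : ℝ := sInf S with hr₂def
    have hr₂lb : ∀ s ∈ S, ε ≤ s := by
      intro s hs
      by_contra hlt
      push_neg at hlt
      exact absurd hs.2 (not_le.mpr (hwpos_small s ⟨hs.1.1, hlt⟩))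
    have hεr₂ : ε ≤ r₂ := le_csInf hSne hr₂lb
    have hr₂le : r₂ ≤ r₀ := csInf_le hSbdd ⟨hr₀, hr₀w⟩
    have hr₂mem : r₂ ∈ Ioo (0:ℝ) R := ⟨lt_of_lt_of_le hεpos hεr₂, lt_of_le_of_lt hr₂le hr₀.2⟩
    have hbelow : ∀ s ∈ Ioo (0:ℝ) R, s < r₂ → 0 < w s := by
      intro s hsm hlt
      by_contra hns
      push_neg at hns
      exact absurd (csInf_le hSbdd ⟨hsm, hns⟩) (not_le.mpr hlt)
    have hwcont₂ : ContinuousAt w r₂ := (hwd r₂ hr₂mem).continuousAt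
    have hwr₂le : w r₂ ≤ 0 := by
      by_contra hpos
      push_neg at hpos
      have hnear : ∀ᶠ s in 𝓝 r₂, 0 < w s := hwcont₂.tendsto.eventually (eventually_gt_nhds hpos)
      obtain ⟨δ, hδpos, hδ⟩ := Metric.eventually_nhds_iff.1 hnear
      obtain ⟨s, hsS, hslt⟩ := exists_lt_of_csInf_lt hSne (by linarith : r₂ < r₂ + δ)
      have hs₂ : r₂ ≤ s := csInf_le hSbdd hsS
      have : 0 < w s := hδ (by rw [Real.dist_eq, abs_lt]; constructor <;> linarith)
      exact absurd this (not_lt.mpr hsS.2)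
    have hwr₂ge : 0 ≤ w r₂ := by
      have htd : Tendsto w (𝓝[<] r₂) (𝓝 (w r₂)) := hwcont₂.continuousWithinAt.tendsto
      refine ge_of_tendsto htd ?_
      have hIoo : Ioo (0:ℝ) r₂ ∈ 𝓝[<] r₂ := by
        refine Filter.mem_of_superset (inter_mem_nhdsWithin (Iio r₂) (Ioi_mem_nhds hr₂mem.1)) ?_
        exact fun x hx => ⟨hx.2, hx.1⟩
      filter_upwards [hIoo] with s hs
      exact (hbelow s ⟨hs.1, lt_trans hs.2 hr₂mem.2⟩ hs.2).le
    have hwr₂ : w r₂ = 0 := le_antisymm hwr₂le hwr₂ge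
    have hder : deriv w r₂ = f (φ r₂) := by
      have h := hode r₂ hr₂mem
      rw [hwr₂] at h
      simpa [Real.zero_rpow hq0.ne'] using h
    have hslope := hasDerivAt_iff_tendsto_slope.mp (hwd r₂ hr₂mem)
    rw [hder] at hslope
    have hsl : Tendsto (slope w r₂) (𝓝[<] r₂) (𝓝 (f (φ r₂))) :=
      hslope.mono_left (nhdsWithin_mono _ (fun x hx => ne_of_lt hx))
    have hev1 : ∀ᶠ s in 𝓝[<] r₂, 0 < slope w r₂ s := hsl.eventually (eventually_gt_nhds (hfpos _))
    have hIoo : Ioo (0:ℝ) r₂ ∈ 𝓝[<] r₂ := by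
      refine Filter.mem_of_superset (inter_mem_nhdsWithin (Iio r₂) (Ioi_mem_nhds hr₂mem.1)) ?_
      exact fun x hx => ⟨hx.2, hx.1⟩
    obtain ⟨s, hs1, hs2⟩ := (hev1.and (eventually_of_mem hIoo (fun x hx => hx))).exists
    have hwspos : 0 < w s := hbelow s ⟨hs2.1, lt_trans hs2.2 hr₂mem.2⟩ hs2.2
    rw [slope_def_field, hwr₂] at hs1
    have hneg : (w s - 0) / (s - r₂) < 0 :=
      div_neg_of_pos_of_neg (by linarith) (by linarith [hs2.2])
    linarith
  -- Step 3 : a priori bound  (-g(φ r)) * (w r)^q ≤ f (φ r)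
  set D : ℝ → ℝ := fun s => (-g (φ s)) * (w s) ^ q - f (φ s) with hDdef
  have hDcont : ∀ s ∈ Ioo (0:ℝ) R, ContinuousAt D s := by
    intro s hs
    have h1 : ContinuousAt (fun x:ℝ => x ^ q) (w s) :=
      Real.continuousAt_rpow_const _ q (Or.inr hq0.le)
    exact ((hg.continuousAt.comp (hφd s hs).continuousAt).neg.mul
      (h1.comp (hwd s hs).continuousAt)).sub (hf.continuousAt.comp (hφd s hs).continuousAt)
  have hwq0' : Tendsto (fun s => (w s) ^ q) (𝓝[>] 0) (𝓝 0) := by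
    have hca : ContinuousAt (fun x : ℝ => x ^ q) 0 :=
      Real.continuousAt_rpow_const 0 q (Or.inr hq0.le)
    have := hca.tendsto.comp hd0
    simpa [Function.comp_def, Real.zero_rpow hq0.ne'] using this
  have hDlim : Tendsto D (𝓝[>] 0) (𝓝 (-(f a))) := by
    have h : Tendsto (fun s => (-g (φ s)) * (w s) ^ q - f (φ s)) (𝓝[>] 0)
        (𝓝 ((-g a) * 0 - f a)) := (hgφ.neg.mul hwq0').sub hfφ
    rw [hDdef]
    convert h using 2
    ring
  have hDev : ∀ᶠ s in 𝓝[>] (0:ℝ), D s < 0 :=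
    hDlim.eventually (eventually_lt_nhds (by linarith [hfpos a]))
  have step3 : ∀ r ∈ Ioo (0:ℝ) R, (-g (φ r)) * (w r) ^ q ≤ f (φ r) := by
    by_contra hcon
    push_neg at hcon
    obtain ⟨r₁, hr₁, hr₁D⟩ := hcon
    have hr₁D' : 0 < D r₁ := by simp only [hDdef]; linarith
    obtain ⟨δ₁, hδ₁pos, hδ₁sub⟩ := mem_nhdsGT_iff_exists_Ioo_subset.1 hDev
    set s₀ : ℝ := min δ₁ r₁ / 2 with hs₀def
    have hs₀pos : 0 < s₀ := by
      have := lt_min (mem_Ioi.mp hδ₁pos) hr₁.1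
      simp only [hs₀def]; linarith
    have hs₀δ : s₀ < δ₁ := by
      have h := min_le_left δ₁ r₁
      have := mem_Ioi.mp hδ₁pos
      simp only [hs₀def]; linarith
    have hs₀r₁ : s₀ ≤ r₁ := by
      have h := min_le_right δ₁ r₁
      simp only [hs₀def]; linarith [hr₁.1]
    set T : Set ℝ := {s | s ∈ Ioc (0:ℝ) r₁ ∧ D s ≤ 0} with hTdef
    have hTne : T.Nonempty := ⟨s₀, ⟨hs₀pos, hs₀r₁⟩, (hδ₁sub ⟨hs₀pos, hs₀δ⟩).le⟩
    have hTbdd : BddAbove T := ⟨r₁, fun s hs => hs.1.2⟩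
    set r₂ : ℝ := sSup T with hr₂def
    have hs₀r₂ : s₀ ≤ r₂ := le_csSup hTbdd ⟨⟨hs₀pos, hs₀r₁⟩, (hδ₁sub ⟨hs₀pos, hs₀δ⟩).le⟩
    have hr₂r₁ : r₂ ≤ r₁ := csSup_le hTne (fun s hs => hs.1.2)
    have hr₂mem : r₂ ∈ Ioo (0:ℝ) R := ⟨lt_of_lt_of_le hs₀pos hs₀r₂, lt_of_le_of_lt hr₂r₁ hr₁.2⟩
    have hD₂ : D r₂ ≤ 0 := by
      by_contra hpos
      push_neg at hpos
      have hnear : ∀ᶠ s in 𝓝 r₂, 0 < D s :=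
        (hDcont r₂ hr₂mem).tendsto.eventually (eventually_gt_nhds hpos)
      obtain ⟨δ, hδpos, hδ⟩ := Metric.eventually_nhds_iff.1 hnear
      obtain ⟨s, hsT, hslt⟩ := exists_lt_of_lt_csSup hTne (by linarith : r₂ - δ < r₂)
      have hsr₂ : s ≤ r₂ := le_csSup hTbdd hsT
      have : 0 < D s := hδ (by rw [Real.dist_eq, abs_lt]; constructor <;> linarith)
      exact absurd this (not_lt.mpr hsT.2)
    have hr₂lt : r₂ < r₁ := lt_of_le_of_ne hr₂r₁ (fun he => by rw [he] at hD₂; linarith)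
    have habove : ∀ s, r₂ < s → s ≤ r₁ → 0 < D s := by
      intro s h1 h2
      by_contra hn
      push_neg at hn
      exact absurd (le_csSup hTbdd ⟨⟨lt_trans hr₂mem.1 h1, h2⟩, hn⟩) (not_le.mpr h1)
    have hIccsub : Icc r₂ r₁ ⊆ Ioo (0:ℝ) R := fun x hx =>
      ⟨lt_of_lt_of_le hr₂mem.1 hx.1, lt_of_le_of_lt hx.2 hr₁.2⟩
    have hanti : StrictAntiOn w (Icc r₂ r₁) := by
      apply strictAntiOn_of_deriv_neg (convex_Icc _ _) (hwc.mono hIccsub)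
      intro s hs
      rw [interior_Icc] at hs
      have hsIoo : s ∈ Ioo (0:ℝ) R := hIccsub ⟨hs.1.le, hs.2.le⟩
      have hODE := hode s hsIoo
      have hwpos := step1 s hsIoo
      rw [abs_of_pos hwpos] at hODE
      have hDpos := habove s hs.1 hs.2.le
      have hDpos' : f (φ s) < (-g (φ s)) * (w s) ^ q := by
        simp only [hDdef] at hDpos; linarith
      have hnn : 0 ≤ (c - 1)/s * w s :=
        mul_nonneg (div_nonneg (by linarith) hsIoo.1.le) hwpos.le
      nlinarith [hODE, hDpos', hnn]
    have hφm : MonotoneOn φ (Icc r₂ r₁) := by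
      apply monotoneOn_of_deriv_nonneg (convex_Icc _ _)
        (hφc.mono (fun x hx => ⟨(hIccsub hx).1.le, (hIccsub hx).2⟩))
      · intro s hs
        rw [interior_Icc] at hs
        exact (hφd s (hIccsub ⟨hs.1.le, hs.2.le⟩)).differentiableAt.differentiableWithinAt
      · intro s hs
        rw [interior_Icc] at hs
        exact (step1 s (hIccsub ⟨hs.1.le, hs.2.le⟩)).le
    have hcomp : ∀ s ∈ Ioo r₂ r₁, D r₁ ≤ D s := by
      intro s hs
      have hsmem : s ∈ Icc r₂ r₁ := ⟨hs.1.le, hs.2.le⟩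
      have hr₁mem : r₁ ∈ Icc r₂ r₁ := ⟨hr₂r₁, le_refl _⟩
      have hws : w r₁ ≤ w s := (hanti hsmem hr₁mem hs.2).le
      have hq1 : (w r₁) ^ q ≤ (w s) ^ q :=
        Real.rpow_le_rpow (step1 r₁ hr₁).le hws hq0.le
      have hφle : φ s ≤ φ r₁ := hφm hsmem hr₁mem hs.2.le
      have hgle : -g (φ r₁) ≤ -g (φ s) := neg_le_neg (hgmono hφle)
      have hfle : f (φ s) ≤ f (φ r₁) := hfmono hφle
      have hmul : (-g (φ r₁)) * (w r₁) ^ q ≤ (-g (φ s)) * (w s) ^ q :=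
        mul_le_mul hgle hq1 (Real.rpow_nonneg (step1 r₁ hr₁).le q)
          (neg_nonneg.mpr (hgnonpos (φ s)))
      simp only [hDdef]
      linarith
    have htd : Tendsto D (𝓝[>] r₂) (𝓝 (D r₂)) :=
      (hDcont r₂ hr₂mem).continuousWithinAt.tendsto
    have hIooev : Ioo r₂ r₁ ∈ 𝓝[>] r₂ :=
      mem_nhdsGT_iff_exists_Ioo_subset.2 ⟨r₁, hr₂lt, subset_refl _⟩
    have hfinal : D r₁ ≤ D r₂ := ge_of_tendsto htd (by filter_upwards [hIooev] with s hs; exact hcomp s hs)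
    linarith
  -- Step 4 : the functional Φ and the main estimate
  set hfun : ℝ → ℝ := fun t => ((-g t) / f t) ^ (2/q) * f t with hfundef
  have hfuncont : Continuous hfun := by
    apply Continuous.mul _ hf
    apply Continuous.rpow_const (hg.neg.div hf (fun t => (hfpos t).ne'))
    exact fun x => Or.inr (by positivity)
  set H : ℝ → ℝ := fun u => ∫ t in a..u, hfun t with hHdef
  have hHd : ∀ u, HasDerivAt H (hfun u) u := fun u =>
    intervalIntegral.integral_hasDerivAt_right (hfuncont.intervalIntegrable a u)
      (hfuncont.stronglyMeasurableAtFilter _ _) hfuncont.continuousAt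
  have hHcont : Continuous H := continuous_iff_continuousAt.mpr fun u => (hHd u).continuousAt
  have hGcont : Continuous (fun t => Real.exp (2 * H t) * f t) :=
    (Real.continuous_exp.comp (continuous_const.mul hHcont)).mul hf
  set P : ℝ → ℝ := fun u => ∫ t in a..u, Real.exp (2 * H t) * f t with hPdef
  have hPd : ∀ u, HasDerivAt P (Real.exp (2 * H u) * f u) u := fun u =>
    intervalIntegral.integral_hasDerivAt_right (hGcont.intervalIntegrable a u)
      (hGcont.stronglyMeasurableAtFilter _ _) hGcont.continuousAt
  have hPcont : Continuous P := continuous_iff_continuousAt.mpr fun u => (hPd u).continuousAt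
  set Φ : ℝ → ℝ := fun s => Real.exp (2 * H (φ s)) * (w s) ^ 2 - 2 * P (φ s) with hΦdef
  have hΦd : ∀ s ∈ Ioo (0:ℝ) R, HasDerivAt Φ
      (2 * w s * Real.exp (2 * H (φ s)) * (hfun (φ s) * (w s) ^ 2 + deriv w s - f (φ s))) s := by
    intro s hs
    have h1 : HasDerivAt (fun s => H (φ s)) (hfun (φ s) * w s) s :=
      (hHd (φ s)).comp s (hφd s hs)
    have h2 : HasDerivAt (fun s => Real.exp (2 * H (φ s)))
        (Real.exp (2 * H (φ s)) * (2 * (hfun (φ s) * w s))) s := (h1.const_mul 2).exp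
    have h3 : HasDerivAt (fun s => (w s) ^ 2) (2 * w s * deriv w s) s := by
      have h := (hwd s hs).pow 2
      refine h.congr_deriv ?_
      push_cast
      ring
    have h4 : HasDerivAt (fun s => P (φ s)) (Real.exp (2 * H (φ s)) * f (φ s) * w s) s :=
      (hPd (φ s)).comp s (hφd s hs)
    have h5 := (h2.mul h3).sub (h4.const_mul 2)
    refine h5.congr_deriv ?_
    ring
  have hΦderiv_nonpos : ∀ s ∈ Ioo (0:ℝ) R, deriv Φ s ≤ 0 := by
    intro s hs
    rw [(hΦd s hs).deriv]
    have hwpos := step1 s hs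
    have hODE := hode s hs
    rw [abs_of_pos hwpos] at hODE
    have hA : 0 ≤ -g (φ s) := neg_nonneg.mpr (hgnonpos _)
    have hF := hfpos (φ s)
    have hkey := stmt8_key (-g (φ s)) (f (φ s)) (w s) q hq0 hq2 hA hF hwpos (step3 s hs)
    have hng : g (φ s) * (w s) ^ q = -((-g (φ s)) * (w s) ^ q) := by ring
    have hw' : deriv w s ≤ f (φ s) - (-g (φ s)) * (w s) ^ q := by
      have hnn : 0 ≤ (c - 1)/s * w s := mul_nonneg (div_nonneg (by linarith) hs.1.le) hwpos.le
      rw [hng] at hODE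
      linarith [hODE]
    have hfk : hfun (φ s) * (w s) ^ 2 ≤ (-g (φ s)) * (w s) ^ q := hkey
    have hbr : hfun (φ s) * (w s) ^ 2 + deriv w s - f (φ s) ≤ 0 := by linarith
    have hfac : 0 ≤ 2 * w s * Real.exp (2 * H (φ s)) := by positivity
    exact mul_nonpos_of_nonneg_of_nonpos hfac hbr
  have hΦcont : ∀ s ∈ Ioo (0:ℝ) R, ContinuousAt Φ s := fun s hs => (hΦd s hs).continuousAt
  have hΦmono : ∀ s r : ℝ, s ∈ Ioo (0:ℝ) R → r ∈ Ioo (0:ℝ) R → s ≤ r → Φ r ≤ Φ s := by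
    intro s r hs hr hsr
    have hsub : Icc s r ⊆ Ioo (0:ℝ) R := fun x hx =>
      ⟨lt_of_lt_of_le hs.1 hx.1, lt_of_le_of_lt hx.2 hr.2⟩
    have hmono := antitoneOn_of_deriv_nonpos (convex_Icc s r)
      (fun x hx => (hΦcont x (hsub hx)).continuousWithinAt)
      (fun x hx => by
        rw [interior_Icc] at hx
        exact (hΦd x (hsub ⟨hx.1.le, hx.2.le⟩)).differentiableAt.differentiableWithinAt)
      (fun x hx => by
        rw [interior_Icc] at hx
        exact hΦderiv_nonpos x (hsub ⟨hx.1.le, hx.2.le⟩))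
    exact hmono ⟨le_refl s, hsr⟩ ⟨hsr, le_refl r⟩ hsr
  have hΦlim : Tendsto Φ (𝓝[>] 0) (𝓝 0) := by
    have t1 : Tendsto (fun s => Real.exp (2 * H (φ s))) (𝓝[>] 0) (𝓝 (Real.exp (2 * H a))) :=
      ((Real.continuous_exp.comp (continuous_const.mul hHcont)).continuousAt.tendsto).comp hφ0
    have t2 : Tendsto (fun s => (w s) ^ 2) (𝓝[>] 0) (𝓝 0) := by
      have := hd0.pow 2
      simpa using this
    have t3 : Tendsto (fun s => P (φ s)) (𝓝[>] 0) (𝓝 (P a)) :=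
      (hPcont.continuousAt.tendsto).comp hφ0
    have hPa : P a = 0 := intervalIntegral.integral_same
    have hfin := (t1.mul t2).sub (t3.const_mul 2)
    rw [hPa] at hfin
    simpa using hfin
  have hΦle : ∀ r ∈ Ioo (0:ℝ) R, Φ r ≤ 0 := by
    intro r hr
    refine ge_of_tendsto hΦlim ?_
    have hIoo : Ioo (0:ℝ) r ∈ 𝓝[>] (0:ℝ) :=
      mem_nhdsGT_iff_exists_Ioo_subset.2 ⟨r, hr.1, subset_refl _⟩
    filter_upwards [hIoo] with s hs
    exact hΦmono s r ⟨hs.1, lt_trans hs.2 hr.2⟩ hr hs.2.le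
  -- Conclusion
  intro r hr
  have hmax : ∀ s : ℝ, max (-g s) 0 = -g s := fun s => max_eq_left (neg_nonneg.mpr (hgnonpos s))
  rcases eq_or_lt_of_le hr.1 with h0 | hrpos
  · -- r = 0
    rw [← h0, hφa, intervalIntegral.integral_same, mul_zero,
      Real.zero_rpow (by norm_num : (1:ℝ)/2 ≠ 0)]
    by_cases hdiff : DifferentiableAt ℝ φ 0
    · have hslope := hasDerivAt_iff_tendsto_slope.mp hdiff.hasDerivAt
      have hsl : Tendsto (slope φ 0) (𝓝[>] 0) (𝓝 (deriv φ 0)) :=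
        hslope.mono_left (nhdsWithin_mono _ (fun x hx => by
          simp only [mem_compl_iff, mem_singleton_iff]
          exact ne_of_gt hx))
      have hzero : Tendsto (slope φ 0) (𝓝[>] 0) (𝓝 0) := by
        rw [Metric.tendsto_nhdsWithin_nhds]
        intro ε hε
        obtain ⟨δ₁, hδ₁pos, hδ₁⟩ := Metric.tendsto_nhdsWithin_nhds.mp hd0 (ε/2) (by linarith)
        refine ⟨min δ₁ R, lt_min hδ₁pos hR, ?_⟩
        intro x hx hxd
        rw [Real.dist_eq, sub_zero] at hxd
        have hx0 : 0 < x := hx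
        have hxlt : x < min δ₁ R := by rwa [abs_of_pos hx0] at hxd
        have hxR : x < R := lt_of_lt_of_le hxlt (min_le_right _ _)
        have hcontIcc : ContinuousOn φ (Icc 0 x) :=
          hφc.mono (fun y hy => ⟨hy.1, lt_of_le_of_lt hy.2 hxR⟩)
        obtain ⟨ξ, hξ, hξeq⟩ := exists_hasDerivAt_eq_slope φ w hx0 hcontIcc
          (fun y hy => hφd y ⟨hy.1, lt_trans hy.2 hxR⟩)
        have hξδ : |w ξ| < ε/2 := by
          have := hδ₁ (mem_Ioi.mpr hξ.1)
            (by rw [Real.dist_eq, sub_zero, abs_of_pos hξ.1]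
                exact lt_trans hξ.2 (lt_of_lt_of_le hxlt (min_le_left _ _)))
          simpa [Real.dist_eq] using this
        rw [Real.dist_eq, sub_zero, slope_def_field]
        rw [← hξeq]
        linarith [hξδ, abs_nonneg (w ξ)]
      have hderiv0 : deriv φ 0 = 0 := tendsto_nhds_unique hsl hzero
      rw [hwdef, hderiv0]
    · rw [hwdef, deriv_zero_of_not_differentiableAt hdiff]
  · -- r > 0
    have hrmem : r ∈ Ioo (0:ℝ) R := ⟨hrpos, hr.2⟩
    have hΦr := hΦle r hrmem
    have hwpos := step1 r hrmem
    have hinner : ∀ t : ℝ, (∫ s in t..φ r, (max (-g s) 0 / f s) ^ (2/q) * f s)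
        = H (φ r) - H t := by
      intro t
      have hcongr : (fun s => (max (-g s) 0 / f s) ^ (2/q) * f s) = hfun := by
        funext s
        rw [hmax s]
      rw [hcongr]
      exact (intervalIntegral.integral_interval_sub_left
        (hfuncont.intervalIntegrable a (φ r)) (hfuncont.intervalIntegrable a t)).symm
    have hXrw : (∫ t in a..φ r,
          Real.exp (-2 * ∫ s in t..φ r, (max (-g s) 0 / f s) ^ (2/q) * f s) * f t)
        = Real.exp (-(2 * H (φ r))) * P (φ r) := by
      rw [show Real.exp (-(2 * H (φ r))) * P (φ r)
          = ∫ t in a..φ r, Real.exp (-(2 * H (φ r))) * (Real.exp (2 * H t) * f t) from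
        (intervalIntegral.integral_const_mul _ _).symm]
      apply intervalIntegral.integral_congr
      intro t ht
      dsimp only
      rw [hinner t]
      rw [show -2 * (H (φ r) - H t) = -(2 * H (φ r)) + 2 * H t by ring, Real.exp_add]
      ring
    have hΦr0 : Real.exp (2 * H (φ r)) * (w r) ^ 2 - 2 * P (φ r) ≤ 0 := hΦr
    have hΦr' : Real.exp (2 * H (φ r)) * (w r) ^ 2 ≤ 2 * P (φ r) := by linarith
    have hexp : (0:ℝ) < Real.exp (2 * H (φ r)) := Real.exp_pos _
    have hEinv := inv_pos.mpr hexp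
    have h6 := mul_le_mul_of_nonneg_left hΦr' hEinv.le
    have hsq : (w r) ^ 2 ≤ 2 * (Real.exp (-(2 * H (φ r))) * P (φ r)) := by
      rw [Real.exp_neg]
      calc (w r) ^ 2
          = (Real.exp (2 * H (φ r)))⁻¹ * (Real.exp (2 * H (φ r)) * (w r) ^ 2) := by
            field_simp
        _ ≤ (Real.exp (2 * H (φ r)))⁻¹ * (2 * P (φ r)) := h6
        _ = 2 * ((Real.exp (2 * H (φ r)))⁻¹ * P (φ r)) := by ring
    rw [hXrw, ← Real.sqrt_eq_rpow]
    exact Real.le_sqrt_of_sq_le hsq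
end

section
/- Let 0 < q < 2, c ≥ 1, f, g continuous nondecreasing, f positive. If φ solves the radial ODE Cauchy problem on [0,R) with φ(0)=a, φ'(0)=0, then for all r ∈ [0,R): r ≥ 2^{-2/(2-q)} ∫_a^{φ(r)} dt / [ (∫_a^t f(s) ds)^{1/2} + (∫_a^t g⁺(s) ds)^{1/(2-q)} ]. -/
open Real MeasureTheory Set Filter

lemma sqrt_add_le' {x y : ℝ} (hx : 0 ≤ x) (hy : 0 ≤ y) :
    Real.sqrt (x + y) ≤ Real.sqrt x + Real.sqrt y := by
  have h1 : x + y ≤ (Real.sqrt x + Real.sqrt y) ^ 2 := by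
    nlinarith [Real.sq_sqrt hx, Real.sq_sqrt hy, Real.sqrt_nonneg x, Real.sqrt_nonneg y,
      mul_nonneg (Real.sqrt_nonneg x) (Real.sqrt_nonneg y)]
  calc Real.sqrt (x + y) ≤ Real.sqrt ((Real.sqrt x + Real.sqrt y) ^ 2) := Real.sqrt_le_sqrt h1
  _ = _ := Real.sqrt_sq (by positivity)

lemma aux_alg (q M e FF GG : ℝ) (hq0 : 0 < q) (hq2 : q < 2) (hM : 0 < M) (he : 0 ≤ e)
    (hFF : 0 ≤ FF) (hGG : 0 ≤ GG) (h : M ^ 2 ≤ e + 2 * FF + 2 * M ^ q * GG) :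
    M ≤ Real.sqrt 2 * Real.sqrt e + 2 ^ (2 / (2 - q)) * (FF ^ ((1:ℝ)/2) + GG ^ (1 / (2 - q))) := by
  have h2q : (0:ℝ) < 2 - q := by linarith
  have hK0 : (0:ℝ) < 2 ^ (2 / (2 - q)) := Real.rpow_pos_of_pos (by norm_num) _
  have hK2 : (2:ℝ) ≤ 2 ^ (2 / (2 - q)) := by
    nth_rewrite 1 [← Real.rpow_one 2]
    exact Real.rpow_le_rpow_of_exponent_le one_le_two (by rw [le_div_iff₀ h2q]; linarith)
  have hA : 0 ≤ FF ^ ((1:ℝ)/2) := Real.rpow_nonneg hFF _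
  have hB : 0 ≤ GG ^ (1/(2-q)) := Real.rpow_nonneg hGG _
  have hse : 0 ≤ Real.sqrt 2 * Real.sqrt e := by positivity
  rcases le_total (2 * M ^ q * GG) (e + 2 * FF) with hcase | hcase
  · have h1 : M ^ 2 ≤ 2 * e + 4 * FF := by linarith
    have h2 : M ≤ Real.sqrt (2 * e + 4 * FF) := by
      calc M = Real.sqrt (M ^ 2) := (Real.sqrt_sq hM.le).symm
      _ ≤ _ := Real.sqrt_le_sqrt h1
    have hs : Real.sqrt (2*e + 4*FF) ≤ Real.sqrt (2*e) + Real.sqrt (4*FF) :=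
      sqrt_add_le' (by positivity) (by positivity)
    have e1 : Real.sqrt (2*e) = Real.sqrt 2 * Real.sqrt e := Real.sqrt_mul (by norm_num) e
    have e2 : Real.sqrt (4*FF) = 2 * FF ^ ((1:ℝ)/2) := by
      rw [Real.sqrt_mul (by norm_num), Real.sqrt_eq_rpow FF,
        show Real.sqrt 4 = 2 by rw [show (4:ℝ) = 2^2 by norm_num, Real.sqrt_sq (by norm_num)]]
    nlinarith [mul_le_mul_of_nonneg_right hK2 hA, mul_le_mul_of_nonneg_right hK2 hB]
  · have hMq : 0 < M ^ q := Real.rpow_pos_of_pos hM q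
    have hsplit : M ^ q * M ^ (2-q) = M ^ 2 := by
      rw [← Real.rpow_add hM]
      norm_num [Real.rpow_two]
    have h3 : M ^ (2-q) ≤ 4 * GG := by
      have h2 : M ^ q * M ^ (2-q) ≤ M ^ q * (4 * GG) := by rw [hsplit]; nlinarith
      exact le_of_mul_le_mul_left h2 hMq
    have h4 : M ≤ (4 * GG) ^ (1/(2-q)) := by
      have h5 := Real.rpow_le_rpow (Real.rpow_nonneg hM.le _) h3
        (by positivity : (0:ℝ) ≤ 1/(2-q))
      rwa [← Real.rpow_mul hM.le, mul_one_div, div_self h2q.ne', Real.rpow_one] at h5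
    have h6 : (4 * GG) ^ (1/(2-q)) = 2 ^ (2/(2-q)) * GG ^ (1/(2-q)) := by
      rw [Real.mul_rpow (by norm_num) hGG]
      congr 1
      rw [show (4:ℝ) = 2 ^ (2:ℝ) by norm_num [Real.rpow_two], ← Real.rpow_mul (by norm_num)]
      ring_nf
    nlinarith [mul_le_mul_of_nonneg_right hK2 hA]

theorem stmt10 (c q R a : ℝ) (hc : 1 ≤ c) (hq0 : 0 < q) (hq2 : q < 2) (hR : 0 < R)
    (f g φ : ℝ → ℝ)
    (hf : Continuous f) (hfpos : ∀ t, 0 < f t) (hfmono : Monotone f)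
    (hg : Continuous g) (hgmono : Monotone g)
    (hφc : ContinuousOn φ (Set.Ico 0 R))
    (hφ2 : ContDiffOn ℝ 2 φ (Set.Ioo 0 R))
    (hφa : φ 0 = a)
    (hd0 : Filter.Tendsto (deriv φ) (nhdsWithin 0 (Set.Ioi 0)) (nhds 0))
    (hd2 : ∃ L, Filter.Tendsto (deriv (deriv φ)) (nhdsWithin 0 (Set.Ioi 0)) (nhds L))
    (hode : ∀ r ∈ Set.Ioo 0 R,
      deriv (deriv φ) r + (c - 1) / r * deriv φ r = f (φ r) + g (φ r) * |deriv φ r| ^ q) :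
    ∀ r ∈ Set.Ico 0 R,
      (2 : ℝ) ^ (-(2 / (2 - q))) *
          ∫ t in a..φ r,
            1 / ((∫ s in a..t, f s) ^ ((1 : ℝ) / 2) +
              (∫ s in a..t, max (g s) 0) ^ (1 / (2 - q)))
        ≤ r := by
  have h2q : (0:ℝ) < 2 - q := by linarith
  set v : ℝ → ℝ := deriv φ with hv
  set gp : ℝ → ℝ := fun s => max (g s) 0 with hgpdef
  set F : ℝ → ℝ := fun x => ∫ s in a..x, f s with hFdef
  set G : ℝ → ℝ := fun x => ∫ s in a..x, gp s with hGdef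
  set K : ℝ := 2 ^ (2/(2-q)) with hKdef
  set ψ : ℝ → ℝ := fun t => F t ^ ((1:ℝ)/2) + G t ^ (1/(2-q)) with hψdef
  have hKpos : 0 < K := Real.rpow_pos_of_pos (by norm_num) _
  have hgpc : Continuous gp := hg.max continuous_const
  have hgpnn : ∀ x, 0 ≤ gp x := fun x => le_max_right _ _
  -- basic differentiability facts
  have hvcont : ContinuousOn v (Set.Ioo 0 R) :=
    hφ2.continuousOn_deriv_of_isOpen isOpen_Ioo (by norm_num)
  have hφdiff : ∀ s ∈ Set.Ioo 0 R, HasDerivAt φ (v s) s := by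
    intro s hs
    exact ((hφ2.differentiableOn (by norm_num)).differentiableAt
      (isOpen_Ioo.mem_nhds hs)).hasDerivAt
  have hvdiff : ∀ s ∈ Set.Ioo 0 R, HasDerivAt v (deriv v s) s := by
    intro s hs
    exact (((hφ2.deriv_of_isOpen (m := 1) isOpen_Ioo (by norm_num)).differentiableOn
      (by norm_num)).differentiableAt (isOpen_Ioo.mem_nhds hs)).hasDerivAt
  have hFd : ∀ x, HasDerivAt F (f x) x := by
    intro x
    exact intervalIntegral.integral_hasDerivAt_right (hf.intervalIntegrable a x)
      ⟨Set.univ, univ_mem, (hf.aestronglyMeasurable).restrict⟩ hf.continuousAt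
  have hGd : ∀ x, HasDerivAt G (gp x) x := by
    intro x
    exact intervalIntegral.integral_hasDerivAt_right (hgpc.intervalIntegrable a x)
      ⟨Set.univ, univ_mem, (hgpc.aestronglyMeasurable).restrict⟩ hgpc.continuousAt
  have hFmono : Monotone F :=
    monotone_of_deriv_nonneg (fun x => (hFd x).differentiableAt)
      (fun x => by rw [(hFd x).deriv]; exact (hfpos x).le)
  have hGmono : Monotone G :=
    monotone_of_deriv_nonneg (fun x => (hGd x).differentiableAt)
      (fun x => by rw [(hGd x).deriv]; exact hgpnn x)
  have hFa : F a = 0 := intervalIntegral.integral_same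
  have hGa : G a = 0 := intervalIntegral.integral_same
  have hFlb : ∀ t, a ≤ t → f a * (t - a) ≤ F t := by
    intro t ht
    have h1 : ∫ s in a..t, f a ≤ ∫ s in a..t, f s :=
      intervalIntegral.integral_mono_on ht intervalIntegrable_const
        (hf.intervalIntegrable a t) (fun x hx => hfmono hx.1)
    rw [intervalIntegral.integral_const, smul_eq_mul, mul_comm] at h1
    exact h1
  -- tendsto of φ at 0+
  have hIoomem : Set.Ioo (0:ℝ) R ∈ nhdsWithin 0 (Set.Ioi 0) :=
    Ioo_mem_nhdsGT_of_mem ⟨le_refl 0, hR⟩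
  have hφ0 : Filter.Tendsto φ (nhdsWithin 0 (Set.Ioi 0)) (nhds a) := by
    have h1 : Filter.Tendsto φ (nhdsWithin 0 (Set.Ico 0 R)) (nhds a) := by
      have h2 := hφc 0 ⟨le_refl 0, hR⟩
      rwa [ContinuousWithinAt, hφa] at h2
    exact h1.mono_left (nhdsWithin_le_iff.mpr
      (Filter.mem_of_superset hIoomem (fun x hx => ⟨hx.1.le, hx.2⟩)))
  -- the limit of v s / s
  obtain ⟨L, hL⟩ := hd2
  have hslope : Filter.Tendsto (fun s => v s / s) (nhdsWithin 0 (Set.Ioi 0)) (nhds L) := by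
    rw [Metric.tendsto_nhdsWithin_nhds]
    intro ε hε
    rw [Metric.tendsto_nhdsWithin_nhds] at hL
    obtain ⟨δ₁, hδ₁pos, hδ₁⟩ := hL (ε/2) (by linarith)
    refine ⟨min δ₁ R, by positivity, ?_⟩
    intro x hx hdx
    have hx0 : (0:ℝ) < x := hx
    rw [Real.dist_eq, sub_zero, abs_of_pos hx0] at hdx
    have hxR : x < R := lt_of_lt_of_le hdx (min_le_right _ _)
    have hxδ : x < δ₁ := lt_of_lt_of_le hdx (min_le_left _ _)
    have hdb : ∀ τ ∈ Set.Ioo (0:ℝ) x, |deriv v τ - L| ≤ ε/2 := by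
      intro τ hτ
      have h2 := hδ₁ (hτ.1 : τ ∈ Set.Ioi 0)
        (by rw [Real.dist_eq, sub_zero, abs_of_pos hτ.1]; linarith [hτ.2])
      rw [Real.dist_eq] at h2
      exact h2.le
    have hub : ∀ e ∈ Set.Ioo (0:ℝ) x,
        v x ≤ v e + (L + ε/2) * (x - e) ∧ v e + (L - ε/2) * (x - e) ≤ v x := by
      intro e he
      obtain ⟨τ, hτ, hτeq⟩ := exists_hasDerivAt_eq_slope v (deriv v) he.2
        (hvcont.mono (fun z hz => ⟨lt_of_lt_of_le he.1 hz.1, lt_of_le_of_lt hz.2 hxR⟩))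
        (fun y hy => hvdiff y ⟨lt_trans he.1 hy.1, lt_trans hy.2 hxR⟩)
      have h1 : |(v x - v e)/(x - e) - L| ≤ ε/2 := by
        rw [← hτeq]
        exact hdb τ ⟨lt_trans he.1 hτ.1, hτ.2⟩
      rw [abs_le] at h1
      have hxe : (0:ℝ) < x - e := by linarith [he.2]
      constructor
      · have h2 : (v x - v e)/(x-e) ≤ L + ε/2 := by linarith [h1.2]
        have h3 := mul_le_mul_of_nonneg_right h2 hxe.le
        rw [div_mul_cancel₀ _ hxe.ne'] at h3
        linarith
      · have h2 : L - ε/2 ≤ (v x - v e)/(x-e) := by linarith [h1.1]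
        have h3 := mul_le_mul_of_nonneg_right h2 hxe.le
        rw [div_mul_cancel₀ _ hxe.ne'] at h3
        linarith
    have hIooxmem : Set.Ioo (0:ℝ) x ∈ nhdsWithin 0 (Set.Ioi 0) :=
      Ioo_mem_nhdsGT_of_mem ⟨le_refl 0, hx0⟩
    have htend : ∀ b : ℝ, Filter.Tendsto (fun e => v e + b * (x - e))
        (nhdsWithin 0 (Set.Ioi 0)) (nhds (b * x)) := by
      intro b
      have h1 : Filter.Tendsto (fun e : ℝ => e) (nhdsWithin 0 (Set.Ioi 0)) (nhds 0) :=
        Filter.tendsto_id.mono_left nhdsWithin_le_nhds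
      have h3 : Filter.Tendsto (fun e : ℝ => b * (x - e))
          (nhdsWithin 0 (Set.Ioi 0)) (nhds (b * (x - 0))) :=
        ((tendsto_const_nhds : Filter.Tendsto (fun _ : ℝ => x)
          (nhdsWithin 0 (Set.Ioi 0)) (nhds x)).sub h1).const_mul b
      have h2 := hd0.add h3
      simpa using h2
    have h2 : v x ≤ (L + ε/2) * x := by
      refine ge_of_tendsto (htend (L + ε/2)) ?_
      filter_upwards [hIooxmem] with e he using (hub e he).1
    have h3 : (L - ε/2) * x ≤ v x := by
      refine le_of_tendsto (htend (L - ε/2)) ?_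
      filter_upwards [hIooxmem] with e he using (hub e he).2
    have h4 : v x / x ≤ L + ε/2 := by rw [div_le_iff₀ hx0]; linarith
    have h5 : L - ε/2 ≤ v x / x := by rw [le_div_iff₀ hx0]; linarith
    rw [Real.dist_eq, abs_lt]
    constructor <;> linarith
  have hLval : c * L = f a := by
    have h1 : Filter.Tendsto (fun s => deriv v s + (c-1)/s * v s)
        (nhdsWithin 0 (Set.Ioi 0)) (nhds (L + (c-1)*L)) := by
      refine hL.add ?_
      have h2 := hslope.const_mul (c-1)
      exact h2.congr (fun s => by ring)
    have h2 : Filter.Tendsto (fun s => f (φ s) + g (φ s) * |v s| ^ q)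
        (nhdsWithin 0 (Set.Ioi 0)) (nhds (f a + g a * |(0:ℝ)| ^ q)) := by
      have hfφ := (hf.continuousAt.tendsto).comp hφ0
      have hgφ := (hg.continuousAt.tendsto).comp hφ0
      have habs : Filter.Tendsto (fun s => |v s| ^ q)
          (nhdsWithin 0 (Set.Ioi 0)) (nhds (|(0:ℝ)| ^ q)) :=
        ((Real.continuousAt_rpow_const _ q (Or.inr hq0.le)).tendsto).comp
          ((continuous_abs.continuousAt.tendsto).comp hd0)
      exact hfφ.add (hgφ.mul habs)
    have h3 : L + (c-1)*L = f a + g a * |(0:ℝ)| ^ q := by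
      refine tendsto_nhds_unique (h1.congr' ?_) h2
      filter_upwards [hIoomem] with s hs using hode s hs
    rw [abs_zero, Real.zero_rpow hq0.ne'] at h3
    nlinarith [h3]
  have hLpos : 0 < L := by
    have hc0 : (0:ℝ) < c := lt_of_lt_of_le one_pos hc
    by_contra hl
    push_neg at hl
    nlinarith [hfpos a, mul_nonpos_of_nonneg_of_nonpos hc0.le hl]
  -- positivity of v
  have hvpos : ∀ s ∈ Set.Ioo 0 R, 0 < v s := by
    have hev : ∀ᶠ s in nhdsWithin 0 (Set.Ioi 0), 0 < v s := by
      have h1 : ∀ᶠ s in nhdsWithin 0 (Set.Ioi 0), L/2 < v s / s :=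
        hslope.eventually (eventually_gt_nhds (by linarith))
      filter_upwards [h1, self_mem_nhdsWithin] with s hs1 hs2
      have hs0 : (0:ℝ) < s := hs2
      have h0 : 0 < v s / s := lt_trans (half_pos hLpos) hs1
      have h2 := mul_pos h0 hs0
      rwa [div_mul_cancel₀ _ hs0.ne'] at h2
    obtain ⟨δ, hδmem, hδsub⟩ := mem_nhdsGT_iff_exists_Ioc_subset.mp hev
    have hδpos : (0:ℝ) < δ := hδmem
    intro r0 hr0
    by_contra hneg
    push_neg at hneg
    set e := min δ (r0/2) with hedef
    have hepos : 0 < e := lt_min hδpos (by linarith [hr0.1])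
    have helt : e < r0 := lt_of_le_of_lt (min_le_right _ _) (by linarith [hr0.1])
    have hve : 0 < v e := hδsub ⟨hepos, min_le_left _ _⟩
    have hZsub : Set.Icc e r0 ⊆ Set.Ioo 0 R :=
      fun x hx => ⟨lt_of_lt_of_le hepos hx.1, lt_of_le_of_lt hx.2 hr0.2⟩
    have hZclosed : IsClosed (Set.Icc e r0 ∩ v ⁻¹' Set.Iic 0) :=
      (hvcont.mono hZsub).preimage_isClosed_of_isClosed isClosed_Icc isClosed_Iic
    have hZne : r0 ∈ Set.Icc e r0 ∩ v ⁻¹' Set.Iic 0 := ⟨⟨helt.le, le_refl r0⟩, hneg⟩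
    have hbdd : BddBelow (Set.Icc e r0 ∩ v ⁻¹' Set.Iic 0) := ⟨e, fun x hx => hx.1.1⟩
    set r1 := sInf (Set.Icc e r0 ∩ v ⁻¹' Set.Iic 0) with hr1def
    have hr1mem : r1 ∈ Set.Icc e r0 ∩ v ⁻¹' Set.Iic 0 := hZclosed.csInf_mem ⟨r0, hZne⟩ hbdd
    have hr1gt : e < r1 := by
      rcases lt_or_eq_of_le hr1mem.1.1 with h | h
      · exact h
      · exact absurd (hr1mem.2 : v r1 ≤ 0) (not_le.mpr (h ▸ hve))
    have hr1R : r1 ∈ Set.Ioo 0 R := hZsub hr1mem.1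
    have hbelow : ∀ s ∈ Set.Ico e r1, 0 < v s := by
      intro s hs
      by_contra hvs
      push_neg at hvs
      have hsz : s ∈ Set.Icc e r0 ∩ v ⁻¹' Set.Iic 0 :=
        ⟨⟨hs.1, le_trans hs.2.le hr1mem.1.2⟩, hvs⟩
      exact absurd (csInf_le hbdd hsz) (not_le.mpr hs.2)
    have hvr1 : v r1 = 0 := by
      refine le_antisymm hr1mem.2 ?_
      have hca : ContinuousAt v r1 := hvcont.continuousAt (isOpen_Ioo.mem_nhds hr1R)
      have ht : Filter.Tendsto v (nhdsWithin r1 (Set.Iio r1)) (nhds (v r1)) :=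
        hca.tendsto.mono_left nhdsWithin_le_nhds
      refine ge_of_tendsto ht ?_
      filter_upwards [Ioo_mem_nhdsLT_of_mem ⟨hr1gt, le_refl r1⟩] with s hs
      exact (hbelow s ⟨hs.1.le, hs.2⟩).le
    have hdv : deriv v r1 = f (φ r1) := by
      have h4 := hode r1 hr1R
      rw [hvr1] at h4
      simpa [Real.zero_rpow hq0.ne'] using h4
    have hd := hvdiff r1 hr1R
    rw [hasDerivAt_iff_tendsto_slope] at hd
    have hd' : Filter.Tendsto (slope v r1) (nhdsWithin r1 (Set.Iio r1)) (nhds (deriv v r1)) :=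
      hd.mono_left (nhdsWithin_mono _ (fun x hx => ne_of_lt hx))
    have hev3 : ∀ᶠ s in nhdsWithin r1 (Set.Iio r1), 0 < slope v r1 s :=
      hd'.eventually (eventually_gt_nhds (by rw [hdv]; exact hfpos _))
    obtain ⟨s, hs1, hs2⟩ := (hev3.and
      (Ioo_mem_nhdsLT_of_mem ⟨hr1gt, le_refl r1⟩)).exists
    have hneg2 : v s < 0 := by
      have hslt : s - r1 < 0 := sub_neg.mpr hs2.2
      rw [slope_def_field] at hs1
      rw [div_pos_iff] at hs1
      rcases hs1 with ⟨h5, h6⟩ | ⟨h5, h6⟩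
      · linarith
      · rw [hvr1] at h5; linarith
    exact absurd (hbelow s ⟨hs2.1.le, hs2.2⟩) (not_lt.mpr hneg2.le)
  -- monotonicity of φ
  have hφmono : ∀ x ∈ Set.Ico 0 R, ∀ y ∈ Set.Ico 0 R, x ≤ y → φ x ≤ φ y := by
    intro x hx y hy hxy
    have hmono : MonotoneOn φ (Set.Icc 0 y) := by
      refine monotoneOn_of_deriv_nonneg (convex_Icc 0 y)
        (hφc.mono (fun z hz => ⟨hz.1, lt_of_le_of_lt hz.2 hy.2⟩)) ?_ ?_
      · intro z hz
        rw [interior_Icc] at hz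
        exact (hφdiff z ⟨hz.1, lt_trans hz.2 hy.2⟩).differentiableAt.differentiableWithinAt
      · intro z hz
        rw [interior_Icc] at hz
        exact (hvpos z ⟨hz.1, lt_trans hz.2 hy.2⟩).le
    exact hmono ⟨hx.1, hxy⟩ ⟨hy.1, le_refl y⟩ hxy
  have hφge : ∀ s ∈ Set.Ico 0 R, a ≤ φ s := by
    intro s hs
    rw [← hφa]
    exact hφmono 0 ⟨le_refl 0, hR⟩ s hs hs.1
  -- key derivative bound
  have hkey : ∀ s ∈ Set.Ioo 0 R, v s ≤ K * ψ (φ s) := by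
    intro r2 hr2
    have hφcIoo : ContinuousOn φ (Set.Ioo 0 R) := hφc.mono (fun z hz => ⟨hz.1.le, hz.2⟩)
    have hr2Ico : r2 ∈ Set.Ico 0 R := ⟨hr2.1.le, hr2.2⟩
    have hFr2nn : 0 ≤ F (φ r2) := hFa ▸ hFmono (hφge r2 hr2Ico)
    have hGr2nn : 0 ≤ G (φ r2) := hGa ▸ hGmono (hφge r2 hr2Ico)
    have main_ε : ∀ ε ∈ Set.Ioo 0 r2,
        v r2 ≤ Real.sqrt 2 * Real.sqrt ((v ε)^2) + K * (F (φ r2) ^ ((1:ℝ)/2) + G (φ r2) ^ (1/(2-q))) := by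
      intro ε hε
      have hIsub : Set.Icc ε r2 ⊆ Set.Ioo 0 R :=
        fun z hz => ⟨lt_of_lt_of_le hε.1 hz.1, lt_of_le_of_lt hz.2 hr2.2⟩
      set P : ℝ → ℝ := fun u => gp (φ u) * v u ^ (q+1) with hPdef
      have hPc : ContinuousOn P (Set.Ioo 0 R) := by
        refine ContinuousOn.mul (hgpc.comp_continuousOn hφcIoo) ?_
        intro u hu
        exact (Real.continuousAt_rpow_const (v u) (q+1)
          (Or.inr (by linarith))).comp_continuousWithinAt (hvcont u hu)
      have hQc : ContinuousOn (fun u => gp (φ u) * v u) (Set.Ioo 0 R) :=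
        (hgpc.comp_continuousOn hφcIoo).mul hvcont
      set D : ℝ → ℝ := fun s => v s ^ 2 - 2 * F (φ s) - 2 * ∫ u in ε..s, P u with hDdef
      have hDderiv : ∀ s ∈ Set.Ioo 0 R,
          HasDerivAt D (2 * v s * deriv v s - 2 * (f (φ s) * v s) - 2 * P s) s := by
        intro s hs
        have hεO : ε ∈ Set.Ioo 0 R := ⟨hε.1, lt_trans hε.2 hr2.2⟩
        have h1 : HasDerivAt (fun u => v u ^ 2) (2 * v s * deriv v s) s := by
          have h1' := (hvdiff s hs).pow 2
          norm_num at h1'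
          exact h1'
        have h2 : HasDerivAt (fun u => F (φ u)) (f (φ s) * v s) s :=
          (hFd (φ s)).comp s (hφdiff s hs)
        have h3 : HasDerivAt (fun s' => ∫ u in ε..s', P u) (P s) s := by
          refine intervalIntegral.integral_hasDerivAt_right ?_ ?_ ?_
          · exact (hPc.mono (Set.ordConnected_Ioo.uIcc_subset hεO hs)).intervalIntegrable
          · exact (hPc.stronglyMeasurableAtFilter isOpen_Ioo) s hs
          · exact hPc.continuousAt (isOpen_Ioo.mem_nhds hs)
        exact (h1.sub (h2.const_mul 2)).sub (h3.const_mul 2)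
      have hDanti : AntitoneOn D (Set.Icc ε r2) := by
        refine antitoneOn_of_deriv_nonpos (convex_Icc ε r2) ?_ ?_ ?_
        · intro s hs
          exact (hDderiv s (hIsub hs)).continuousAt.continuousWithinAt
        · intro s hs
          rw [interior_Icc] at hs
          exact (hDderiv s (hIsub ⟨hs.1.le, hs.2.le⟩)).differentiableAt.differentiableWithinAt
        · intro s hs
          rw [interior_Icc] at hs
          have hsO : s ∈ Set.Ioo 0 R := hIsub ⟨hs.1.le, hs.2.le⟩
          rw [(hDderiv s hsO).deriv]
          have hodes := hode s hsO
          have hvs := hvpos s hsO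
          rw [abs_of_pos hvs] at hodes
          have hdvs : deriv v s = f (φ s) + g (φ s) * v s ^ q - (c-1)/s * v s := by
            linarith
          rw [hdvs]
          have hpow : v s * v s ^ q = v s ^ (q+1) := by
            rw [Real.rpow_add hvs, Real.rpow_one]; ring
          have hkey2 : 2 * v s * (f (φ s) + g (φ s) * v s ^ q - (c-1)/s * v s)
              - 2 * (f (φ s) * v s) - 2 * P s
              = 2 * (g (φ s) * (v s * v s ^ q) - gp (φ s) * v s ^ (q+1))
                - 2 * ((c-1)/s * (v s * v s)) := by
            rw [hPdef]; ring
          rw [hkey2, hpow]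
          have hq1 : 0 ≤ v s ^ (q+1) := Real.rpow_nonneg hvs.le _
          have h6 : g (φ s) * v s ^ (q+1) ≤ gp (φ s) * v s ^ (q+1) :=
            mul_le_mul_of_nonneg_right (le_max_left _ _) hq1
          have h7 : 0 ≤ (c-1)/s * (v s * v s) :=
            mul_nonneg (div_nonneg (by linarith) hsO.1.le) (mul_nonneg hvs.le hvs.le)
          linarith
      obtain ⟨s₀, hs₀mem, hs₀max⟩ := isCompact_Icc.exists_isMaxOn
        ⟨ε, le_refl ε, hε.2.le⟩ (hvcont.mono hIsub)
      have hMle : ∀ x ∈ Set.Icc ε r2, v x ≤ v s₀ := hs₀max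
      have hMpos : 0 < v s₀ := hvpos s₀ (hIsub hs₀mem)
      have hεs₀ : ε ≤ s₀ := hs₀mem.1
      have hs₀O : s₀ ∈ Set.Ioo 0 R := hIsub hs₀mem
      have hDineq : D s₀ ≤ D ε := hDanti ⟨le_refl ε, hε.2.le⟩ hs₀mem hεs₀
      have hDε : D ε = v ε ^ 2 - 2 * F (φ ε) := by
        rw [hDdef]
        simp [intervalIntegral.integral_same]
      have hDs : v s₀ ^ 2 ≤ v ε ^ 2 - 2 * F (φ ε) + 2 * F (φ s₀) + 2 * ∫ u in ε..s₀, P u := by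
        have h1 : D s₀ = v s₀ ^ 2 - 2 * F (φ s₀) - 2 * ∫ u in ε..s₀, P u := rfl
        rw [h1, hDε] at hDineq
        linarith
      have hPle : ∀ u ∈ Set.Icc ε s₀, P u ≤ v s₀ ^ q * (gp (φ u) * v u) := by
        intro u hu
        have huO : u ∈ Set.Ioo 0 R := hIsub ⟨hu.1, le_trans hu.2 hs₀mem.2⟩
        have hvu := hvpos u huO
        have h1 : v u ^ (q+1) = v u ^ q * v u := by
          rw [Real.rpow_add hvu, Real.rpow_one]
        have h2 : v u ^ q ≤ v s₀ ^ q :=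
          Real.rpow_le_rpow hvu.le (hMle u ⟨hu.1, le_trans hu.2 hs₀mem.2⟩) hq0.le
        have h3 : P u = gp (φ u) * (v u ^ q * v u) := by rw [hPdef, ← h1]
        rw [h3]
        calc gp (φ u) * (v u ^ q * v u) ≤ gp (φ u) * (v s₀ ^ q * v u) :=
              mul_le_mul_of_nonneg_left (mul_le_mul_of_nonneg_right h2 hvu.le) (hgpnn _)
        _ = v s₀ ^ q * (gp (φ u) * v u) := by ring
      have hεO : ε ∈ Set.Ioo 0 R := ⟨hε.1, lt_trans hε.2 hr2.2⟩
      have hPint : IntervalIntegrable P volume ε s₀ :=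
        (hPc.mono (Set.ordConnected_Ioo.uIcc_subset hεO hs₀O)).intervalIntegrable
      have hQint : IntervalIntegrable (fun u => gp (φ u) * v u) volume ε s₀ :=
        (hQc.mono (Set.ordConnected_Ioo.uIcc_subset hεO hs₀O)).intervalIntegrable
      have hIb : ∫ u in ε..s₀, P u ≤ v s₀ ^ q * (G (φ s₀) - G (φ ε)) := by
        have h1 : ∫ u in ε..s₀, P u ≤ ∫ u in ε..s₀, v s₀ ^ q * (gp (φ u) * v u) :=
          intervalIntegral.integral_mono_on hεs₀ hPint (hQint.const_mul _) hPle
        have h2 : ∫ u in ε..s₀, v s₀ ^ q * (gp (φ u) * v u)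
            = v s₀ ^ q * ∫ u in ε..s₀, gp (φ u) * v u :=
          intervalIntegral.integral_const_mul _ _
        have h3 : ∫ u in ε..s₀, gp (φ u) * v u = G (φ s₀) - G (φ ε) := by
          refine intervalIntegral.integral_eq_sub_of_hasDerivAt (f := fun u => G (φ u)) ?_ hQint
          intro u hu
          rw [Set.uIcc_of_le hεs₀] at hu
          exact (hGd (φ u)).comp u (hφdiff u (hIsub ⟨hu.1, le_trans hu.2 hs₀mem.2⟩))
        rw [h2, h3] at h1
        exact h1
      have hs₀Ico : s₀ ∈ Set.Ico 0 R := ⟨hs₀O.1.le, hs₀O.2⟩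
      have hεIco : ε ∈ Set.Ico 0 R := ⟨hε.1.le, hεO.2⟩
      have hFb : F (φ s₀) ≤ F (φ r2) := hFmono (hφmono s₀ hs₀Ico r2 hr2Ico hs₀mem.2)
      have hGb : G (φ s₀) ≤ G (φ r2) := hGmono (hφmono s₀ hs₀Ico r2 hr2Ico hs₀mem.2)
      have hFεnn : 0 ≤ F (φ ε) := hFa ▸ hFmono (hφge ε hεIco)
      have hGεnn : 0 ≤ G (φ ε) := hGa ▸ hGmono (hφge ε hεIco)
      have hMqnn : 0 ≤ v s₀ ^ q := Real.rpow_nonneg hMpos.le q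
      have hM2 : v s₀ ^ 2 ≤ v ε ^ 2 + 2 * F (φ r2) + 2 * v s₀ ^ q * G (φ r2) := by
        have h4 : v s₀ ^ q * (G (φ s₀) - G (φ ε)) ≤ v s₀ ^ q * G (φ r2) :=
          mul_le_mul_of_nonneg_left (by linarith) hMqnn
        linarith
      have halg := aux_alg q (v s₀) (v ε ^ 2) (F (φ r2)) (G (φ r2)) hq0 hq2 hMpos
        (sq_nonneg _) hFr2nn hGr2nn hM2
      exact le_trans (hMle r2 ⟨hε.2.le, le_refl r2⟩) halg
    have htendK : Filter.Tendsto
        (fun ε => Real.sqrt 2 * Real.sqrt ((v ε)^2)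
          + K * (F (φ r2) ^ ((1:ℝ)/2) + G (φ r2) ^ (1/(2-q))))
        (nhdsWithin 0 (Set.Ioi 0))
        (nhds (Real.sqrt 2 * Real.sqrt ((0:ℝ)^2)
          + K * (F (φ r2) ^ ((1:ℝ)/2) + G (φ r2) ^ (1/(2-q))))) := by
      refine Filter.Tendsto.add ?_ tendsto_const_nhds
      refine Filter.Tendsto.const_mul _ ?_
      exact (Real.continuous_sqrt.continuousAt.tendsto).comp (hd0.pow 2)
    have hfin := ge_of_tendsto htendK (by
      filter_upwards [Ioo_mem_nhdsGT_of_mem ⟨le_refl (0:ℝ), hr2.1⟩] with ε hε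
      exact main_ε ε hε)
    simp only [hψdef]
    simpa using hfin
  -- conclusion
  intro r hr
  rcases eq_or_lt_of_le hr.1 with hr0 | hr0
  · rw [← hr0, hφa]
    simp
  have hrO : r ∈ Set.Ioo 0 R := ⟨hr0, hr.2⟩
  have hφstrict : StrictMonoOn φ (Set.Icc 0 r) := by
    refine strictMonoOn_of_deriv_pos (convex_Icc 0 r)
      (hφc.mono (fun z hz => ⟨hz.1, lt_of_le_of_lt hz.2 hr.2⟩)) ?_
    intro z hz
    rw [interior_Icc] at hz
    exact hvpos z ⟨hz.1, lt_trans hz.2 hr.2⟩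
  set b := φ r with hbdef
  have hb : a < b := by
    have h1 := hφstrict ⟨le_refl 0, hr0.le⟩ ⟨hr0.le, le_refl r⟩ hr0
    rwa [hφa] at h1
  have hFcont : Continuous F := by
    rw [continuous_iff_continuousAt]; exact fun x => (hFd x).continuousAt
  have hGcont : Continuous G := by
    rw [continuous_iff_continuousAt]; exact fun x => (hGd x).continuousAt
  have hψcont : Continuous ψ := by
    rw [continuous_iff_continuousAt]
    intro x
    exact ((Real.continuousAt_rpow_const _ _ (Or.inr (by norm_num))).comp
      hFcont.continuousAt).add
      ((Real.continuousAt_rpow_const _ _ (Or.inr (by positivity))).comp hGcont.continuousAt)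
  have hGnn : ∀ t, a ≤ t → 0 ≤ G t := fun t ht => hGa ▸ hGmono ht
  have hFpos : ∀ t, a < t → 0 < F t := by
    intro t ht
    have h1 : 0 < f a * (t - a) := mul_pos (hfpos a) (by linarith)
    exact lt_of_lt_of_le h1 (hFlb t ht.le)
  have hψpos : ∀ t, a < t → 0 < ψ t := by
    intro t ht
    exact add_pos_of_pos_of_nonneg (Real.rpow_pos_of_pos (hFpos t ht) _)
      (Real.rpow_nonneg (hGnn t ht.le) _)
  have hψa : ψ a = 0 := by
    simp only [hψdef, hFa, hGa]
    rw [Real.zero_rpow (by norm_num), Real.zero_rpow (by positivity)]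
    norm_num
  set dom : ℝ → ℝ := fun t => (f a) ^ (-((1:ℝ)/2)) * (t - a) ^ (-((1:ℝ)/2)) with hdomdef
  have hdomint : ∀ x, IntervalIntegrable dom volume a x := by
    intro x
    have h1 : IntervalIntegrable (fun t : ℝ => t ^ (-((1:ℝ)/2))) volume 0 (x - a) :=
      intervalIntegral.intervalIntegrable_rpow' (by norm_num)
    have h2 := (h1.comp_sub_right a)
    simp only [sub_add_cancel, zero_add] at h2
    exact h2.const_mul _
  have hbound : ∀ x, a < x → x ≤ b → ∀ t ∈ Set.Icc a x, 1/ψ t ≤ dom t := by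
    intro x hx hxb t ht
    rcases eq_or_lt_of_le ht.1 with h | h
    · have hda : dom a = 0 := by
        show f a ^ (-((1:ℝ)/2)) * (a - a) ^ (-((1:ℝ)/2)) = 0
        rw [sub_self, Real.zero_rpow (by norm_num : -((1:ℝ)/2) ≠ 0), mul_zero]
      rw [← h, hψa, hda]
      simp
    · have h2 : (0:ℝ) < (f a * (t-a)) ^ ((1:ℝ)/2) :=
        Real.rpow_pos_of_pos (mul_pos (hfpos a) (by linarith)) _
      have h1 : (f a * (t - a)) ^ ((1:ℝ)/2) ≤ F t ^ ((1:ℝ)/2) :=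
        Real.rpow_le_rpow (mul_pos (hfpos a) (by linarith)).le (hFlb t h.le) (by norm_num)
      have h3 : (f a * (t-a)) ^ ((1:ℝ)/2) ≤ ψ t :=
        le_trans h1 (le_add_of_nonneg_right (Real.rpow_nonneg (hGnn t h.le) _))
      have h4 : 1/ψ t ≤ 1/((f a * (t-a)) ^ ((1:ℝ)/2)) := one_div_le_one_div_of_le h2 h3
      have h5 : 1/((f a * (t-a)) ^ ((1:ℝ)/2)) = dom t := by
        rw [hdomdef]
        rw [Real.mul_rpow (hfpos a).le (by linarith : (0:ℝ) ≤ t - a), one_div, mul_inv,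
          ← Real.rpow_neg (hfpos a).le, ← Real.rpow_neg (by linarith : (0:ℝ) ≤ t - a)]
      rw [h5] at h4
      exact h4
  have hψinvmeas : AEStronglyMeasurable (fun t : ℝ => 1/ψ t) volume :=
    (measurable_const.div hψcont.measurable).aestronglyMeasurable
  have hintψ : ∀ x, a ≤ x → x ≤ b → IntervalIntegrable (fun t => 1/ψ t) volume a x := by
    intro x hax hxb
    rcases eq_or_lt_of_le hax with h | h
    · exact h ▸ IntervalIntegrable.refl
    · refine (hdomint x).mono_fun' (hψinvmeas.restrict) ?_
      rw [Filter.EventuallyLE, ae_restrict_iff' measurableSet_uIoc]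
      refine Filter.Eventually.of_forall ?_
      intro t ht
      rw [Set.uIoc_of_le hax] at ht
      have h6 := hbound x h hxb t ⟨ht.1.le, ht.2⟩
      have h7 : 0 < ψ t := hψpos t ht.1
      rw [Real.norm_eq_abs, abs_of_nonneg (by positivity)]
      exact h6
  have hdomeval : ∀ x, a ≤ x →
      (∫ t in a..x, (t - a) ^ (-((1:ℝ)/2))) = 2 * (x - a) ^ ((1:ℝ)/2) := by
    intro x hax
    rw [intervalIntegral.integral_comp_sub_right (fun t => t ^ (-((1:ℝ)/2))) a]
    rw [integral_rpow (Or.inl (by norm_num))]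
    rw [sub_self]
    rw [Real.zero_rpow (by norm_num)]
    norm_num
    ring
  have hHφε : ∀ x, a < x → x ≤ b →
      (∫ t in a..x, 1/ψ t) ≤ (f a) ^ (-((1:ℝ)/2)) * (2 * (x - a) ^ ((1:ℝ)/2)) := by
    intro x hax hxb
    have h1 : (∫ t in a..x, 1/ψ t) ≤ ∫ t in a..x, dom t :=
      intervalIntegral.integral_mono_on hax.le (hintψ x hax.le hxb) (hdomint x)
        (hbound x hax hxb)
    have h2 : ∫ t in a..x, dom t
        = (f a) ^ (-((1:ℝ)/2)) * ∫ t in a..x, (t-a) ^ (-((1:ℝ)/2)) := by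
      rw [hdomdef]
      exact intervalIntegral.integral_const_mul _ _
    rw [h2, hdomeval x hax.le] at h1
    exact h1
  have hmainH : ∀ ε ∈ Set.Ioo 0 r,
      (∫ t in a..b, 1/ψ t) ≤ (∫ t in a..φ ε, 1/ψ t) + K * (r - ε) := by
    intro ε hε
    have hεO : ε ∈ Set.Ioo 0 R := ⟨hε.1, lt_trans hε.2 hrO.2⟩
    have hφs_facts : ∀ s ∈ Set.Icc ε r, a < φ s ∧ φ s ≤ b := by
      intro s hs
      have hs0 : 0 < s := lt_of_lt_of_le hε.1 hs.1
      constructor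
      · have h1 := hφstrict ⟨le_refl 0, hr0.le⟩ ⟨hs0.le, hs.2⟩ hs0
        rwa [hφa] at h1
      · exact hφmono s ⟨hs0.le, lt_of_le_of_lt hs.2 hrO.2⟩ r ⟨hr0.le, hr.2⟩ hs.2
    have hH : ∀ s ∈ Set.Icc ε r,
        HasDerivAt (fun u => K * u - ∫ t in a..φ u, 1/ψ t) (K - 1/ψ (φ s) * v s) s := by
      intro s hs
      have hsO : s ∈ Set.Ioo 0 R := ⟨lt_of_lt_of_le hε.1 hs.1, lt_of_le_of_lt hs.2 hrO.2⟩
      obtain ⟨hφs1, hφs2⟩ := hφs_facts s hs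
      have hHd : HasDerivAt (fun x => ∫ t in a..x, 1/ψ t) (1/ψ (φ s)) (φ s) := by
        refine intervalIntegral.integral_hasDerivAt_right (hintψ (φ s) hφs1.le hφs2)
          ⟨Set.univ, univ_mem, hψinvmeas.restrict⟩ ?_
        exact continuousAt_const.div hψcont.continuousAt (ne_of_gt (hψpos _ hφs1))
      have hcomp := hHd.comp s (hφdiff s hsO)
      have hlin := (hasDerivAt_id s).const_mul K
      have h := hlin.sub hcomp
      simp only [mul_one] at h
      exact h
    have hmono : MonotoneOn (fun u => K * u - ∫ t in a..φ u, 1/ψ t) (Set.Icc ε r) := by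
      refine monotoneOn_of_deriv_nonneg (convex_Icc ε r) ?_ ?_ ?_
      · intro s hs
        exact (hH s hs).continuousAt.continuousWithinAt
      · intro s hs
        rw [interior_Icc] at hs
        exact (hH s ⟨hs.1.le, hs.2.le⟩).differentiableAt.differentiableWithinAt
      · intro s hs
        rw [interior_Icc] at hs
        rw [(hH s ⟨hs.1.le, hs.2.le⟩).deriv]
        have hsO : s ∈ Set.Ioo 0 R := ⟨lt_trans hε.1 hs.1, lt_trans hs.2 hrO.2⟩
        have hψs : 0 < ψ (φ s) := hψpos _ (hφs_facts s ⟨hs.1.le, hs.2.le⟩).1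
        have hk := hkey s hsO
        rw [sub_nonneg, one_div, ← div_eq_inv_mul, div_le_iff₀ hψs]
        exact hkey s hsO
    have h9 := hmono ⟨le_refl ε, hε.2.le⟩ ⟨hε.2.le, le_refl r⟩ hε.2.le
    simp only at h9
    linarith
  have hφεa : Filter.Tendsto (fun ε => φ ε - a) (nhdsWithin 0 (Set.Ioi 0)) (nhds 0) := by
    have := hφ0.sub (tendsto_const_nhds : Filter.Tendsto (fun _ : ℝ => a) _ (nhds a))
    simpa using this
  have htend2 : Filter.Tendsto
      (fun ε => (f a) ^ (-((1:ℝ)/2)) * (2 * (φ ε - a) ^ ((1:ℝ)/2)) + K * (r - ε))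
      (nhdsWithin 0 (Set.Ioi 0))
      (nhds ((f a) ^ (-((1:ℝ)/2)) * (2 * (0:ℝ) ^ ((1:ℝ)/2)) + K * (r - 0))) := by
    refine Filter.Tendsto.add ?_ ?_
    · refine Filter.Tendsto.const_mul _ (Filter.Tendsto.const_mul _ ?_)
      exact ((Real.continuousAt_rpow_const 0 _ (Or.inr (by norm_num))).tendsto).comp hφεa
    · refine Filter.Tendsto.const_mul _ ?_
      have h1 : Filter.Tendsto (fun e : ℝ => e) (nhdsWithin 0 (Set.Ioi 0)) (nhds 0) :=
        Filter.tendsto_id.mono_left nhdsWithin_le_nhds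
      exact (tendsto_const_nhds : Filter.Tendsto (fun _ : ℝ => r) _ (nhds r)).sub h1
  have hsuff : (∫ t in a..b, 1/ψ t) ≤ K * r := by
    have h1 := ge_of_tendsto htend2 (by
      filter_upwards [Ioo_mem_nhdsGT_of_mem ⟨le_refl (0:ℝ), hr0⟩] with ε hε
      have h2 := hmainH ε hε
      have h3 := hHφε (φ ε) (by
        have h4 := hφstrict ⟨le_refl 0, hr0.le⟩ ⟨hε.1.le, hε.2.le⟩ hε.1
        rwa [hφa] at h4) (hφmono ε ⟨hε.1.le, lt_trans hε.2 hrO.2⟩ r ⟨hr0.le, hr.2⟩ hε.2.le)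
      show ∫ (t : ℝ) in a..b, 1 / ψ t ≤ f a ^ (-((1:ℝ)/2)) * (2 * (φ ε - a) ^ ((1:ℝ)/2)) + K * (r - ε)
      linarith)
    rw [Real.zero_rpow (by norm_num)] at h1
    simpa using h1
  have hKinv : (2:ℝ) ^ (-(2/(2-q))) = K⁻¹ := by
    rw [hKdef, ← Real.rpow_neg (by norm_num : (0:ℝ) ≤ 2)]
  have hfinal : K⁻¹ * (∫ t in a..b, 1/ψ t) ≤ r := by
    calc K⁻¹ * (∫ t in a..b, 1/ψ t) ≤ K⁻¹ * (K * r) :=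
          mul_le_mul_of_nonneg_left hsuff (inv_nonneg.mpr hKpos.le)
    _ = r := by field_simp
  rw [hKinv]
  exact hfinal
end
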